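/- arXiv:1412.5506 — 14 statements merged into one kernel-verified Lean document; each statement's English description precedes it below -/
import Mathlib

section
/- Let N ≥ 1 and n : Fin N → ℕ with nᵢ ≥ 1 for all i, and let A = ⊕_{i=1}^{N} M_{n_i}(ℂ) be the direct sum of complex matrix algebras. For R ∈ ℂ with R ≠ 0 define the linear functional ε : A → ℂ by ε(a) = R·Σ_{i=1}^{N} n_i·Tr(a_i). Then the bilinear form (x,y) ↦ ε(x·y) on A is symmetric and nondegenerate, and for any basis {e_a} of A, with (B^{ab}) the inverse of the matrix (ε(e_a·e_b))_{a,b}, one has R·Σ_{a,b} B^{ab}·e_a·e_b = 1. -/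
/-- For `A = ⊕ᵢ Mₙᵢ(ℂ)` and `ε(a) = R·Σᵢ nᵢ·Tr(aᵢ)` with `R ≠ 0`, the bilinear
form `(x,y) ↦ ε(x·y)` is symmetric and nondegenerate, and for any basis `{eₐ}` with `(B^{ab})`
the inverse of `(ε(eₐ·e_b))`, one has `R·Σ B^{ab}·eₐ·e_b = 1`. -/
theorem statement0 (N : ℕ) (hN : 1 ≤ N) (n : Fin N → ℕ) (hn : ∀ i, 1 ≤ n i)
    (R : ℂ) (hR : R ≠ 0)
    (ε : (∀ i, Matrix (Fin (n i)) (Fin (n i)) ℂ) → ℂ)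
    (hε : ∀ a, ε a = R * ∑ i, (n i : ℂ) * Matrix.trace (a i)) :
    (∀ x y, ε (x * y) = ε (y * x)) ∧
    (∀ x, (∀ y, ε (x * y) = 0) → x = 0) ∧
    (∀ (ι : Type) [Fintype ι] [DecidableEq ι]
      (e : Module.Basis ι ℂ (∀ i, Matrix (Fin (n i)) (Fin (n i)) ℂ))
      (B : Matrix ι ι ℂ),
      Matrix.of (fun a b => ε (e a * e b)) * B = 1 →
      B * Matrix.of (fun a b => ε (e a * e b)) = 1 →
      R • (∑ a, ∑ b, B a b • (e a * e b)) = 1) := by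
  classical
  -- `ε` is linear
  have hadd : ∀ u v, ε (u + v) = ε u + ε v := by
    intro u v
    simp only [hε, Pi.add_apply, Matrix.trace_add, mul_add, Finset.sum_add_distrib]
  have hsmul : ∀ (c : ℂ) u, ε (c • u) = c * ε u := by
    intro c u
    simp only [hε, Pi.smul_apply, Matrix.trace_smul, smul_eq_mul, Finset.mul_sum]
    exact Finset.sum_congr rfl fun i _ => by ring
  let F : (∀ i, Matrix (Fin (n i)) (Fin (n i)) ℂ) →ₗ[ℂ] ℂ :=
    { toFun := ε
      map_add' := hadd
      map_smul' := hsmul }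
  have hF : ∀ u, ε u = F u := fun _ => rfl
  -- symmetry
  have hsymm : ∀ x y, ε (x * y) = ε (y * x) := by
    intro x y
    simp only [hε, Pi.mul_apply]
    congr 1
    exact Finset.sum_congr rfl fun i _ => by rw [Matrix.trace_mul_comm]
  -- nondegeneracy
  have hnd : ∀ x, (∀ y, ε (x * y) = 0) → x = 0 := by
    intro x hx
    have h1 := hx (star x)
    rw [hε] at h1
    have h2 : (∑ i, (n i : ℂ) * Matrix.trace ((x * star x) i)) = 0 := by
      rcases mul_eq_zero.mp h1 with h | h
      · exact absurd h hR
      · exact h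
    have h3 : ∀ i, Matrix.trace ((x * star x) i)
        = ((∑ j, ∑ k, Complex.normSq (x i j k) : ℝ) : ℂ) := by
      intro i
      push_cast
      simp [Pi.mul_apply, Pi.star_apply, Matrix.trace, Matrix.diag, Matrix.mul_apply,
        Matrix.star_apply, Complex.mul_conj]
    have h4 : ((∑ i, (n i : ℝ) * ∑ j, ∑ k, Complex.normSq (x i j k) : ℝ) : ℂ) = 0 := by
      rw [← h2]
      push_cast
      exact Finset.sum_congr rfl fun i _ => by rw [h3 i]; push_cast; ring
    have h5 : (∑ i, (n i : ℝ) * ∑ j, ∑ k, Complex.normSq (x i j k)) = 0 :=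
      mod_cast h4
    funext i
    have hterm : ∀ i ∈ Finset.univ, (0:ℝ) ≤ (n i : ℝ) * ∑ j, ∑ k, Complex.normSq (x i j k) := by
      intro i _
      exact mul_nonneg (by positivity)
        (Finset.sum_nonneg fun _ _ => Finset.sum_nonneg fun _ _ => Complex.normSq_nonneg _)
    have h6 := (Finset.sum_eq_zero_iff_of_nonneg hterm).mp h5 i (Finset.mem_univ i)
    have hni : (n i : ℝ) ≠ 0 :=
      Nat.cast_ne_zero.mpr (Nat.one_le_iff_ne_zero.mp (hn i))
    have h7 : (∑ j, ∑ k, Complex.normSq (x i j k)) = 0 := by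
      rcases mul_eq_zero.mp h6 with h | h
      · exact absurd h hni
      · exact h
    ext j k
    have h8 := (Finset.sum_eq_zero_iff_of_nonneg
      (fun j _ => Finset.sum_nonneg fun k _ => Complex.normSq_nonneg _)).mp h7 j
      (Finset.mem_univ j)
    have h9 := (Finset.sum_eq_zero_iff_of_nonneg
      (fun k _ => Complex.normSq_nonneg _)).mp h8 k (Finset.mem_univ k)
    simpa using Complex.normSq_eq_zero.mp h9
  refine ⟨hsymm, hnd, ?_⟩
  intro ι _ _ e B hMB hBM
  set M : Matrix ι ι ℂ := Matrix.of (fun a b => ε (e a * e b)) with hM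
  -- expansion lemma
  have reprA : ∀ u (b : ι), e.repr u b = ∑ a, ε (u * e a) * B a b := by
    intro u b
    have h1 : ∀ a, ε (u * e a) = ∑ c, e.repr u c * M c a := by
      intro a
      conv_lhs => rw [← Module.Basis.sum_repr e u]
      rw [Finset.sum_mul]
      simp_rw [smul_mul_assoc]
      rw [hF, map_sum]
      exact Finset.sum_congr rfl fun c _ => by rw [map_smul, smul_eq_mul]; rfl
    calc e.repr u b = ∑ c, e.repr u c * (1 : Matrix ι ι ℂ) c b := by
          simp [Matrix.one_apply]
      _ = ∑ c, e.repr u c * ∑ a, M c a * B a b := by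
          simp_rw [← Matrix.mul_apply, hMB]
      _ = ∑ c, ∑ a, e.repr u c * (M c a * B a b) := by simp_rw [Finset.mul_sum]
      _ = ∑ a, ∑ c, e.repr u c * (M c a * B a b) := Finset.sum_comm
      _ = ∑ a, ε (u * e a) * B a b := by
          refine Finset.sum_congr rfl fun a _ => ?_
          rw [h1 a, Finset.sum_mul]
          exact Finset.sum_congr rfl fun c _ => by ring
  -- the trace of right multiplication, computed in any basis
  have traceE : ∀ (κ : Type) (_ : Fintype κ) (_ : DecidableEq κ)
      (f : Module.Basis κ ℂ (∀ i, Matrix (Fin (n i)) (Fin (n i)) ℂ))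
      (w : ∀ i, Matrix (Fin (n i)) (Fin (n i)) ℂ),
      ∑ b, f.repr (f b * w) b
        = LinearMap.trace ℂ (∀ i, Matrix (Fin (n i)) (Fin (n i)) ℂ)
            (LinearMap.mulRight ℂ w) := by
    intro κ _ _ f w
    rw [LinearMap.trace_eq_matrix_trace ℂ f]
    simp [Matrix.trace, Matrix.diag, LinearMap.toMatrix_apply, LinearMap.mulRight_apply]
  -- the trace of right multiplication, computed concretely
  have stdRepr : ∀ (m : ℕ) (x : Matrix (Fin m) (Fin m) ℂ) (j k : Fin m),
      (Matrix.stdBasis ℂ (Fin m) (Fin m)).repr x (j, k) = x j k := by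
    intro m x j k
    simp [Matrix.stdBasis]
  have traceVal : ∀ (w : ∀ i, Matrix (Fin (n i)) (Fin (n i)) ℂ),
      LinearMap.trace ℂ (∀ i, Matrix (Fin (n i)) (Fin (n i)) ℂ) (LinearMap.mulRight ℂ w)
      = ∑ i, (n i : ℂ) * Matrix.trace (w i) := by
    intro w
    rw [← traceE (Σ i, Fin (n i) × Fin (n i)) inferInstance inferInstance
      (Pi.basis fun i => Matrix.stdBasis ℂ (Fin (n i)) (Fin (n i))) w]
    rw [← Finset.univ_sigma_univ, Finset.sum_sigma]
    refine Finset.sum_congr rfl fun i _ => ?_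
    rw [Fintype.sum_prod_type]
    have hterm : ∀ (j k : Fin (n i)),
        (Pi.basis fun i => Matrix.stdBasis ℂ (Fin (n i)) (Fin (n i))).repr
          ((Pi.basis fun i => Matrix.stdBasis ℂ (Fin (n i)) (Fin (n i))) ⟨i, (j, k)⟩ * w)
          ⟨i, (j, k)⟩ = w i k k := by
      intro j k
      rw [Pi.basis_repr, stdRepr]
      rw [Pi.basis_apply]
      simp [Pi.mul_apply, Matrix.stdBasis_eq_single]
    simp_rw [hterm]
    rw [Finset.sum_const, Matrix.trace]
    simp [Matrix.diag, mul_comm]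
  set z : (∀ i, Matrix (Fin (n i)) (Fin (n i)) ℂ) := ∑ a, ∑ b, B a b • (e a * e b) with hz
  have key : ∀ (w : ∀ i, Matrix (Fin (n i)) (Fin (n i)) ℂ), ε (w * z) = ∑ i, (n i : ℂ) * Matrix.trace (w i) := by
    intro w
    have h1 : w * z = ∑ a, ∑ b, B a b • (w * (e a * e b)) := by
      rw [hz, Finset.mul_sum]
      exact Finset.sum_congr rfl fun a _ => by
        rw [Finset.mul_sum]
        exact Finset.sum_congr rfl fun b _ => (mul_smul_comm _ _ _)
    rw [h1, hF, map_sum]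
    have h2 : ∀ a, F (∑ b, B a b • (w * (e a * e b)))
        = ∑ b, B a b * ε ((e b * w) * e a) := by
      intro a
      rw [map_sum]
      refine Finset.sum_congr rfl fun b _ => ?_
      rw [map_smul, smul_eq_mul, ← hF, ← mul_assoc, hsymm, ← mul_assoc]
    simp_rw [h2]
    rw [Finset.sum_comm]
    have h3 : ∀ b, (∑ a, B a b * ε ((e b * w) * e a)) = e.repr (e b * w) b := by
      intro b
      rw [reprA (e b * w) b]
      exact Finset.sum_congr rfl fun a _ => mul_comm _ _
    simp_rw [h3]
    rw [traceE ι inferInstance inferInstance e w, traceVal w]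
  have hone : ∀ (w : ∀ i, Matrix (Fin (n i)) (Fin (n i)) ℂ), ε (w * (R⁻¹ • (1 : ∀ i, Matrix (Fin (n i)) (Fin (n i)) ℂ)))
      = ∑ i, (n i : ℂ) * Matrix.trace (w i) := by
    intro w
    rw [mul_smul_comm, mul_one, hsmul, hε, ← mul_assoc, inv_mul_cancel₀ hR, one_mul]
  have hzero : ∀ (w : ∀ i, Matrix (Fin (n i)) (Fin (n i)) ℂ), ε ((z - R⁻¹ • 1) * w) = 0 := by
    intro w
    rw [hsymm, mul_sub, hF, map_sub, ← hF, ← hF, key, hone, sub_self]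
  have hz1 : z = R⁻¹ • 1 := sub_eq_zero.mp (hnd _ hzero)
  rw [hz1, smul_smul, mul_inv_cancel₀ hR, one_smul]
end

section
/- Let N ≥ 1, n : Fin N → ℕ with nᵢ ≥ 1, A = ⊕_{i=1}^{N} M_{n_i}(ℂ), R ∈ ℂ with R ≠ 0, and ε(a) = R·Σ_{i=1}^{N} n_i·Tr(a_i). Fix any basis {e_a} of A, let (B^{ab}) be the inverse of the matrix (ε(e_a·e_b))_{a,b}, and define z := Σ_{a,b,c,d} B^{ac}·B^{bd}·e_a·e_b·e_c·e_d ∈ A. Then for every natural number g, R·ε(z^g) = R^{2−2g}·Σ_{i=1}^{N} n_i^{2−2g}, where powers with negative integer exponents are taken in ℂ (R ≠ 0 and each n_i ≠ 0). -/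
/-- For `A = ⊕ᵢ Mₙᵢ(ℂ)`, `ε(a) = R·Σᵢ nᵢ·Tr(aᵢ)` with `R ≠ 0`, any basis `{eₐ}`
with `(B^{ab})` the inverse of `(ε(eₐ·e_b))`, and
`z = Σ B^{ac}·B^{bd}·eₐ·e_b·e_c·e_d`, one has `R·ε(z^g) = R^{2-2g}·Σᵢ nᵢ^{2-2g}` for all `g`. -/
theorem statement2 (N : ℕ) (hN : 1 ≤ N) (n : Fin N → ℕ) (hn : ∀ i, 1 ≤ n i)
    (R : ℂ) (hR : R ≠ 0)
    (ε : (∀ i, Matrix (Fin (n i)) (Fin (n i)) ℂ) → ℂ)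
    (hε : ∀ a, ε a = R * ∑ i, (n i : ℂ) * Matrix.trace (a i)) :
    ∀ (ι : Type) [Fintype ι] [DecidableEq ι]
      (e : Module.Basis ι ℂ (∀ i, Matrix (Fin (n i)) (Fin (n i)) ℂ))
      (B : Matrix ι ι ℂ),
      Matrix.of (fun a b => ε (e a * e b)) * B = 1 →
      B * Matrix.of (fun a b => ε (e a * e b)) = 1 →
      ∀ g : ℕ,
        R * ε ((∑ a, ∑ b, ∑ c, ∑ d, (B a c * B b d) • (e a * e b * e c * e d)) ^ g)
          = R ^ ((2 : ℤ) - 2 * g) * ∑ i, (n i : ℂ) ^ ((2 : ℤ) - 2 * g) := by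
  intro ι _ _ e B hMB hBM g
  -- linearity facts for ε
  have hadd : ∀ x y, ε (x + y) = ε x + ε y := by
    intro x y
    simp [hε, Matrix.trace_add, mul_add, Finset.sum_add_distrib]
  have hsmul : ∀ (c : ℂ) x, ε (c • x) = c * ε x := by
    intro c x
    simp only [hε, Pi.smul_apply, Matrix.trace_smul, smul_eq_mul, Finset.mul_sum]
    apply Finset.sum_congr rfl; intros; ring
  set εL : (∀ i, Matrix (Fin (n i)) (Fin (n i)) ℂ) →ₗ[ℂ] ℂ :=
    { toFun := ε, map_add' := hadd, map_smul' := by intro c x; simpa using hsmul c x } with hεL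
  have hεL' : ∀ x, ε x = εL x := fun _ => rfl
  -- expansion lemma
  have hexp : ∀ u, ∑ a, ∑ c, (B a c * ε (e c * u)) • e a = u := by
    intro u
    have hrep := e.sum_repr u
    conv_rhs => rw [← hrep]
    have hstep : ∀ c : ι, ε (e c * u) = ∑ b, e.repr u b * ε (e c * e b) := by
      intro c
      conv_lhs => rw [← hrep]
      rw [Finset.mul_sum, hεL', map_sum]
      apply Finset.sum_congr rfl
      intro b _
      rw [mul_smul_comm, ← hεL', hsmul]
    calc ∑ a, ∑ c, (B a c * ε (e c * u)) • e a
        = ∑ a, (∑ b, (∑ c, B a c * ε (e c * e b)) * e.repr u b) • e a := by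
          apply Finset.sum_congr rfl; intro a _
          rw [← Finset.sum_smul]
          congr 1
          calc ∑ c, B a c * ε (e c * u)
              = ∑ c, ∑ b, B a c * ε (e c * e b) * e.repr u b := by
                apply Finset.sum_congr rfl; intro c _
                rw [hstep, Finset.mul_sum]
                apply Finset.sum_congr rfl; intro b _; ring
            _ = ∑ b, ∑ c, B a c * ε (e c * e b) * e.repr u b := Finset.sum_comm
            _ = ∑ b, (∑ c, B a c * ε (e c * e b)) * e.repr u b := by
                apply Finset.sum_congr rfl; intro b _
                rw [Finset.sum_mul]
      _ = ∑ a, (∑ b, (1 : Matrix ι ι ℂ) a b * e.repr u b) • e a := by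
          apply Finset.sum_congr rfl; intro a _
          congr 1
          apply Finset.sum_congr rfl; intro b _
          congr 1
          have := congrFun (congrFun hBM a) b
          simpa [Matrix.mul_apply, Matrix.of_apply] using this
      _ = ∑ b, e.repr u b • e b := by
          apply Finset.sum_congr rfl; intro a _
          rw [Finset.sum_eq_single a]
          · simp [Matrix.one_apply]
          · intro b _ hb; simp [Matrix.one_apply, Ne.symm hb]
          · intro h; simp at h
  -- trace helper
  have htr : ∀ (m : ℕ) (A : Matrix (Fin m) (Fin m) ℂ) (p q : Fin m),
      Matrix.trace (A * Matrix.single p q 1) = A q p := by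
    intro m A p q
    simp [Matrix.trace, Matrix.diag, Matrix.mul_apply, Matrix.single, Matrix.of_apply,
      Finset.sum_ite_eq, Finset.sum_ite_eq', mul_ite, ite_and]
  -- the Casimir identity
  have casimir : ∀ (i : Fin N) (k l p q : Fin (n i)),
      ∑ a, ∑ c, B a c * e a i k l * e c i p q
        = if l = p ∧ k = q then (R * (n i : ℂ))⁻¹ else 0 := by
    intro i k l p q
    have hni : ((n i : ℂ)) ≠ 0 := by
      exact_mod_cast Nat.cast_ne_zero.mpr (Nat.one_le_iff_ne_zero.mp (hn i))
    have hRn : R * (n i : ℂ) ≠ 0 := mul_ne_zero hR hni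
    set u : ∀ j, Matrix (Fin (n j)) (Fin (n j)) ℂ :=
      Pi.single i (Matrix.single q p 1) with hu
    have hεu : ∀ c : ι, ε (e c * u) = R * (n i : ℂ) * e c i p q := by
      intro c
      rw [hε]
      have : ∀ j, (n j : ℂ) * Matrix.trace ((e c * u) j)
          = if j = i then (n i : ℂ) * e c i p q else 0 := by
        intro j
        rcases eq_or_ne j i with rfl | hj
        · simp [hu, Pi.mul_apply, Pi.single_eq_same, htr]
        · simp [hu, Pi.mul_apply, Pi.single_eq_of_ne hj, hj]
      rw [Finset.sum_congr rfl (fun j _ => this j), Finset.sum_ite_eq' Finset.univ i]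
      simp [mul_assoc]
    have h2 := congrFun (congrFun (congrFun (hexp u) i) k) l
    have hL : (∑ a, ∑ c, (B a c * ε (e c * u)) • e a) i k l
        = (R * (n i : ℂ)) * ∑ a, ∑ c, B a c * e a i k l * e c i p q := by
      simp only [Finset.sum_apply, Matrix.sum_apply, Pi.smul_apply, Matrix.smul_apply,
        smul_eq_mul, hεu, Finset.mul_sum]
      apply Finset.sum_congr rfl; intro a _
      apply Finset.sum_congr rfl; intro c _
      ring
    have hR2 : u i k l = if l = p ∧ k = q then (1:ℂ) else 0 := by
      simp only [hu, Pi.single_eq_same, Matrix.single, Matrix.of_apply]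
      split_ifs with h1 h2 <;> first | rfl | (exfalso; tauto)
    rw [hL, hR2] at h2
    rcases em (l = p ∧ k = q) with hc | hc
    · rw [if_pos hc] at h2
      rw [if_pos hc]
      field_simp
      linear_combination h2
    · rw [if_neg hc] at h2
      rw [if_neg hc]
      exact (mul_eq_zero.mp h2).resolve_left hRn
  -- the sandwich map is a trace projection
  have Phi : ∀ x, (∑ a, ∑ c, B a c • (e a * x * e c))
      = fun j => ((R * (n j : ℂ))⁻¹ * (x j).trace) • (1 : Matrix (Fin (n j)) (Fin (n j)) ℂ) := by
    intro x
    funext j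
    ext m t
    simp only [Finset.sum_apply, Matrix.sum_apply, Pi.smul_apply, Matrix.smul_apply,
      smul_eq_mul, Pi.mul_apply, Matrix.mul_apply]
    calc ∑ a, ∑ c, B a c * ∑ s, (∑ k, e a j m k * x j k s) * e c j s t
        = ∑ a, ∑ c, ∑ s, ∑ k, (B a c * e a j m k * e c j s t) * x j k s := by
          apply Finset.sum_congr rfl; intro a _
          apply Finset.sum_congr rfl; intro c _
          rw [Finset.mul_sum]
          apply Finset.sum_congr rfl; intro s _
          rw [Finset.sum_mul, Finset.mul_sum]
          apply Finset.sum_congr rfl; intro k _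
          ring
      _ = ∑ s, ∑ k, ∑ a, ∑ c, (B a c * e a j m k * e c j s t) * x j k s := by
          conv_lhs => enter [2, a]; rw [Finset.sum_comm]
          rw [Finset.sum_comm]
          conv_lhs => enter [2, s, 2, a]; rw [Finset.sum_comm]
          conv_lhs => enter [2, s]; rw [Finset.sum_comm]
      _ = ∑ s, ∑ k, (if k = s ∧ m = t then (R * (n j : ℂ))⁻¹ else 0) * x j k s := by
          apply Finset.sum_congr rfl; intro s _
          apply Finset.sum_congr rfl; intro k _
          rw [← casimir j m k s t, Finset.sum_mul]
          apply Finset.sum_congr rfl; intro a _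
          rw [Finset.sum_mul]
      _ = ((R * (n j : ℂ))⁻¹ * (x j).trace) * (1 : Matrix (Fin (n j)) (Fin (n j)) ℂ) m t := by
          simp only [ite_and, ite_mul, zero_mul, Matrix.one_apply, Matrix.trace, Matrix.diag]
          rw [Finset.sum_comm]
          by_cases hmt : m = t
          · subst hmt
            simp only [if_true, eq_self_iff_true, Finset.mul_sum, mul_ite, mul_zero, mul_one]
            apply Finset.sum_congr rfl; intro k _
            rw [Finset.sum_ite_eq Finset.univ k]
            simp
          · simp [hmt, Finset.sum_ite_eq']
  -- the element z is scalar on each block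
  have hz : (∑ a, ∑ b, ∑ c, ∑ d, (B a c * B b d) • (e a * e b * e c * e d))
      = fun j => ((R * (n j : ℂ))⁻¹ * (R * (n j : ℂ))⁻¹)
          • (1 : Matrix (Fin (n j)) (Fin (n j)) ℂ) := by
    calc (∑ a, ∑ b, ∑ c, ∑ d, (B a c * B b d) • (e a * e b * e c * e d))
        = ∑ b, ∑ d, ∑ a, ∑ c, (B a c * B b d) • (e a * e b * e c * e d) := by
          rw [Finset.sum_comm]
          conv_lhs => enter [2, b, 2, a]; rw [Finset.sum_comm]
          conv_lhs => enter [2, b]; rw [Finset.sum_comm]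
      _ = ∑ b, ∑ d, B b d • ((∑ a, ∑ c, B a c • (e a * e b * e c)) * e d) := by
          apply Finset.sum_congr rfl; intro b _
          apply Finset.sum_congr rfl; intro d _
          rw [Finset.sum_mul, Finset.smul_sum]
          apply Finset.sum_congr rfl; intro a _
          rw [Finset.sum_mul, Finset.smul_sum]
          apply Finset.sum_congr rfl; intro c _
          rw [smul_mul_assoc, smul_smul, mul_comm (B b d) (B a c)]
      _ = ∑ b, ∑ d, B b d • ((fun j => ((R * (n j : ℂ))⁻¹ * ((e b) j).trace)
            • (1 : Matrix (Fin (n j)) (Fin (n j)) ℂ)) * e d) := by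
          apply Finset.sum_congr rfl; intro b _
          apply Finset.sum_congr rfl; intro d _
          rw [Phi (e b)]
      _ = fun j => ((R * (n j : ℂ))⁻¹ * (R * (n j : ℂ))⁻¹)
            • (1 : Matrix (Fin (n j)) (Fin (n j)) ℂ) := by
          funext j
          ext m t
          simp only [Finset.sum_apply, Matrix.sum_apply, Pi.smul_apply, Matrix.smul_apply,
            smul_eq_mul, Pi.mul_apply, Matrix.smul_mul, one_mul, Matrix.trace, Matrix.diag]
          calc ∑ b, ∑ d, B b d * (((R * (n j : ℂ))⁻¹ * ∑ k, e b j k k) • (e d j)) m t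
              = ∑ b, ∑ d, ∑ k, (R * (n j : ℂ))⁻¹ * (B b d * e b j k k * e d j m t) := by
                apply Finset.sum_congr rfl; intro b _
                apply Finset.sum_congr rfl; intro d _
                rw [Matrix.smul_apply, smul_eq_mul, Finset.mul_sum, Finset.sum_mul,
                  Finset.mul_sum]
                apply Finset.sum_congr rfl; intro k _
                ring
            _ = ∑ k, ∑ b, ∑ d, (R * (n j : ℂ))⁻¹ * (B b d * e b j k k * e d j m t) := by
                conv_lhs => enter [2, b]; rw [Finset.sum_comm]
                rw [Finset.sum_comm]
            _ = ∑ k, (R * (n j : ℂ))⁻¹ * (if k = m ∧ k = t then (R * (n j : ℂ))⁻¹ else 0) := by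
                apply Finset.sum_congr rfl; intro k _
                rw [← casimir j k k m t, Finset.mul_sum]
                apply Finset.sum_congr rfl; intro b _
                rw [Finset.mul_sum]
            _ = ((R * (n j : ℂ))⁻¹ * (R * (n j : ℂ))⁻¹)
                  * (1 : Matrix (Fin (n j)) (Fin (n j)) ℂ) m t := by
                simp only [ite_and, mul_ite, mul_zero, Matrix.one_apply]
                rw [Finset.sum_ite_eq' Finset.univ m]
                by_cases hmt : m = t <;> simp [hmt]
  -- final arithmetic
  have hpow : ∀ w : ℂ, w ≠ 0 → w ^ ((2:ℤ) - 2 * (g:ℤ)) = (w * w) * (w⁻¹ * w⁻¹) ^ g := by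
    intro w hw
    rw [zpow_sub₀ hw, zpow_two, show ((2:ℤ) * g) = ((2 * g : ℕ) : ℤ) by push_cast; ring,
      zpow_natCast, div_eq_mul_inv, mul_pow, inv_pow]
    congr 1
    rw [two_mul, pow_add, mul_inv]
  rw [hz, hε]
  have hpw : ∀ j, (((fun j => ((R * (n j : ℂ))⁻¹ * (R * (n j : ℂ))⁻¹)
      • (1 : Matrix (Fin (n j)) (Fin (n j)) ℂ)) : ∀ i, Matrix (Fin (n i)) (Fin (n i)) ℂ) ^ g) j
      = (((R * (n j : ℂ))⁻¹ * (R * (n j : ℂ))⁻¹) ^ g)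
        • (1 : Matrix (Fin (n j)) (Fin (n j)) ℂ) := by
    intro j
    rw [Pi.pow_apply, smul_pow, one_pow]
  simp only [hpw, Matrix.trace_smul, Matrix.trace_one, smul_eq_mul, Fintype.card_fin,
    Finset.mul_sum]
  apply Finset.sum_congr rfl; intro j _
  have hnj : ((n j : ℂ)) ≠ 0 := by
    exact_mod_cast Nat.cast_ne_zero.mpr (Nat.one_le_iff_ne_zero.mp (hn j))
  rw [← mul_zpow, hpow (R * (n j : ℂ)) (mul_ne_zero hR hnj), mul_inv]
  ring
end

section
/- Let n ≥ 1, let A = M_n(ℍ) be the ℝ-algebra of n×n quaternionic matrices, let R ∈ ℝ with R ≠ 0, and define ε : A → ℝ by ε(a) = 4·R·n·Re(Tr(a)). Fix any ℝ-basis {e_a} of A, let (B^{ab}) be the inverse of the matrix (ε(e_a·e_b))_{a,b}, and define z := Σ_{a,b,c,d} B^{ac}·B^{bd}·e_a·e_b·e_c·e_d ∈ A. Then for every natural number g, R·ε(z^g) = 2^{2−2g}·R^{2−2g}·n^{2−2g}, where powers with negative integer exponents are taken in ℝ. -/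
open Module

noncomputable def qB : Basis (Fin 4) ℝ (Quaternion ℝ) := QuaternionAlgebra.basisOneIJK (-1) 0 (-1)

lemma qB_repr (w : Quaternion ℝ) : ⇑(qB.repr w) = ![w.re, w.imI, w.imJ, w.imK] :=
  QuaternionAlgebra.coe_basisOneIJK_repr (-1) 0 (-1) w

lemma qB_eq : ⇑qB = ![(⟨1,0,0,0⟩ : Quaternion ℝ), ⟨0,1,0,0⟩, ⟨0,0,1,0⟩, ⟨0,0,0,1⟩] := by
  funext i
  apply qB.repr.injective
  refine Finsupp.ext fun q => ?_
  rw [Basis.repr_self]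
  rw [show ((Finsupp.single i (1:ℝ)) q) = if q = i then 1 else 0 from Finsupp.single_apply.trans (by simp [eq_comm])]
  have := congrFun (qB_repr (![(⟨1,0,0,0⟩ : Quaternion ℝ), ⟨0,1,0,0⟩, ⟨0,0,1,0⟩, ⟨0,0,0,1⟩] i)) q
  rw [this]
  fin_cases i <;> fin_cases q <;> simp

lemma qB_sum (p r : Quaternion ℝ) :
    ∑ q : Fin 4, (qB.repr (p * qB q * r)) q = 4 * (p.re * r.re) := by
  simp only [qB_repr, qB_eq]
  rw [Fin.sum_univ_four]
  simp only [Matrix.cons_val_zero, Matrix.cons_val_one, Matrix.head_cons, Matrix.cons_val_two,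
    Matrix.tail_cons, Matrix.cons_val_three]
  simp only [Quaternion.re_mul, Quaternion.imI_mul, Quaternion.imJ_mul, Quaternion.imK_mul]
  erw [QuaternionAlgebra.re_mul, QuaternionAlgebra.imI_mul, QuaternionAlgebra.imJ_mul, QuaternionAlgebra.imK_mul, QuaternionAlgebra.re_mul, QuaternionAlgebra.imI_mul, QuaternionAlgebra.imJ_mul, QuaternionAlgebra.imK_mul, QuaternionAlgebra.re_mul, QuaternionAlgebra.imI_mul, QuaternionAlgebra.imJ_mul, QuaternionAlgebra.imK_mul, QuaternionAlgebra.re_mul, QuaternionAlgebra.imI_mul, QuaternionAlgebra.imJ_mul, QuaternionAlgebra.imK_mul]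
  ring

noncomputable def mB (n : ℕ) : Basis (Fin n × Fin n × Fin 4) ℝ (Matrix (Fin n) (Fin n) (Quaternion ℝ)) :=
  qB.matrix (Fin n) (Fin n)

lemma mB_repr {n : ℕ} (w : Matrix (Fin n) (Fin n) (Quaternion ℝ)) (i j : Fin n) (q : Fin 4) :
    (mB n).repr w (i, j, q) = qB.repr (w i j) q := by
  simp only [mB, Basis.matrix, Basis.map_repr, Basis.repr_reindex, LinearEquiv.trans_apply,
    Finsupp.mapDomain_equiv_apply, Equiv.symm_trans_apply, Equiv.prodCongr_symm,
    Equiv.prodCongr_apply, Equiv.sigmaEquivProd_symm_apply, Equiv.refl_symm, Equiv.coe_refl,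
    Prod.map_apply, id_eq]
  rw [Pi.basis_repr, Pi.basis_repr]
  rfl

lemma re_sum {α : Type*} (s : Finset α) (f : α → Quaternion ℝ) :
    (∑ x ∈ s, f x).re = ∑ x ∈ s, (f x).re :=
  map_sum (QuaternionAlgebra.reₗ (-1) 0 (-1) : Quaternion ℝ →ₗ[ℝ] ℝ) f s

lemma entry_eq {n : ℕ} (u v : Matrix (Fin n) (Fin n) (Quaternion ℝ)) (i j : Fin n) (c : Quaternion ℝ) :
    (u * Matrix.single i j c * v) i j = u i i * c * v j j := by
  rw [mul_assoc, Matrix.mul_apply]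
  rw [Finset.sum_eq_single i]
  · rw [Matrix.single_mul_apply_same, mul_assoc]
  · intro k _ hk
    rw [show (Matrix.single i j c * v) k j = 0 from
      Matrix.single_mul_apply_of_ne c i j k j hk v, mul_zero]
  · simp

lemma traceφ {n : ℕ} (u v : Matrix (Fin n) (Fin n) (Quaternion ℝ)) :
    LinearMap.trace ℝ _ ((LinearMap.mulLeft ℝ u).comp (LinearMap.mulRight ℝ v))
      = 4 * ((Matrix.trace u).re * (Matrix.trace v).re) := by
  rw [LinearMap.trace_eq_matrix_trace ℝ (mB n), Matrix.trace]
  have hdiag : ∀ x : Fin n × Fin n × Fin 4,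
      (LinearMap.toMatrix (mB n) (mB n) ((LinearMap.mulLeft ℝ u).comp (LinearMap.mulRight ℝ v))).diag x
        = qB.repr (u x.1 x.1 * qB x.2.2 * v x.2.1 x.2.1) x.2.2 := by
    rintro ⟨i, j, q⟩
    rw [Matrix.diag, LinearMap.toMatrix_apply, LinearMap.comp_apply, LinearMap.mulRight_apply,
      LinearMap.mulLeft_apply, mB_repr]
    rw [show (mB n) (i, j, q) = Matrix.single i j (qB q) from Basis.matrix_apply qB i j q]
    rw [← mul_assoc, entry_eq]
  rw [Finset.sum_congr rfl (fun x _ => hdiag x)]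
  rw [Fintype.sum_prod_type]
  simp_rw [Fintype.sum_prod_type]
  have : ∀ (i j : Fin n), ∑ q : Fin 4, qB.repr (u i i * qB q * v j j) q
      = 4 * ((u i i).re * (v j j).re) := fun i j => qB_sum _ _
  rw [Finset.sum_congr rfl fun i _ => Finset.sum_congr rfl fun j _ => this i j]
  rw [Matrix.trace, Matrix.trace, re_sum, re_sum, Finset.sum_mul_sum]
  rw [Finset.mul_sum]
  refine Finset.sum_congr rfl fun i _ => ?_
  rw [Finset.mul_sum]
  rfl

noncomputable def εL (n : ℕ) (R : ℝ) : Matrix (Fin n) (Fin n) (Quaternion ℝ) →ₗ[ℝ] ℝ :=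
  (4 * R * n) • ((QuaternionAlgebra.reₗ (-1) 0 (-1)).comp
    (Matrix.traceLinearMap (Fin n) ℝ (Quaternion ℝ)))

lemma εL_apply {n : ℕ} (R : ℝ) (a : Matrix (Fin n) (Fin n) (Quaternion ℝ)) :
    εL n R a = 4 * R * n * (Matrix.trace a).re := by
  rw [εL]
  rw [LinearMap.smul_apply, smul_eq_mul]
  rfl

lemma re_trace_comm {n : ℕ} (x y : Matrix (Fin n) (Fin n) (Quaternion ℝ)) :
    (Matrix.trace (x * y)).re = (Matrix.trace (y * x)).re := by
  rw [Matrix.trace, Matrix.trace, re_sum, re_sum]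
  simp_rw [Matrix.diag, Matrix.mul_apply, re_sum]
  rw [Finset.sum_comm]
  refine Finset.sum_congr rfl fun i _ => Finset.sum_congr rfl fun j _ => ?_
  rw [Quaternion.re_mul, Quaternion.re_mul]
  ring

lemma εL_comm {n : ℕ} (R : ℝ) (x y : Matrix (Fin n) (Fin n) (Quaternion ℝ)) :
    εL n R (x * y) = εL n R (y * x) := by
  rw [εL_apply, εL_apply, re_trace_comm]

lemma pair {n : ℕ} {ι : Type} [Fintype ι] [DecidableEq ι] (R : ℝ)
    (e : Basis ι ℝ (Matrix (Fin n) (Fin n) (Quaternion ℝ))) (B : Matrix ι ι ℝ)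
    (hMB : Matrix.of (fun a b => εL n R (e a * e b)) * B = 1)
    (u v : Matrix (Fin n) (Fin n) (Quaternion ℝ)) :
    ∑ a, ∑ c, B a c * εL n R (e a * (u * e c * v))
      = 4 * ((Matrix.trace u).re * (Matrix.trace v).re) := by
  classical
  set φ := (LinearMap.mulLeft ℝ u).comp (LinearMap.mulRight ℝ v) with hφ
  have hφapp : ∀ x, φ x = u * x * v := fun x => by
    simp [φ, mul_assoc]
  have h1 : ∀ a c : ι, εL n R (e a * (u * e c * v))
      = ∑ d, e.repr (φ (e c)) d * εL n R (e a * e d) := by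
    intro a c
    conv_lhs => rw [show u * e c * v = φ (e c) from (hφapp _).symm,
      ← Basis.sum_repr e (φ (e c)), Finset.mul_sum, map_sum]
    refine Finset.sum_congr rfl fun d _ => ?_
    rw [mul_smul_comm, map_smul, smul_eq_mul]
  have hone : ∀ d c : ι, ∑ a, εL n R (e d * e a) * B a c = (if d = c then (1:ℝ) else 0) := by
    intro d c
    have : (Matrix.of (fun a b => εL n R (e a * e b)) * B) d c = (1 : Matrix ι ι ℝ) d c := by
      rw [hMB]
    rw [← Matrix.one_apply, ← this, Matrix.mul_apply]
    rfl
  calc ∑ a, ∑ c, B a c * εL n R (e a * (u * e c * v))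
      = ∑ a, ∑ c, ∑ d, B a c * (e.repr (φ (e c)) d * εL n R (e a * e d)) := by
        refine Finset.sum_congr rfl fun a _ => Finset.sum_congr rfl fun c _ => ?_
        rw [h1, Finset.mul_sum]
    _ = ∑ c, ∑ d, e.repr (φ (e c)) d * ∑ a, εL n R (e d * e a) * B a c := by
        rw [Finset.sum_comm]
        refine Finset.sum_congr rfl fun c _ => ?_
        rw [Finset.sum_comm]
        refine Finset.sum_congr rfl fun d _ => ?_
        rw [Finset.mul_sum]
        refine Finset.sum_congr rfl fun a _ => ?_
        rw [εL_comm]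
        ring
    _ = ∑ c, e.repr (φ (e c)) c := by
        refine Finset.sum_congr rfl fun c _ => ?_
        simp_rw [hone]
        simp
    _ = LinearMap.trace ℝ _ φ := by
        rw [LinearMap.trace_eq_matrix_trace ℝ e, Matrix.trace]
        refine (Finset.sum_congr rfl fun c _ => ?_).symm
        rw [Matrix.diag, LinearMap.toMatrix_apply]
    _ = 4 * ((Matrix.trace u).re * (Matrix.trace v).re) := traceφ u v

lemma nondeg {n : ℕ} {ι : Type} [Fintype ι] [DecidableEq ι] (R : ℝ)
    (e : Basis ι ℝ (Matrix (Fin n) (Fin n) (Quaternion ℝ))) (B : Matrix ι ι ℝ)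
    (hMB : Matrix.of (fun a b => εL n R (e a * e b)) * B = 1)
    (w : Matrix (Fin n) (Fin n) (Quaternion ℝ))
    (hw : ∀ y, εL n R (w * y) = 0) : w = 0 := by
  classical
  have h1 : ∀ b : ι, ∑ a, e.repr w a * εL n R (e a * e b) = 0 := by
    intro b
    rw [← hw (e b)]
    conv_rhs => rw [← Basis.sum_repr e w, Finset.sum_mul, map_sum]
    refine Finset.sum_congr rfl fun a _ => ?_
    rw [Algebra.smul_mul_assoc, map_smul, smul_eq_mul]
  have h2 : ∀ d : ι, e.repr w d = 0 := by
    intro d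
    have hone : ∀ a : ι, ∑ b, εL n R (e a * e b) * B b d = (if a = d then (1:ℝ) else 0) := by
      intro a
      have : (Matrix.of (fun a b => εL n R (e a * e b)) * B) a d = (1 : Matrix ι ι ℝ) a d := by
        rw [hMB]
      rw [← Matrix.one_apply, ← this, Matrix.mul_apply]
      rfl
    have key : ∑ b, (∑ a, e.repr w a * εL n R (e a * e b)) * B b d = e.repr w d := by
      simp_rw [Finset.sum_mul, mul_assoc]
      rw [Finset.sum_comm]
      simp_rw [← Finset.mul_sum, hone]
      simp
    rw [← key]
    simp_rw [h1, zero_mul, Finset.sum_const_zero]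
  apply e.repr.injective
  ext d
  simp [h2]

lemma Sform {n : ℕ} {ι : Type} [Fintype ι] [DecidableEq ι] (hn : 1 ≤ n) (R : ℝ) (hR : R ≠ 0)
    (e : Basis ι ℝ (Matrix (Fin n) (Fin n) (Quaternion ℝ))) (B : Matrix ι ι ℝ)
    (hMB : Matrix.of (fun a b => εL n R (e a * e b)) * B = 1)
    (x : Matrix (Fin n) (Fin n) (Quaternion ℝ)) :
    ∑ a, ∑ c, B a c • (e a * x * e c)
      = ((Matrix.trace x).re / (R * n)) • (1 : Matrix (Fin n) (Fin n) (Quaternion ℝ)) := by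
  classical
  have hRn : R * (n : ℝ) ≠ 0 := by
    have : (n : ℝ) ≠ 0 := Nat.cast_ne_zero.mpr (by omega)
    exact mul_ne_zero hR this
  rw [← sub_eq_zero]
  apply nondeg R e B hMB
  intro y
  rw [sub_mul, map_sub, sub_eq_zero]
  have hl : εL n R ((∑ a, ∑ c, B a c • (e a * x * e c)) * y)
      = ∑ a, ∑ c, B a c * εL n R (e a * (x * e c * y)) := by
    rw [Finset.sum_mul, map_sum]
    refine Finset.sum_congr rfl fun a _ => ?_
    rw [Finset.sum_mul, map_sum]
    refine Finset.sum_congr rfl fun c _ => ?_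
    rw [Algebra.smul_mul_assoc, map_smul, smul_eq_mul, mul_assoc, mul_assoc, mul_assoc]
  rw [hl, pair R e B hMB x y]
  rw [Algebra.smul_mul_assoc, map_smul, smul_eq_mul, one_mul, εL_apply]
  field_simp

lemma sum4_comm {ι : Type} [Fintype ι] {M : Type*} [AddCommMonoid M] (f : ι → ι → ι → ι → M) :
    ∑ a, ∑ b, ∑ c, ∑ d, f a b c d = ∑ b, ∑ d, ∑ a, ∑ c, f a b c d := by
  rw [Finset.sum_comm]
  refine Finset.sum_congr rfl fun b _ => ?_
  exact (Finset.sum_congr rfl fun a _ => Finset.sum_comm).trans Finset.sum_comm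

lemma zform {n : ℕ} {ι : Type} [Fintype ι] [DecidableEq ι] (hn : 1 ≤ n) (R : ℝ) (hR : R ≠ 0)
    (e : Basis ι ℝ (Matrix (Fin n) (Fin n) (Quaternion ℝ))) (B : Matrix ι ι ℝ)
    (hMB : Matrix.of (fun a b => εL n R (e a * e b)) * B = 1) :
    ∑ a, ∑ b, ∑ c, ∑ d, (B a c * B b d) • (e a * e b * e c * e d)
      = (1 / (4 * R ^ 2 * (n : ℝ) ^ 2)) • (1 : Matrix (Fin n) (Fin n) (Quaternion ℝ)) := by
  classical
  have hn0 : (n : ℝ) ≠ 0 := Nat.cast_ne_zero.mpr (by omega)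
  have key2 : ∀ d : ι, ∑ b, εL n R (e b) * B b d = e.repr 1 d := by
    intro d
    have hone : ∀ a : ι, ∑ b, εL n R (e a * e b) * B b d = (if a = d then (1:ℝ) else 0) := by
      intro a
      have : (Matrix.of (fun a b => εL n R (e a * e b)) * B) a d = (1 : Matrix ι ι ℝ) a d := by
        rw [hMB]
      rw [← Matrix.one_apply, ← this, Matrix.mul_apply]
      rfl
    have h1 : ∀ b : ι, εL n R (e b) = ∑ a, e.repr (1 : Matrix (Fin n) (Fin n) (Quaternion ℝ)) a * εL n R (e a * e b) := by
      intro b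
      conv_lhs => rw [show e b = (1 : Matrix (Fin n) (Fin n) (Quaternion ℝ)) * e b from (one_mul _).symm,
        ← Basis.sum_repr e 1, Finset.sum_mul, map_sum]
      refine Finset.sum_congr rfl fun a _ => ?_
      rw [Algebra.smul_mul_assoc, map_smul, smul_eq_mul]
    simp_rw [h1, Finset.sum_mul, mul_assoc]
    rw [Finset.sum_comm]
    simp_rw [← Finset.mul_sum, hone]
    simp
  calc ∑ a, ∑ b, ∑ c, ∑ d, (B a c * B b d) • (e a * e b * e c * e d)
      = ∑ b, ∑ d, ∑ a, ∑ c, (B a c * B b d) • (e a * e b * e c * e d) := sum4_comm _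
    _ = ∑ b, ∑ d, B b d • ((∑ a, ∑ c, B a c • (e a * e b * e c)) * e d) := by
        refine Finset.sum_congr rfl fun b _ => Finset.sum_congr rfl fun d _ => ?_
        rw [Finset.sum_mul, Finset.smul_sum]
        refine Finset.sum_congr rfl fun a _ => ?_
        rw [Finset.sum_mul, Finset.smul_sum]
        refine Finset.sum_congr rfl fun c _ => ?_
        rw [Algebra.smul_mul_assoc, smul_smul, mul_comm (B b d)]
    _ = ∑ b, ∑ d, B b d • ((((Matrix.trace (e b)).re / (R * n)) • (1 : Matrix (Fin n) (Fin n) (Quaternion ℝ))) * e d) := by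
        refine Finset.sum_congr rfl fun b _ => Finset.sum_congr rfl fun d _ => ?_
        rw [Sform hn R hR e B hMB (e b)]
    _ = ∑ b, ∑ d, (εL n R (e b) * B b d * (1 / (4 * R ^ 2 * (n:ℝ) ^ 2))) • e d := by
        refine Finset.sum_congr rfl fun b _ => Finset.sum_congr rfl fun d _ => ?_
        rw [Algebra.smul_mul_assoc, one_mul, smul_smul, εL_apply]
        congr 1
        field_simp
    _ = ∑ d, ((∑ b, εL n R (e b) * B b d) * (1 / (4 * R ^ 2 * (n:ℝ) ^ 2))) • e d := by
        rw [Finset.sum_comm]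
        refine Finset.sum_congr rfl fun d _ => ?_
        rw [← Finset.sum_smul, ← Finset.sum_mul]
    _ = (1 / (4 * R ^ 2 * (n : ℝ) ^ 2)) • (1 : Matrix (Fin n) (Fin n) (Quaternion ℝ)) := by
        simp_rw [key2]
        simp_rw [mul_comm, mul_smul]
        rw [← Finset.smul_sum, Basis.sum_repr]



/-- For `A = Mₙ(ℍ)` (an ℝ-algebra), `ε(a) = 4·R·n·Re(Tr(a))` with `R ≠ 0`, any
ℝ-basis `{eₐ}` with `(B^{ab})` the inverse of `(ε(eₐ·e_b))`, and
`z = Σ B^{ac}·B^{bd}·eₐ·e_b·e_c·e_d`, one has `R·ε(z^g) = 2^{2-2g}·R^{2-2g}·n^{2-2g}`. -/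
theorem statement3 (n : ℕ) (hn : 1 ≤ n) (R : ℝ) (hR : R ≠ 0)
    (ε : Matrix (Fin n) (Fin n) (Quaternion ℝ) → ℝ)
    (hε : ∀ a, ε a = 4 * R * n * (Matrix.trace a).re) :
    ∀ (ι : Type) [Fintype ι] [DecidableEq ι]
      (e : Module.Basis ι ℝ (Matrix (Fin n) (Fin n) (Quaternion ℝ)))
      (B : Matrix ι ι ℝ),
      Matrix.of (fun a b => ε (e a * e b)) * B = 1 →
      B * Matrix.of (fun a b => ε (e a * e b)) = 1 →
      ∀ g : ℕ,
        R * ε ((∑ a, ∑ b, ∑ c, ∑ d, (B a c * B b d) • (e a * e b * e c * e d)) ^ g)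
          = 2 ^ ((2 : ℤ) - 2 * g) * R ^ ((2 : ℤ) - 2 * g) * (n : ℝ) ^ ((2 : ℤ) - 2 * g) := by
  intro ι _ _ e B hMB hBM g
  have hεf : ε = fun a => εL n R a := funext fun a => (hε a).trans (εL_apply R a).symm
  simp only [hεf] at hMB hBM ⊢
  rw [zform hn R hR e B hMB]
  have hn0 : (n : ℝ) ≠ 0 := Nat.cast_ne_zero.mpr (by omega)
  set c : ℝ := 4 * R ^ 2 * (n : ℝ) ^ 2 with hc
  have hc0 : c ≠ 0 := by positivity
  have hpow : ((1 / c) • (1 : Matrix (Fin n) (Fin n) (Quaternion ℝ))) ^ g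
      = ((1 / c) ^ g) • (1 : Matrix (Fin n) (Fin n) (Quaternion ℝ)) := by
    rw [smul_pow, one_pow]
  rw [hpow, map_smul, smul_eq_mul, εL_apply]
  have htr : (Matrix.trace (1 : Matrix (Fin n) (Fin n) (Quaternion ℝ))).re = n := by
    rw [Matrix.trace_one]
    simp
  rw [htr]
  have hrhs : (2:ℝ) ^ ((2 : ℤ) - 2 * g) * R ^ ((2 : ℤ) - 2 * g) * (n : ℝ) ^ ((2 : ℤ) - 2 * g)
      = c ^ ((1 : ℤ) - g) := by
    rw [← mul_zpow, ← mul_zpow]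
    have h2 : ((2 : ℤ) - 2 * g) = 2 * (1 - g) := by ring
    rw [h2, zpow_mul]
    congr 1
    rw [hc, show ((2:ℤ)) = ((2:ℕ):ℤ) from rfl, zpow_natCast]
    ring
  rw [hrhs, zpow_sub₀ hc0, zpow_one, zpow_natCast, one_div, inv_pow]
  field_simp
  ring
end

section
/- Let n ≥ 1 and let * : M_n(ℂ) → M_n(ℂ) be a ℂ-linear involution, i.e. a ℂ-linear map satisfying (a·b)* = b*·a* for all a,b and (a*)* = a for all a. Then there exist an invertible matrix s ∈ M_n(ℂ) and μ ∈ {1, −1} such that sᵀ = μ·s and a* = s·aᵀ·s⁻¹ for all a ∈ M_n(ℂ). -/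
open Matrix

private lemma mul_stdBasis_decomp {n : ℕ} (a : Matrix (Fin n) (Fin n) ℂ) (j i0 : Fin n) :
    a * single j i0 1 = ∑ k, (a k j) • single k i0 (1:ℂ) := by
  ext p q
  simp [Matrix.mul_apply, Matrix.single, mul_ite, ite_and, Matrix.sum_apply,
    Matrix.of_apply, smul_ite, Finset.sum_ite_eq]

/-- Every ℂ-linear involution `*` of `Mₙ(ℂ)` is of the form `a* = s·aᵀ·s⁻¹` for
some invertible `s` with `sᵀ = μ·s`, `μ ∈ {1, -1}`. -/
theorem statement4 (n : ℕ) (hn : 1 ≤ n)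
    (st : Matrix (Fin n) (Fin n) ℂ → Matrix (Fin n) (Fin n) ℂ)
    (hlin : IsLinearMap ℂ st)
    (hanti : ∀ a b, st (a * b) = st b * st a)
    (hinvol : ∀ a, st (st a) = a) :
    ∃ s : Matrix (Fin n) (Fin n) ℂ, IsUnit s ∧
      ∃ μ : ℂ, (μ = 1 ∨ μ = -1) ∧ s.transpose = μ • s ∧
        ∀ a, st a = s * a.transpose * s⁻¹ := by
  have hstinj : Function.Injective st := Function.LeftInverse.injective hinvol
  -- the automorphism φ
  set φ : Matrix (Fin n) (Fin n) ℂ → Matrix (Fin n) (Fin n) ℂ := fun a => st aᵀ with hφ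
  have hφmul : ∀ a b, φ (a * b) = φ a * φ b := by
    intro a b
    simp only [hφ, Matrix.transpose_mul, hanti]
  have hφinj : Function.Injective φ := fun a b h =>
    Matrix.transpose_injective (hstinj h)
  have hφsmul : ∀ (c : ℂ) a, φ (c • a) = c • φ a := by
    intro c a
    simp only [hφ, Matrix.transpose_smul, hlin.map_smul]
  have hφsum : ∀ (f : Fin n → Matrix (Fin n) (Fin n) ℂ), φ (∑ k, f k) = ∑ k, φ (f k) := by
    intro f
    simp only [hφ, Matrix.transpose_sum]
    exact map_sum (hlin.mk' st) _ _
  have hφst : ∀ a, φ aᵀ = st a := by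
    intro a; simp [hφ]
  -- the special index
  let i0 : Fin n := ⟨0, hn⟩
  -- idempotent e
  set e : Matrix (Fin n) (Fin n) ℂ := φ (single i0 i0 1) with he
  have hee : e * e = e := by
    rw [he, ← hφmul, Matrix.single_mul_single_same, one_mul]
  have hene : e ≠ 0 := by
    intro h
    have h0 : φ (0 : Matrix (Fin n) (Fin n) ℂ) = 0 := by
      rw [hφ]; simpa using map_zero (hlin.mk' st)
    have : single i0 i0 (1:ℂ) = 0 := hφinj (h.trans h0.symm)
    have h1 := congrFun (congrFun this i0) i0
    simp [Matrix.single] at h1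
  -- a fixed vector of e
  obtain ⟨w, hw⟩ : ∃ w, e *ᵥ w ≠ 0 := by
    by_contra h
    push_neg at h
    apply hene
    ext i j
    have := congrFun (h (Pi.single j 1)) i
    simpa [Matrix.mulVec_single] using this
  set v : Fin n → ℂ := e *ᵥ w with hv
  have hev : e *ᵥ v = v := by
    rw [hv, Matrix.mulVec_mulVec, hee]
  -- the intertwining matrix s
  set col : Fin n → (Fin n → ℂ) := fun k => φ (single k i0 1) *ᵥ v with hcol
  have hcol0 : col i0 = v := by rw [hcol]; exact hev
  set s : Matrix (Fin n) (Fin n) ℂ := Matrix.of (fun i j => col j i) with hs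
  -- key intertwining identity
  have hvecs : ∀ a j, φ a *ᵥ col j = ∑ k, a k j • col k := by
    intro a j
    simp only [hcol]
    rw [Matrix.mulVec_mulVec, ← hφmul, mul_stdBasis_decomp, hφsum]
    simp only [hφsmul]
    ext i
    simp only [Matrix.mulVec, dotProduct, Matrix.sum_apply, Finset.sum_apply,
      Pi.smul_apply, Matrix.smul_apply, smul_eq_mul, Finset.sum_mul, Finset.mul_sum]
    rw [Finset.sum_comm]
    exact Finset.sum_congr rfl fun k _ => Finset.sum_congr rfl fun l _ => by ring
  have hkey : ∀ a, φ a * s = s * a := by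
    intro a
    ext i j
    have l : (φ a * s) i j = (φ a *ᵥ col j) i := by
      simp [Matrix.mul_apply, Matrix.mulVec, dotProduct, hs]
    have r : (s * a) i j = (∑ k, a k j • col k) i := by
      simp [Matrix.mul_apply, hs, Finset.sum_apply, mul_comm]
    rw [l, r, hvecs]
  -- s is invertible
  have hsu : IsUnit s := by
    rw [← Matrix.mulVec_injective_iff_isUnit]
    have hker : ∀ x, s *ᵥ x = 0 → x = 0 := by
      intro x hx
      by_contra hx0
      obtain ⟨k, hk⟩ : ∃ k, x k ≠ 0 := by
        by_contra h; push_neg at h; exact hx0 (funext h)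
      set a : Matrix (Fin n) (Fin n) ℂ := single i0 k (x k)⁻¹ with ha
      have hax : a *ᵥ x = Pi.single i0 1 := by
        ext i
        simp [ha, Matrix.mulVec, dotProduct, Matrix.single, ite_and,
          Pi.single_apply, inv_mul_cancel₀ hk, eq_comm]
      have h2 : s *ᵥ (a *ᵥ x) = 0 := by
        rw [Matrix.mulVec_mulVec, ← hkey, ← Matrix.mulVec_mulVec, hx, Matrix.mulVec_zero]
      rw [hax] at h2
      have h3 : s *ᵥ Pi.single i0 1 = v := by
        ext i
        simp [Matrix.mulVec_single, hs, hcol0]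
      rw [h3] at h2
      exact hw h2
    intro x y hxy
    have : s *ᵥ (x - y) = 0 := by rw [Matrix.mulVec_sub, hxy, sub_self]
    have := hker _ this
    exact sub_eq_zero.mp this
  have hdet : IsUnit s.det := (Matrix.isUnit_iff_isUnit_det s).mp hsu
  have hss : s * s⁻¹ = 1 := Matrix.mul_nonsing_inv s hdet
  have hss' : s⁻¹ * s = 1 := Matrix.nonsing_inv_mul s hdet
  have hφeq : ∀ a, φ a = s * a * s⁻¹ := by
    intro a
    rw [← hkey a]
    exact (Matrix.mul_nonsing_inv_cancel_right s (φ a) hdet).symm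
  have hsteq : ∀ a, st a = s * aᵀ * s⁻¹ := by
    intro a
    rw [← hφst a, hφeq]
  have hts : sᵀ * (s⁻¹)ᵀ = 1 := by rw [← Matrix.transpose_mul, hss', Matrix.transpose_one]
  have hts' : (s⁻¹)ᵀ * sᵀ = 1 := by rw [← Matrix.transpose_mul, hss, Matrix.transpose_one]
  have hcomm : ∀ a, (s * (s⁻¹)ᵀ) * a = a * (s * (s⁻¹)ᵀ) := by
    intro a
    have h := hinvol a
    rw [hsteq a, hsteq] at h
    simp only [Matrix.transpose_mul, Matrix.transpose_transpose] at h
    nth_rewrite 2 [← h]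
    simp only [Matrix.mul_assoc]
    rw [Matrix.nonsing_inv_mul_cancel_left s _ hdet, hts, Matrix.mul_one]
  obtain ⟨μ', hμ'⟩ := Matrix.mem_range_scalar_of_commute_single
    (M := s * (s⁻¹)ᵀ) (fun ⦃i j⦄ _ => (hcomm _).symm)
  rw [Matrix.scalar_apply, ← Matrix.smul_one_eq_diagonal] at hμ'
  -- hμ' : μ' • 1 = s * (s⁻¹)ᵀ
  have hstep : (s⁻¹)ᵀ = μ' • s⁻¹ := by
    have h2 := congrArg (fun m => s⁻¹ * m) hμ'
    simp only [Matrix.mul_smul, Matrix.mul_one] at h2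
    rw [Matrix.nonsing_inv_mul_cancel_left s _ hdet] at h2
    exact h2.symm
  have hsmu : s = μ' • sᵀ := by
    have h3 := congrArg (fun m => sᵀ * m * s) hstep
    simp only [mul_smul_comm, smul_mul_assoc] at h3
    rw [hts, Matrix.one_mul, Matrix.nonsing_inv_mul_cancel_right _ _ hdet] at h3
    exact h3
  have htr : sᵀ = μ' • s := by
    have h5 := congrArg Matrix.transpose hsmu
    simpa [Matrix.transpose_smul] using h5
  have hmusq : μ' * μ' = 1 := by
    have h4 : s = (μ' * μ') • s := calc
      s = μ' • sᵀ := hsmu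
      _ = μ' • (μ' • s) := by rw [htr]
      _ = (μ' * μ') • s := smul_smul _ _ _
    have hs0 : s ≠ 0 := by
      intro h0
      have h6 := hss'
      rw [h0, Matrix.mul_zero] at h6
      have h7 := congrFun (congrFun h6 ⟨0, hn⟩) ⟨0, hn⟩
      simp [Matrix.one_apply] at h7
    by_contra hne
    have h5 : ((μ' * μ') - 1) • s = 0 := by
      rw [sub_smul, one_smul, ← h4, sub_self]
    rcases smul_eq_zero.mp h5 with h | h
    · exact hne (by linear_combination h)
    · exact hs0 h
  exact ⟨s, hsu, μ', mul_self_eq_one_iff.mp hmusq, htr, hsteq⟩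
end

section
/- Let n ≥ 1 and let * : M_n(ℍ) → M_n(ℍ) be an ℝ-linear involution on the ℝ-algebra of n×n quaternionic matrices, i.e. an ℝ-linear map satisfying (a·b)* = b*·a* for all a,b and (a*)* = a for all a. Then there exist an invertible s ∈ M_n(ℍ) and μ ∈ {1, −1} such that s‡ = μ·s and a* = s·a‡·s⁻¹ for all a ∈ M_n(ℍ), where a‡ denotes the quaternionic conjugate transpose, (a‡)_{ij} = conj(a_{ji}). -/
set_option maxHeartbeats 2000000
noncomputable section

set_option maxHeartbeats 2000000
noncomputable section
open Quaternion
abbrev QH := Quaternion ℝ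
def qi : QH := ⟨0,1,0,0⟩
def qj : QH := ⟨0,0,1,0⟩

lemma qii : qi * qi = -1 := by ext <;> simp only [Quaternion.re_mul, Quaternion.imI_mul, Quaternion.imJ_mul, Quaternion.imK_mul] <;> simp [qi]
lemma qjj : qj * qj = -1 := by ext <;> simp only [Quaternion.re_mul, Quaternion.imI_mul, Quaternion.imJ_mul, Quaternion.imK_mul] <;> simp [qj]
lemma qji : qj * qi = -(qi * qj) := by ext <;> simp only [Quaternion.re_neg, Quaternion.imI_neg, Quaternion.imJ_neg, Quaternion.imK_neg, Quaternion.re_mul, Quaternion.imI_mul, Quaternion.imJ_mul, Quaternion.imK_mul] <;> simp [qi, qj]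
lemma qi_ne : qi ≠ 0 := by intro h; rw [Quaternion.ext_iff] at h; simp [qi] at h
lemma qj_ne : qj ≠ 0 := by intro h; rw [Quaternion.ext_iff] at h; simp [qj] at h
lemma qdecomp (q : QH) : q = (q.re : ℝ) • 1 + q.imI • qi + q.imJ • qj + q.imK • (qi*qj) := by
  ext <;> simp [Quaternion.re_mul, Quaternion.imI_mul, Quaternion.imJ_mul, Quaternion.imK_mul, Quaternion.re_smul, Quaternion.imI_smul,
    Quaternion.imJ_smul, Quaternion.imK_smul] <;> simp [qi, qj]

lemma quat_hom_inner (σ : QH → QH) (hadd : ∀ a b, σ (a+b) = σ a + σ b)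
    (hmul : ∀ a b, σ (a*b) = σ a * σ b) (hone : σ 1 = 1)
    (hsmul : ∀ (r : ℝ) a, σ (r • a) = r • σ a) :
    ∃ w : QH, w ≠ 0 ∧ ∀ q, σ q * w = w * q := by
  have hneg : ∀ x : QH, σ (-x) = - σ x := by
    intro x
    have h : (-x : QH) = (-1 : ℝ) • x := by simp
    rw [h, hsmul]; simp
  have hm1 : σ (-1) = -1 := by rw [hneg, hone]
  set a := σ qi with ha_def
  set b := σ qj with hb_def
  have ha : a * a = -1 := by rw [ha_def, ← hmul, qii, hm1]
  have hb : b * b = -1 := by rw [hb_def, ← hmul, qjj, hm1]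
  have hab : b * a = -(a * b) := by
    rw [ha_def, hb_def, ← hmul, ← hmul, qji, hneg]
  -- step 1
  obtain ⟨w₁, hw₁ne, hw₁i⟩ : ∃ w₁ : QH, w₁ ≠ 0 ∧ w₁ * qi = a * w₁ := by
    by_cases hcase : a = -qi
    · refine ⟨qj, qj_ne, ?_⟩
      rw [hcase, qji, neg_mul]
    · refine ⟨1 - a * qi, ?_, ?_⟩
      · intro h
        have h1 : a * qi = 1 := (sub_eq_zero.mp h).symm
        have h2 : a * (qi * qi) = qi := by rw [← mul_assoc, h1, one_mul]
        rw [qii, mul_neg_one] at h2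
        exact hcase (neg_eq_iff_eq_neg.mp h2)
      · have h3 : (1 - a * qi) * qi = qi + a := by
          rw [sub_mul, one_mul, mul_assoc, qii, mul_neg_one, sub_neg_eq_add]
        have h4 : a * (1 - a * qi) = a + qi := by
          rw [mul_sub, mul_one, ← mul_assoc, ha, neg_one_mul, sub_neg_eq_add]
        rw [h3, h4, add_comm]
  have hconj : ∀ x y : QH, (w₁⁻¹ * x * w₁) * (w₁⁻¹ * y * w₁) = w₁⁻¹ * (x * y) * w₁ := by
    intro x y
    simp only [mul_assoc, mul_inv_cancel_left₀ hw₁ne]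
  set b' := w₁⁻¹ * b * w₁ with hb'_def
  have hw₁b' : w₁ * b' = b * w₁ := by
    rw [hb'_def, ← mul_assoc, ← mul_assoc, mul_inv_cancel₀ hw₁ne, one_mul]
  have hb'b' : b' * b' = -1 := by
    rw [hb'_def, hconj, hb]
    simp only [mul_neg, mul_one, neg_mul, inv_mul_cancel₀ hw₁ne]
  have hqi_c : w₁⁻¹ * a * w₁ = qi := by
    conv_lhs => rw [mul_assoc, ← hw₁i, ← mul_assoc, inv_mul_cancel₀ hw₁ne, one_mul]
  have hb'i : b' * qi = -(qi * b') := by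
    have h1 : b' * qi = w₁⁻¹ * (b * a) * w₁ := by rw [hb'_def, ← hconj, hqi_c]
    have h2 : qi * b' = w₁⁻¹ * (a * b) * w₁ := by rw [hb'_def, ← hconj, hqi_c]
    rw [h1, h2, hab]
    simp only [mul_neg, neg_mul]
  -- step 2
  obtain ⟨w₂, hw₂ne, hw₂j, hw₂i⟩ :
      ∃ w₂ : QH, w₂ ≠ 0 ∧ w₂ * qj = b' * w₂ ∧ w₂ * qi = qi * w₂ := by
    by_cases hcase : b' = -qj
    · refine ⟨qi, qi_ne, ?_, rfl⟩
      rw [hcase, neg_mul, qji, neg_neg]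
    · refine ⟨1 - b' * qj, ?_, ?_, ?_⟩
      · intro h
        have h1 : b' * qj = 1 := (sub_eq_zero.mp h).symm
        have h2 : b' * (qj * qj) = qj := by rw [← mul_assoc, h1, one_mul]
        rw [qjj, mul_neg_one] at h2
        exact hcase (neg_eq_iff_eq_neg.mp h2)
      · have h3 : (1 - b' * qj) * qj = qj + b' := by
          rw [sub_mul, one_mul, mul_assoc, qjj, mul_neg_one, sub_neg_eq_add]
        have h4 : b' * (1 - b' * qj) = b' + qj := by
          rw [mul_sub, mul_one, ← mul_assoc, hb'b', neg_one_mul, sub_neg_eq_add]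
        rw [h3, h4, add_comm]
      · have h1 : b' * qj * qi = qi * (b' * qj) := by
          rw [mul_assoc, qji, mul_neg, ← mul_assoc, hb'i, neg_mul, neg_neg, mul_assoc]
        rw [sub_mul, one_mul, mul_sub, mul_one, h1]
  refine ⟨w₁ * w₂, mul_ne_zero hw₁ne hw₂ne, ?_⟩
  have hwi : w₁ * w₂ * qi = a * (w₁ * w₂) := by
    rw [mul_assoc, hw₂i, ← mul_assoc, hw₁i, mul_assoc]
  have hwj : w₁ * w₂ * qj = b * (w₁ * w₂) := by
    rw [mul_assoc, hw₂j, ← mul_assoc, hw₁b', mul_assoc]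
  have hwk : w₁ * w₂ * (qi * qj) = (a * b) * (w₁ * w₂) := by
    rw [← mul_assoc, hwi, mul_assoc, hwj, ← mul_assoc, ← mul_assoc]
  intro q
  have hσq : σ q = (q.re : ℝ) • 1 + q.imI • a + q.imJ • b + q.imK • (a * b) := by
    conv_lhs => rw [qdecomp q]
    rw [hadd, hadd, hadd, hsmul, hsmul, hsmul, hsmul, hone, hmul]
  rw [hσq]
  conv_rhs => rw [qdecomp q]
  rw [mul_add, mul_add, mul_add, add_mul, add_mul, add_mul]
  simp only [smul_mul_assoc, mul_smul_comm, hwi, hwj, hwk, mul_one, one_mul]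

abbrev MQ (n : ℕ) := Matrix (Fin n) (Fin n) QH

open Matrix

lemma quat_central (c : QH) (h : ∀ q, c * q = q * c) : c = ((c.re : ℝ) : QH) := by
  have h1 := h qi
  have h2 := h qj
  rw [Quaternion.ext_iff] at h1 h2
  simp only [Quaternion.re_mul, Quaternion.imI_mul, Quaternion.imJ_mul, Quaternion.imK_mul] at h1 h2
  simp [qi, qj] at h1 h2
  ext <;> simp
  · linarith [h2.2]
  · linarith [h1.2]
  · linarith [h1.1]

lemma mat_ct_smul (n : ℕ) (r : ℝ) (M : MQ n) :
    (r • M).conjTranspose = r • M.conjTranspose := by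
  ext i j <;> simp [Matrix.conjTranspose_apply]

lemma scalar_coe_mul_smul (n : ℕ) (μ : ℝ) (M : MQ n) :
    Matrix.scalar (Fin n) ((μ : QH)) * M = μ • M := by
  refine Matrix.ext fun a b => ?_
  simp only [Matrix.scalar_apply, Matrix.diagonal_mul, Matrix.smul_apply]
  ext <;> simp


lemma psi_inner (n : ℕ) (hn : 1 ≤ n) (ψ : MQ n → MQ n)
    (hadd : ∀ a b, ψ (a + b) = ψ a + ψ b)
    (hmul : ∀ a b, ψ (a * b) = ψ a * ψ b)
    (hone : ψ 1 = 1)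
    (hsmul : ∀ (r : ℝ) a, ψ (r • a) = r • ψ a)
    (hinj : Function.Injective ψ) :
    ∃ U U' : MQ n, U * U' = 1 ∧ U' * U = 1 ∧ ∀ a, ψ a = U * a * U' := by
  have z : Fin n := ⟨0, hn⟩
  haveI : Nonempty (Fin n) := ⟨z⟩
  set E : Fin n → Fin n → MQ n := fun i j => Matrix.single i j (1 : QH) with hE_def
  have hE : ∀ i j k l, E i j * E k l = if j = k then E i l else 0 := by
    intro i j k l
    by_cases h : j = k
    · subst h; simp [hE_def]
    · simp [hE_def, Matrix.single_mul_single_of_ne (h := h), h]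
  have ψ0 : ψ 0 = 0 := by
    have h := hadd 0 0
    rw [add_zero] at h
    exact (left_eq_add.mp h)
  set f : Fin n → Fin n → MQ n := fun i j => ψ (E i j) with hf_def
  have hf : ∀ i j k l, f i j * f k l = if j = k then f i l else 0 := by
    intro i j k l
    rw [hf_def, ← hmul, hE]
    by_cases h : j = k <;> simp [h, ψ0]
  have hfzz : f z z ≠ 0 := by
    intro h
    have h2 : E z z = 0 := hinj (h.trans ψ0.symm)
    have h3 := congrFun (congrFun h2 z) z
    rw [hE_def] at h3
    simp at h3
  obtain ⟨r₀, c₀, hr₀⟩ : ∃ r c, f z z r c ≠ 0 := by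
    by_contra h
    push_neg at h
    exact hfzz (Matrix.ext fun r c => h r c)
  set v₁ : Fin n → QH := f z z *ᵥ Pi.single c₀ 1 with hv₁_def
  have hv₁ : v₁ r₀ ≠ 0 := by
    rw [hv₁_def]
    simpa using hr₀
  have hfv₁ : f z z *ᵥ v₁ = v₁ := by
    rw [hv₁_def, Matrix.mulVec_mulVec, hf]
    simp
  set v : Fin n → Fin n → QH := fun k => f k z *ᵥ v₁ with hv_def
  have hvz : v z = v₁ := by rw [hv_def]; exact hfv₁
  have hv : ∀ i j k, f i j *ᵥ v k = if j = k then v i else 0 := by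
    intro i j k
    rw [hv_def, Matrix.mulVec_mulVec, hf]
    by_cases h : j = k <;> simp [h]
  set u : MQ n := Matrix.of (fun r k => v k r) with hu_def
  have key1 : ∀ i j, f i j * u = u * E i j := by
    intro i j
    refine Matrix.ext fun r c => ?_
    have hcol : (f i j * u) r c = (f i j *ᵥ v c) r := by
      simp [Matrix.mul_apply, Matrix.mulVec, dotProduct, hu_def]
    rw [hcol, hv]
    by_cases hc : c = j
    · subst hc
      rw [if_pos rfl]
      rw [hE_def]
      rw [Matrix.mul_single_apply_same]
      simp [hu_def]
    · rw [if_neg (Ne.symm hc)]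
      simp [hE_def, hc]
  have key2 : ∀ x, u *ᵥ x = 0 → x = 0 := by
    intro x hx
    funext j
    have h1 : f z j *ᵥ (u *ᵥ x) = 0 := by rw [hx, Matrix.mulVec_zero]
    rw [Matrix.mulVec_mulVec, key1 z j, ← Matrix.mulVec_mulVec] at h1
    have hE1 : E z j *ᵥ x = Pi.single z (x j) := by
      funext r
      rw [hE_def]
      rw [Matrix.single_mulVec]
      simp [Function.update_apply, Pi.single_apply, eq_comm]
    rw [hE1, Matrix.mulVec_single] at h1
    have h2 := congrFun h1 r₀
    simp [hu_def, hvz] at h2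
    rcases h2 with h | h
    · exact absurd h hv₁
    · exact h
  -- surjectivity of mulVec u
  let L : (Fin n → QH) →ₗ[ℝ] (Fin n → QH) :=
    { toFun := fun x => u *ᵥ x
      map_add' := fun x y => Matrix.mulVec_add u x y
      map_smul' := fun r x => by
        funext i
        simp [Matrix.mulVec, dotProduct, Finset.smul_sum, mul_smul_comm] }
  have hLinj : Function.Injective L := by
    intro x y hxy
    have h0 : L (x - y) = 0 := by rw [map_sub, hxy, sub_self]
    have := key2 (x - y) h0
    exact sub_eq_zero.mp this
  have hLsurj : Function.Surjective L := LinearMap.injective_iff_surjective.mp hLinj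
  choose xcol hxcol using fun j => hLsurj (Pi.single j 1)
  set u' : MQ n := Matrix.of (fun r c => xcol c r) with hu'_def
  have huu' : u * u' = 1 := by
    refine Matrix.ext fun r c => ?_
    have h := congrFun (hxcol c) r
    have h2 : (u * u') r c = (u *ᵥ xcol c) r := by
      simp [Matrix.mul_apply, Matrix.mulVec, dotProduct, hu'_def]
    rw [h2]
    show L (xcol c) r = _
    rw [hxcol c]
    simp [Pi.single_apply, Matrix.one_apply, eq_comm]
  have hu'u : u' * u = 1 := by
    have hx : ∀ x, (u' * u) *ᵥ x = x := by
      intro x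
      have h0 : u *ᵥ ((u' * u) *ᵥ x - x) = 0 := by
        have : u *ᵥ ((u' * u) *ᵥ x) = u *ᵥ x := by
          rw [Matrix.mulVec_mulVec, ← Matrix.mul_assoc, huu', Matrix.one_mul]
        rw [Matrix.mulVec_sub, this, sub_self]
      have := key2 _ h0
      exact sub_eq_zero.mp this
    refine Matrix.ext fun r c => ?_
    have h := congrFun (hx (Pi.single c 1)) r
    rw [Matrix.mulVec_single] at h
    simp only [MulOpposite.op_one, one_smul, Matrix.col_apply] at h
    rw [h]
    simp [Pi.single_apply, Matrix.one_apply, eq_comm]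
  -- scalar matrices
  set S : QH →+* MQ n := Matrix.scalar (Fin n) with hS_def
  have hSE : ∀ (q : QH) i j, S q * E i j = E i j * S q := by
    intro q i j
    refine Matrix.ext fun r c => ?_
    rw [hS_def, hE_def]
    simp only [Matrix.scalar_apply, Matrix.diagonal_mul, Matrix.mul_diagonal,
      Matrix.single, Matrix.of_apply]
    split_ifs <;> simp
  have hψSf : ∀ (q : QH) i j, ψ (S q) * f i j = f i j * ψ (S q) := by
    intro q i j
    rw [hf_def]
    simp only
    rw [← hmul, ← hmul, hSE]
  have key1' : ∀ i j, u' * f i j = E i j * u' := by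
    intro i j
    calc u' * f i j = u' * f i j * (u * u') := by rw [huu', mul_one]
    _ = u' * (f i j * u) * u' := by noncomm_ring
    _ = u' * (u * E i j) * u' := by rw [key1]
    _ = (u' * u) * (E i j * u') := by noncomm_ring
    _ = E i j * u' := by rw [hu'u, one_mul]
  set cq : QH → MQ n := fun q => u' * ψ (S q) * u with hcq_def
  have hcE : ∀ (q : QH) i j, cq q * E i j = E i j * cq q := by
    intro q i j
    calc cq q * E i j = u' * ψ (S q) * (u * E i j) := by rw [hcq_def]; noncomm_ring
    _ = u' * ψ (S q) * (f i j * u) := by rw [key1]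
    _ = u' * (ψ (S q) * f i j) * u := by noncomm_ring
    _ = u' * (f i j * ψ (S q)) * u := by rw [hψSf]
    _ = (u' * f i j) * (ψ (S q) * u) := by noncomm_ring
    _ = (E i j * u') * (ψ (S q) * u) := by rw [key1']
    _ = E i j * cq q := by rw [hcq_def]; noncomm_ring
  have hrange : ∀ q : QH, ∃ r : QH, Matrix.scalar (Fin n) r = cq q := by
    intro q
    have h := Matrix.mem_range_scalar_of_commute_single
      (M := cq q) (fun i j _ => ((hcE q i j).symm : _))
    obtain ⟨r, hr⟩ := h
    exact ⟨r, hr⟩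
  choose σ hσ using hrange
  have Sinj : Function.Injective (S : QH → MQ n) := fun p q h => Matrix.scalar_inj.mp h
  have hcq_mul : ∀ p q, cq (p * q) = cq p * cq q := by
    intro p q
    rw [hcq_def]
    simp only
    rw [_root_.map_mul, hmul]
    calc u' * (ψ (S p) * ψ (S q)) * u
        = u' * ψ (S p) * (u * u') * (ψ (S q) * u) := by rw [huu']; noncomm_ring
    _ = u' * ψ (S p) * u * (u' * ψ (S q) * u) := by noncomm_ring
  have hσmul : ∀ p q, σ (p * q) = σ p * σ q := by
    intro p q
    apply Sinj
    show Matrix.scalar (Fin n) _ = Matrix.scalar (Fin n) _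
    rw [hσ, _root_.map_mul, hσ, hσ, hcq_mul]
  have hσadd : ∀ p q, σ (p + q) = σ p + σ q := by
    intro p q
    apply Sinj
    show Matrix.scalar (Fin n) _ = Matrix.scalar (Fin n) _
    rw [hσ, _root_.map_add, hσ, hσ, hcq_def]
    simp only
    rw [_root_.map_add, hadd, Matrix.mul_add, Matrix.add_mul]
  have hσone : σ 1 = 1 := by
    apply Sinj
    show Matrix.scalar (Fin n) _ = Matrix.scalar (Fin n) _
    rw [hσ, _root_.map_one, hcq_def]
    simp only
    rw [_root_.map_one, hone, mul_one, hu'u]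
  have hSsmul : ∀ (r : ℝ) (q : QH), S (r • q) = r • S q := by
    intro r q
    refine Matrix.ext fun a b => ?_
    rw [hS_def]
    simp only [Matrix.scalar_apply, Matrix.smul_apply]
    by_cases hab : a = b
    · subst hab; simp
    · simp [Matrix.diagonal_apply_ne _ hab]
  have hσsmul : ∀ (r : ℝ) (q : QH), σ (r • q) = r • σ q := by
    intro r q
    apply Sinj
    show Matrix.scalar (Fin n) _ = Matrix.scalar (Fin n) _
    rw [hσ]
    have h1 : S (r • σ q) = r • S (σ q) := hSsmul r _
    rw [show (Matrix.scalar (Fin n) (r • σ q) : MQ n) = S (r • σ q) from rfl, h1]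
    show _ = r • (Matrix.scalar (Fin n) (σ q))
    rw [hσ, hcq_def]
    simp only
    rw [hSsmul, hsmul, Matrix.mul_smul, Matrix.smul_mul]
  have hψSu : ∀ q, ψ (S q) * u = u * S (σ q) := by
    intro q
    have h := hσ q
    calc ψ (S q) * u = (u * u') * ψ (S q) * u := by rw [huu', one_mul]
    _ = u * (u' * ψ (S q) * u) := by noncomm_ring
    _ = u * cq q := by rw [hcq_def]
    _ = u * S (σ q) := by rw [← h]
  obtain ⟨w, hwne, hw⟩ := quat_hom_inner σ hσadd hσmul hσone hσsmul
  refine ⟨u * S w, S w⁻¹ * u', ?_, ?_, ?_⟩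
  · calc u * S w * (S w⁻¹ * u') = u * (S w * S w⁻¹) * u' := by noncomm_ring
    _ = 1 := by rw [← _root_.map_mul, mul_inv_cancel₀ hwne, _root_.map_one, mul_one, huu']
  · calc S w⁻¹ * u' * (u * S w) = S w⁻¹ * (u' * u) * S w := by noncomm_ring
    _ = 1 := by rw [hu'u, mul_one, ← _root_.map_mul, inv_mul_cancel₀ hwne, _root_.map_one]
  · -- main identity
    have hterm : ∀ (i j : Fin n) (q : QH),
        ψ (Matrix.single i j q) * (u * S w) = (u * S w) * Matrix.single i j q := by
      intro i j q
      have hSB : Matrix.single i j q = S q * E i j := by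
        refine Matrix.ext fun r c => ?_
        rw [hS_def, hE_def]
        simp only [Matrix.scalar_apply, Matrix.diagonal_mul, Matrix.single,
          Matrix.of_apply]
        split_ifs <;> simp
      rw [hSB]
      calc ψ (S q * E i j) * (u * S w) = ψ (S q) * (f i j * u) * S w := by
            rw [hmul]; show ψ (S q) * f i j * (u * S w) = _; noncomm_ring
      _ = ψ (S q) * (u * E i j) * S w := by rw [key1]
      _ = (ψ (S q) * u) * (E i j * S w) := by noncomm_ring
      _ = (ψ (S q) * u) * (S w * E i j) := by rw [hSE]
      _ = (u * S (σ q)) * (S w * E i j) := by rw [hψSu]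
      _ = u * (S (σ q) * S w) * E i j := by noncomm_ring
      _ = u * S (σ q * w) * E i j := by rw [_root_.map_mul]
      _ = u * S (w * q) * E i j := by rw [hw]
      _ = u * (S w * S q) * E i j := by rw [_root_.map_mul]
      _ = (u * S w) * (S q * E i j) := by noncomm_ring
    intro a
    have hkey : ψ a * (u * S w) = (u * S w) * a := by
      set ψ' : MQ n →+ MQ n := AddMonoidHom.mk' ψ hadd with hψ'_def
      have hψa : ψ a = ∑ i : Fin n, ∑ j : Fin n, ψ (Matrix.single i j (a i j)) := by
        conv_lhs => rw [show ψ a = ψ' a from rfl, matrix_eq_sum_single a]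
        rw [_root_.map_sum]
        refine Finset.sum_congr rfl fun i _ => ?_
        rw [_root_.map_sum]
        rfl
      rw [hψa, Finset.sum_mul]
      conv_rhs => rw [matrix_eq_sum_single a, Finset.mul_sum]
      refine Finset.sum_congr rfl fun i _ => ?_
      rw [Finset.sum_mul, Finset.mul_sum]
      refine Finset.sum_congr rfl fun j _ => ?_
      exact hterm i j (a i j)
    calc ψ a = ψ a * ((u * S w) * (S w⁻¹ * u')) := by
          rw [show (u * S w) * (S w⁻¹ * u') = u * (S w * S w⁻¹) * u' by noncomm_ring,
            ← _root_.map_mul, mul_inv_cancel₀ hwne, _root_.map_one, mul_one, huu', mul_one]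
    _ = (ψ a * (u * S w)) * (S w⁻¹ * u') := by noncomm_ring
    _ = ((u * S w) * a) * (S w⁻¹ * u') := by rw [hkey]
    _ = (u * S w) * a * (S w⁻¹ * u') := by noncomm_ring

/-- Every ℝ-linear involution `*` of `Mₙ(ℍ)` is of the form `a* = s·a‡·s⁻¹` for
some invertible `s` with `s‡ = μ·s`, `μ ∈ {1, -1}`, where `‡` is the quaternionic conjugate
transpose. (Invertibility of `s` is expressed via a two-sided inverse `s'`.) -/
theorem statement5 (n : ℕ) (hn : 1 ≤ n)
    (st : Matrix (Fin n) (Fin n) (Quaternion ℝ) → Matrix (Fin n) (Fin n) (Quaternion ℝ))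
    (hlin : IsLinearMap ℝ st)
    (hanti : ∀ a b, st (a * b) = st b * st a)
    (hinvol : ∀ a, st (st a) = a) :
    ∃ s s' : Matrix (Fin n) (Fin n) (Quaternion ℝ), s * s' = 1 ∧ s' * s = 1 ∧
      ∃ μ : ℝ, (μ = 1 ∨ μ = -1) ∧ s.conjTranspose = μ • s ∧
        ∀ a, st a = s * a.conjTranspose * s' := by
  have z : Fin n := ⟨0, hn⟩
  haveI : Nonempty (Fin n) := ⟨z⟩
  set ψ : MQ n → MQ n := fun a => (st a).conjTranspose with hψ_def
  clear_value ψ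
  have hst1 : st 1 = 1 := by
    have h := hanti (st 1) 1
    rw [mul_one, hinvol 1] at h
    rw [mul_one] at h
    exact h.symm
  have hadd : ∀ a b, ψ (a + b) = ψ a + ψ b := by
    intro a b
    rw [hψ_def]
    simp only
    rw [hlin.map_add, Matrix.conjTranspose_add]
  have hmul : ∀ a b, ψ (a * b) = ψ a * ψ b := by
    intro a b
    rw [hψ_def]
    simp only
    rw [hanti, Matrix.conjTranspose_mul]
  have hone : ψ 1 = 1 := by
    rw [hψ_def]
    simp only
    rw [hst1, Matrix.conjTranspose_one]
  have hsmul : ∀ (r : ℝ) a, ψ (r • a) = r • ψ a := by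
    intro r a
    rw [hψ_def]
    simp only
    rw [hlin.map_smul, mat_ct_smul]
  have hinj : Function.Injective ψ := by
    intro a b h
    rw [hψ_def] at h
    simp only at h
    have h2 : st a = st b := by
      have := congrArg Matrix.conjTranspose h
      rwa [Matrix.conjTranspose_conjTranspose, Matrix.conjTranspose_conjTranspose] at this
    have := congrArg st h2
    rwa [hinvol, hinvol] at this
  obtain ⟨U, U', hUU', hU'U, hU⟩ := psi_inner n hn ψ hadd hmul hone hsmul hinj
  set s : MQ n := U'.conjTranspose with hs_def
  set s' : MQ n := U.conjTranspose with hs'_def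
  clear_value s s'
  have hss' : s * s' = 1 := by
    rw [hs_def, hs'_def, ← Matrix.conjTranspose_mul, hUU', Matrix.conjTranspose_one]
  have hs's : s' * s = 1 := by
    rw [hs_def, hs'_def, ← Matrix.conjTranspose_mul, hU'U, Matrix.conjTranspose_one]
  have hsH : s.conjTranspose = U' := by rw [hs_def, Matrix.conjTranspose_conjTranspose]
  have hs'H : s'.conjTranspose = U := by rw [hs'_def, Matrix.conjTranspose_conjTranspose]
  have hstf : ∀ a, st a = s * a.conjTranspose * s' := by
    intro a
    have h0 : st a = (ψ a).conjTranspose := by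
      rw [hψ_def]
      simp only
      rw [Matrix.conjTranspose_conjTranspose]
    rw [h0, hU a, Matrix.conjTranspose_mul, Matrix.conjTranspose_mul, hs_def, hs'_def,
      Matrix.mul_assoc]
  -- the symmetry scalar
  set t : MQ n := s * s'.conjTranspose with ht_def
  set rr : MQ n := s.conjTranspose * s' with hrr_def
  clear_value t rr
  have hrt : rr * t = 1 := by
    rw [hrr_def, ht_def]
    calc s.conjTranspose * s' * (s * s'.conjTranspose)
        = s.conjTranspose * (s' * s) * s'.conjTranspose := by noncomm_ring
    _ = s.conjTranspose * s'.conjTranspose := by rw [hs's, mul_one]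
    _ = (s' * s).conjTranspose := by rw [Matrix.conjTranspose_mul]
    _ = 1 := by rw [hs's, Matrix.conjTranspose_one]
  have hI : ∀ a, t * a * rr = a := by
    intro a
    have h := hinvol a
    rw [hstf a, hstf (s * a.conjTranspose * s'), Matrix.conjTranspose_mul,
      Matrix.conjTranspose_mul, Matrix.conjTranspose_conjTranspose] at h
    rw [ht_def, hrr_def]
    calc s * s'.conjTranspose * a * (s.conjTranspose * s')
        = s * (s'.conjTranspose * (a * s.conjTranspose)) * s' := by noncomm_ring
    _ = a := h
  have hcomm : ∀ a, t * a = a * t := by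
    intro a
    calc t * a = t * a * (rr * t) := by rw [hrt, mul_one]
    _ = (t * a * rr) * t := by noncomm_ring
    _ = a * t := by rw [hI a]
  obtain ⟨c, hc⟩ := Matrix.mem_range_scalar_of_commute_single
    (M := t) (fun i j _ => ((hcomm (Matrix.single i j 1)).symm : _))
  have hcnt : ∀ q : QH, c * q = q * c := by
    intro q
    have h := hcomm (Matrix.scalar (Fin n) q)
    rw [← hc, ← _root_.map_mul, ← _root_.map_mul] at h
    exact Matrix.scalar_inj.mp h
  have hcre := quat_central c hcnt
  set μ : ℝ := c.re with hμ_def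
  clear_value μ
  have hs'HsH : s'.conjTranspose * s.conjTranspose = 1 := by
    rw [← Matrix.conjTranspose_mul, hss', Matrix.conjTranspose_one]
  have hsmu : s = μ • s.conjTranspose := by
    calc s = s * (s'.conjTranspose * s.conjTranspose) := by rw [hs'HsH, mul_one]
    _ = (s * s'.conjTranspose) * s.conjTranspose := by noncomm_ring
    _ = Matrix.scalar (Fin n) ((μ : QH)) * s.conjTranspose := by
          rw [← ht_def, ← hcre, hc]
    _ = μ • s.conjTranspose := scalar_coe_mul_smul n μ _
  have hsH_eq : s.conjTranspose = μ • s := by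
    conv_lhs => rw [hsmu]
    rw [mat_ct_smul, Matrix.conjTranspose_conjTranspose]
  have hs_ne : ∃ a b, s a b ≠ 0 := by
    by_contra hno
    push_neg at hno
    have hs0 : s = 0 := Matrix.ext fun a b => hno a b
    have h10 : (1 : MQ n) = 0 := by rw [← hss', hs0, Matrix.zero_mul]
    have h2 := congrFun (congrFun h10 z) z
    rw [Matrix.one_apply_eq] at h2
    simp at h2
  obtain ⟨a0, b0, hab⟩ := hs_ne
  have hμμ : μ * μ = 1 := by
    have h1 : s = (μ * μ) • s := by
      conv_lhs => rw [hsmu, hsH_eq, smul_smul]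
    have h2 := congrFun (congrFun h1 a0) b0
    rw [Matrix.smul_apply] at h2
    have h3 : ((μ * μ - 1 : ℝ)) • s a0 b0 = 0 := by
      rw [sub_smul, one_smul, ← h2, sub_self]
    rw [Algebra.smul_def] at h3
    rcases mul_eq_zero.mp h3 with h | h
    · have h4 : (μ * μ - 1 : ℝ) = 0 :=
        (map_eq_zero_iff (algebraMap ℝ QH) (algebraMap ℝ QH).injective).mp h
      linarith
    · exact absurd h hab
  exact ⟨s, s', hss', hs's, μ, mul_self_eq_one_iff.mp hμμ, hsH_eq, hstf⟩
end
end
end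

section
/- Let n ≥ 1 and let * : M_n(ℂ) → M_n(ℂ) be an ℝ-linear involution of M_n(ℂ) regarded as an ℝ-algebra, i.e. an ℝ-linear map satisfying (a·b)* = b*·a* for all a,b and (a*)* = a for all a. Then either (1) there exist an invertible s ∈ M_n(ℂ) and μ ∈ {1, −1} such that sᵀ = μ·s and a* = s·aᵀ·s⁻¹ for all a, or (2) there exist an invertible s ∈ M_n(ℂ) and μ ∈ ℂ with |μ| = 1 such that s† = μ·s and a* = s·a†·s⁻¹ for all a, where a† denotes the conjugate transpose of a. -/
open Matrix

lemma inner_of_aut (n : ℕ) (hn : 1 ≤ n)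
    (φ : Matrix (Fin n) (Fin n) ℂ → Matrix (Fin n) (Fin n) ℂ)
    (hadd : ∀ a b, φ (a + b) = φ a + φ b)
    (hsmul : ∀ (z : ℂ) a, φ (z • a) = z • φ a)
    (hmul : ∀ a b, φ (a * b) = φ a * φ b)
    (hinj : Function.Injective φ) :
    ∃ s : Matrix (Fin n) (Fin n) ℂ, IsUnit s ∧ ∀ a, φ a = s * a * s⁻¹ := by
  haveI : NeZero n := ⟨by omega⟩
  set z : Fin n := 0 with hz
  have h0 : φ 0 = 0 := by simpa using hsmul 0 0
  set E : Fin n → Fin n → Matrix (Fin n) (Fin n) ℂ :=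
    fun i j => Matrix.single i j 1 with hE
  -- matrix unit relations for φ(E i j)
  have hrel : ∀ i j k l, φ (E i j) * φ (E k l) =
      if j = k then φ (E i l) else 0 := by
    intro i j k l
    rw [← hmul]
    by_cases h : j = k
    · subst h
      rw [if_pos rfl, hE]
      simp
    · rw [if_neg h, hE]
      simp only
      rw [Matrix.single_mul_single_of_ne (h := h), h0]
  -- a nonzero fixed vector of φ (E z z)
  have hEzz : φ (E z z) ≠ 0 := by
    intro h
    rw [← h0] at h
    have h2 := congrArg (fun M => M z z) (hinj h)
    simp [hE] at h2
  obtain ⟨i0, j0, hij0⟩ : ∃ i0 j0, φ (E z z) i0 j0 ≠ 0 := by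
    by_contra h
    push_neg at h
    exact hEzz (Matrix.ext fun i j => h i j)
  set v0 : Fin n → ℂ := (φ (E z z)) *ᵥ Pi.single j0 1 with hv0
  have hv0ne : v0 i0 ≠ 0 := by
    simpa [hv0, Matrix.mulVec_single] using hij0
  have hfix : (φ (E z z)) *ᵥ v0 = v0 := by
    rw [hv0, Matrix.mulVec_mulVec, hrel]
    simp
  set s : Matrix (Fin n) (Fin n) ℂ :=
    Matrix.of (fun i j => ((φ (E j z)) *ᵥ v0) i) with hs
  -- key commutation on matrix units
  have hcomm0 : ∀ k l, φ (E k l) * s = s * E k l := by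
    intro k l
    ext i j
    have lhs : (φ (E k l) * s) i j = ((φ (E k l) * φ (E j z)) *ᵥ v0) i := by
      simp only [Matrix.mul_apply, hs, Matrix.of_apply, Matrix.mulVec, dotProduct,
        Finset.mul_sum]
      simp only [Finset.sum_mul, mul_assoc]
      rw [Finset.sum_comm]
    rw [lhs, hrel]
    by_cases h : l = j
    · subst h
      rw [if_pos rfl]
      simp [hE, hs]
    · rw [if_neg h]
      simp [hE, hs, Ne.symm h]
  -- commutation for all matrices, by linearity
  set L : Matrix (Fin n) (Fin n) ℂ →ₗ[ℂ] Matrix (Fin n) (Fin n) ℂ :=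
    IsLinearMap.mk' φ ⟨hadd, hsmul⟩ with hLdef
  have hL : ∀ a, φ a = L a := fun a => rfl
  have hcomm : ∀ a, φ a * s = s * a := by
    intro a
    have ha := Matrix.matrix_eq_sum_single a
    calc φ a * s = L (∑ i, ∑ j, Matrix.single i j (a i j)) * s := by rw [← hL, ← ha]
      _ = (∑ i, ∑ j, a i j • L (E i j)) * s := by
          rw [map_sum]
          congr 1
          refine Finset.sum_congr rfl fun i _ => ?_
          rw [map_sum]
          refine Finset.sum_congr rfl fun j _ => ?_
          rw [hE, ← _root_.map_smul]
          congr 1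
          simp [Matrix.smul_single]
      _ = ∑ i, ∑ j, a i j • (φ (E i j) * s) := by
          rw [Finset.sum_mul]
          refine Finset.sum_congr rfl fun i _ => ?_
          rw [Finset.sum_mul]
          refine Finset.sum_congr rfl fun j _ => ?_
          rw [smul_mul_assoc, hL]
      _ = ∑ i, ∑ j, a i j • (s * E i j) := by
          refine Finset.sum_congr rfl fun i _ => Finset.sum_congr rfl fun j _ => ?_
          rw [hcomm0]
      _ = s * ∑ i, ∑ j, Matrix.single i j (a i j) := by
          rw [Finset.mul_sum]
          refine Finset.sum_congr rfl fun i _ => ?_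
          rw [Finset.mul_sum]
          refine Finset.sum_congr rfl fun j _ => ?_
          rw [← mul_smul_comm]
          congr 1
          simp [hE, Matrix.smul_single]
      _ = s * a := by rw [← ha]
  -- s is invertible
  have hsinj : Function.Injective s.mulVec := by
    intro x y hxy
    have key : ∀ (x : Fin n → ℂ) (k : Fin n),
        φ (E z k) *ᵥ (s *ᵥ x) = x k • v0 := by
      intro x k
      have hexp : s *ᵥ x = ∑ j, x j • (φ (E j z) *ᵥ v0) := by
        funext i
        simp only [Matrix.mulVec, dotProduct, hs, Matrix.of_apply, Finset.sum_apply,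
          Pi.smul_apply, smul_eq_mul]
        exact Finset.sum_congr rfl fun j _ => mul_comm _ _
      have step : ∀ j, φ (E z k) *ᵥ (x j • (φ (E j z) *ᵥ v0)) =
          if k = j then x j • v0 else 0 := by
        intro j
        rw [Matrix.mulVec_smul, Matrix.mulVec_mulVec, hrel]
        by_cases h : k = j
        · subst h; rw [if_pos rfl, if_pos rfl, hfix]
        · rw [if_neg h, if_neg h, Matrix.zero_mulVec, smul_zero]
      have hsum : φ (E z k) *ᵥ (∑ j, x j • (φ (E j z) *ᵥ v0)) =
          ∑ j, φ (E z k) *ᵥ (x j • (φ (E j z) *ᵥ v0)) := by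
        simpa only [Matrix.mulVecLin_apply] using
          map_sum (Matrix.mulVecLin (φ (E z k))) (fun j => x j • (φ (E j z) *ᵥ v0)) Finset.univ
      rw [hexp, hsum]
      simp only [step]
      rw [Finset.sum_ite_eq Finset.univ k (fun j => x j • v0)]
      simp
    have h1 := key x
    have h2 := key y
    funext k
    have := (h1 k).symm.trans ((congrArg (fun v => φ (E z k) *ᵥ v) hxy).trans (h2 k))
    have := congrArg (fun v => v i0) this
    simp only [Pi.smul_apply, smul_eq_mul] at this
    exact mul_right_cancel₀ hv0ne this
  have hsu : IsUnit s := Matrix.mulVec_injective_iff_isUnit.mp hsinj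
  refine ⟨s, hsu, fun a => ?_⟩
  have hdet : IsUnit s.det := (Matrix.isUnit_iff_isUnit_det s).mp hsu
  calc φ a = φ a * (s * s⁻¹) := by rw [Matrix.mul_nonsing_inv s hdet, mul_one]
    _ = (φ a * s) * s⁻¹ := by rw [mul_assoc]
    _ = s * a * s⁻¹ := by rw [hcomm]

lemma central_scalar (n : ℕ) (u : Matrix (Fin n) (Fin n) ℂ)
    (hu : ∀ a, u * a = a * u) : ∃ μ : ℂ, u = μ • 1 := by
  obtain ⟨r, hr⟩ := Matrix.mem_range_scalar_of_commute_single
    (M := u) (fun i j _ => (hu _).symm)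
  exact ⟨r, by rw [← hr, Matrix.scalar_apply, Matrix.smul_one_eq_diagonal]⟩

/-- Every ℝ-linear involution `*` of `Mₙ(ℂ)` (as an ℝ-algebra) is either of the
form `a* = s·aᵀ·s⁻¹` with `sᵀ = μ·s`, `μ ∈ {1, -1}`, or of the form `a* = s·a†·s⁻¹` with
`s† = μ·s`, `|μ| = 1`. -/
theorem statement6 (n : ℕ) (hn : 1 ≤ n)
    (st : Matrix (Fin n) (Fin n) ℂ → Matrix (Fin n) (Fin n) ℂ)
    (hlin : IsLinearMap ℝ st)
    (hanti : ∀ a b, st (a * b) = st b * st a)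
    (hinvol : ∀ a, st (st a) = a) :
    (∃ s : Matrix (Fin n) (Fin n) ℂ, IsUnit s ∧
      ∃ μ : ℂ, (μ = 1 ∨ μ = -1) ∧ s.transpose = μ • s ∧
        ∀ a, st a = s * a.transpose * s⁻¹) ∨
    (∃ s : Matrix (Fin n) (Fin n) ℂ, IsUnit s ∧
      ∃ μ : ℂ, ‖μ‖ = 1 ∧ s.conjTranspose = μ • s ∧
        ∀ a, st a = s * a.conjTranspose * s⁻¹) := by
  haveI : NeZero n := ⟨by omega⟩
  have hsurj : Function.Surjective st := fun a => ⟨st a, hinvol a⟩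
  have hstinj : Function.Injective st := fun a b h => by rw [← hinvol a, h, hinvol b]
  have h1 : st 1 = 1 := by
    have hb : ∀ b, st b = st b * st 1 := fun b => by rw [← hanti, one_mul]
    have := hb (st 1)
    rw [hinvol 1] at this
    rw [one_mul] at this
    exact this.symm
  -- scalar matrices map to scalar matrices
  have hsc : ∀ w : ℂ, ∃ cw : ℂ, st (w • 1) = cw • 1 := by
    intro w
    apply central_scalar
    intro b
    obtain ⟨a, rfl⟩ := hsurj b
    calc st (w • (1 : Matrix (Fin n) (Fin n) ℂ)) * st a = st (a * (w • 1)) := (hanti a _).symm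
      _ = st ((w • 1) * a) := by rw [smul_mul_assoc, mul_smul_comm, one_mul, mul_one]
      _ = st a * st (w • 1) := hanti _ _
  obtain ⟨c, hc⟩ := hsc Complex.I
  have hc2 : c * c = -1 := by
    have e1 : (Complex.I • (1 : Matrix (Fin n) (Fin n) ℂ)) * (Complex.I • 1) = (-1 : ℝ) • (1 : Matrix (Fin n) (Fin n) ℂ) := by
      rw [smul_mul_smul_comm, Complex.I_mul_I, one_mul]
      ext i j
      simp [Matrix.smul_apply]
    have e2 := congrArg st e1
    rw [hanti, hc, hlin.map_smul, h1, smul_mul_smul_comm, one_mul] at e2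
    have := congrArg (fun m : Matrix (Fin n) (Fin n) ℂ => m 0 0) e2
    simpa [Matrix.smul_apply, Matrix.one_apply] using this
  have hcases : c = Complex.I ∨ c = -Complex.I := by
    have hfac : (c - Complex.I) * (c + Complex.I) = 0 := by
      linear_combination hc2 - Complex.I_mul_I
    rcases mul_eq_zero.mp hfac with h | h
    · exact Or.inl (sub_eq_zero.mp h)
    · exact Or.inr (eq_neg_of_add_eq_zero_left h)
  have hscal : ∀ w : ℂ, st (w • 1) = (↑w.re + ↑w.im * c) • 1 := by
    intro w
    have hdecomp : w • (1 : Matrix (Fin n) (Fin n) ℂ) =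
        (w.re : ℝ) • (1 : Matrix (Fin n) (Fin n) ℂ) + (w.im : ℝ) • (Complex.I • 1) := by
      ext i j
      by_cases h : i = j <;>
        simp [Matrix.smul_apply, Matrix.one_apply, h, Complex.real_smul, Complex.re_add_im]
    rw [hdecomp, hlin.map_add, hlin.map_smul, hlin.map_smul, h1, hc]
    ext i j
    by_cases h : i = j <;>
      simp [Matrix.smul_apply, Matrix.one_apply, h, Complex.real_smul]
  -- common invertibility facts will be re-derived in each case
  rcases hcases with hcI | hcI
  · -- ℂ-linear case : transpose form
    left
    have hC : ∀ (w : ℂ) (a : Matrix (Fin n) (Fin n) ℂ), st (w • a) = w • st a := by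
      intro w a
      have h2 : w • a = (w • (1 : Matrix (Fin n) (Fin n) ℂ)) * a := by
        rw [smul_mul_assoc, one_mul]
      rw [h2, hanti, hscal, hcI, Complex.re_add_im, mul_smul_comm, mul_one]
    obtain ⟨s, hsu, hφ⟩ := inner_of_aut n hn (fun a => st aᵀ)
      (fun a b => by
        show st (a + b)ᵀ = st aᵀ + st bᵀ
        rw [Matrix.transpose_add, hlin.map_add])
      (fun z a => by
        show st (z • a)ᵀ = z • st aᵀ
        rw [Matrix.transpose_smul, hC])
      (fun a b => by
        show st (a * b)ᵀ = st aᵀ * st bᵀ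
        rw [Matrix.transpose_mul, hanti])
      (fun a b h => by
        have h2 : aᵀ = bᵀ := hstinj h
        rw [← Matrix.transpose_transpose a, h2, Matrix.transpose_transpose])
    have hform : ∀ a, st a = s * aᵀ * s⁻¹ := fun a => by
      have := hφ aᵀ; rwa [Matrix.transpose_transpose] at this
    have hdet : IsUnit s.det := (Matrix.isUnit_iff_isUnit_det s).mp hsu
    have hss : s * s⁻¹ = 1 := Matrix.mul_nonsing_inv s hdet
    have hss' : s⁻¹ * s = 1 := Matrix.nonsing_inv_mul s hdet
    set p : Matrix (Fin n) (Fin n) ℂ := s * (s⁻¹)ᵀ with hp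
    set u : Matrix (Fin n) (Fin n) ℂ := sᵀ * s⁻¹ with hu
    have key : ∀ a, a = p * a * u := by
      intro a
      calc a = st (st a) := (hinvol a).symm
        _ = s * (st a)ᵀ * s⁻¹ := hform _
        _ = s * (s * aᵀ * s⁻¹)ᵀ * s⁻¹ := by rw [hform]
        _ = p * a * u := by
            rw [hp, hu, Matrix.transpose_mul, Matrix.transpose_mul,
              Matrix.transpose_transpose]
            simp only [mul_assoc]
    have hpu : p * u = 1 := by
      rw [hp, hu]
      calc s * (s⁻¹)ᵀ * (sᵀ * s⁻¹) = s * ((s * s⁻¹)ᵀ * s⁻¹) := by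
            rw [Matrix.transpose_mul]; simp only [mul_assoc]
        _ = 1 := by rw [hss, Matrix.transpose_one, one_mul, hss]
    have hup : u * p = 1 := by
      rw [hp, hu]
      calc sᵀ * s⁻¹ * (s * (s⁻¹)ᵀ) = sᵀ * ((s⁻¹ * s) * (s⁻¹)ᵀ) := by
            simp only [mul_assoc]
        _ = (s⁻¹ * s)ᵀ := by rw [hss', one_mul, ← Matrix.transpose_mul, hss']
        _ = 1 := by rw [hss', Matrix.transpose_one]
    have hcommu : ∀ a, u * a = a * u := by
      intro a
      calc u * a = u * (p * a * u) := by rw [← key a]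
        _ = (u * p) * (a * u) := by simp only [mul_assoc]
        _ = a * u := by rw [hup, one_mul]
    obtain ⟨μ, hμ⟩ := central_scalar n u hcommu
    have hT : sᵀ = μ • s := by
      have h3 : u * s = sᵀ := by rw [hu, mul_assoc, hss', mul_one]
      rw [← h3, hμ, smul_mul_assoc, one_mul]
    have hs0 : s ≠ 0 := by
      intro h
      rw [h, zero_mul] at hss
      exact one_ne_zero hss.symm
    have hμ2 : μ * μ = 1 := by
      have h2 : s = (μ * μ) • s := by
        conv_lhs => rw [← Matrix.transpose_transpose s, hT, Matrix.transpose_smul, hT,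
          smul_smul]
      have h3 : (μ * μ - 1) • s = 0 := by rw [sub_smul, one_smul, ← h2, sub_self]
      rcases smul_eq_zero.mp h3 with h | h
      · linear_combination h
      · exact absurd h hs0
    exact ⟨s, hsu, μ, mul_self_eq_one_iff.mp hμ2, hT, hform⟩
  · -- conjugate-linear case : conjTranspose form
    right
    have hconj : ∀ w : ℂ, st (w • 1) = (starRingEnd ℂ) w • 1 := by
      intro w
      rw [hscal, hcI]
      congr 1
      apply Complex.ext <;> simp
    have hC : ∀ (w : ℂ) (a : Matrix (Fin n) (Fin n) ℂ),
        st (w • a) = (starRingEnd ℂ) w • st a := by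
      intro w a
      have h2 : w • a = (w • (1 : Matrix (Fin n) (Fin n) ℂ)) * a := by
        rw [smul_mul_assoc, one_mul]
      rw [h2, hanti, hconj, mul_smul_comm, mul_one]
    obtain ⟨s, hsu, hφ⟩ := inner_of_aut n hn (fun a => st aᴴ)
      (fun a b => by
        show st (a + b)ᴴ = st aᴴ + st bᴴ
        rw [Matrix.conjTranspose_add, hlin.map_add])
      (fun z a => by
        show st (z • a)ᴴ = z • st aᴴ
        rw [Matrix.conjTranspose_smul, Complex.star_def, hC, Complex.conj_conj])
      (fun a b => by
        show st (a * b)ᴴ = st aᴴ * st bᴴ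
        rw [Matrix.conjTranspose_mul, hanti])
      (fun a b h => by
        have h2 : aᴴ = bᴴ := hstinj h
        rw [← Matrix.conjTranspose_conjTranspose a, h2, Matrix.conjTranspose_conjTranspose])
    have hform : ∀ a, st a = s * aᴴ * s⁻¹ := fun a => by
      have := hφ aᴴ; rwa [Matrix.conjTranspose_conjTranspose] at this
    have hdet : IsUnit s.det := (Matrix.isUnit_iff_isUnit_det s).mp hsu
    have hss : s * s⁻¹ = 1 := Matrix.mul_nonsing_inv s hdet
    have hss' : s⁻¹ * s = 1 := Matrix.nonsing_inv_mul s hdet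
    set p : Matrix (Fin n) (Fin n) ℂ := s * (s⁻¹)ᴴ with hp
    set u : Matrix (Fin n) (Fin n) ℂ := sᴴ * s⁻¹ with hu
    have key : ∀ a, a = p * a * u := by
      intro a
      calc a = st (st a) := (hinvol a).symm
        _ = s * (st a)ᴴ * s⁻¹ := hform _
        _ = s * (s * aᴴ * s⁻¹)ᴴ * s⁻¹ := by rw [hform]
        _ = p * a * u := by
            rw [hp, hu, Matrix.conjTranspose_mul, Matrix.conjTranspose_mul,
              Matrix.conjTranspose_conjTranspose]
            simp only [mul_assoc]
    have hpu : p * u = 1 := by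
      rw [hp, hu]
      calc s * (s⁻¹)ᴴ * (sᴴ * s⁻¹) = s * ((s * s⁻¹)ᴴ * s⁻¹) := by
            rw [Matrix.conjTranspose_mul]; simp only [mul_assoc]
        _ = 1 := by rw [hss, Matrix.conjTranspose_one, one_mul, hss]
    have hup : u * p = 1 := by
      rw [hp, hu]
      calc sᴴ * s⁻¹ * (s * (s⁻¹)ᴴ) = sᴴ * ((s⁻¹ * s) * (s⁻¹)ᴴ) := by
            simp only [mul_assoc]
        _ = (s⁻¹ * s)ᴴ := by rw [hss', one_mul, ← Matrix.conjTranspose_mul, hss']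
        _ = 1 := by rw [hss', Matrix.conjTranspose_one]
    have hcommu : ∀ a, u * a = a * u := by
      intro a
      calc u * a = u * (p * a * u) := by rw [← key a]
        _ = (u * p) * (a * u) := by simp only [mul_assoc]
        _ = a * u := by rw [hup, one_mul]
    obtain ⟨μ, hμ⟩ := central_scalar n u hcommu
    have hT : sᴴ = μ • s := by
      have h3 : u * s = sᴴ := by rw [hu, mul_assoc, hss', mul_one]
      rw [← h3, hμ, smul_mul_assoc, one_mul]
    have hs0 : s ≠ 0 := by
      intro h
      rw [h, zero_mul] at hss
      exact one_ne_zero hss.symm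
    have hμ2 : (starRingEnd ℂ) μ * μ = 1 := by
      have h2 : s = ((starRingEnd ℂ) μ * μ) • s := by
        conv_lhs => rw [← Matrix.conjTranspose_conjTranspose s, hT,
          Matrix.conjTranspose_smul, Complex.star_def, hT, smul_smul]
      have h3 : ((starRingEnd ℂ) μ * μ - 1) • s = 0 := by
        rw [sub_smul, one_smul, ← h2, sub_self]
      rcases smul_eq_zero.mp h3 with h | h
      · linear_combination h
      · exact absurd h hs0
    have habs : ‖μ‖ = 1 := by
      have hnsq : Complex.normSq μ = 1 := by
        have := hμ2
        rw [mul_comm, Complex.mul_conj] at this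
        exact_mod_cast this
      rw [Complex.norm_def, hnsq, Real.sqrt_one]
    exact ⟨s, hsu, μ, habs, hT, hform⟩
end

section
/- Let k be a field, A a finite-dimensional associative unital k-algebra, and ε : A → k a k-linear functional such that the bilinear form (x,y) ↦ ε(x·y) is nondegenerate and symmetric (ε(x·y) = ε(y·x) for all x,y). Fix a basis {e_a} of A and let (B^{ab}) be the inverse of the matrix (ε(e_a·e_b))_{a,b}; assume there is R ∈ k, R ≠ 0, with R·Σ_{a,b} B^{ab}·e_a·e_b = 1. Let * : A → A be a k-linear involution ((a·b)* = b*·a*, (a*)* = a) satisfying ε(a*) = ε(a) for all a. Define w := Σ_{a,b} B^{ab}·e_a·(e_b)* and z := Σ_{a,b,c,d} B^{ac}·B^{bd}·e_a·e_b·e_c·e_d. Then w lies in the center of A and w·z = w³. -/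
set_option linter.unusedSectionVars false
set_option maxHeartbeats 1000000

section Aux
variable {k : Type} [Field k] {A : Type} [Ring A] [Algebra k A]
variable {ι : Type} [Fintype ι] [DecidableEq ι]

lemma aux_sum4 (t : ι → ι → ι → ι → A) :
    ∑ a, ∑ b, ∑ c, ∑ d, t a b c d
      = ∑ x : ι × ι × ι × ι, t x.1 x.2.1 x.2.2.1 x.2.2.2 := by
  simp [Fintype.sum_prod_type]

lemma aux_mul_dsum (B : Matrix ι ι k) (x : A) (t : ι → ι → A) :
    x * (∑ a, ∑ b, B a b • t a b) = ∑ a, ∑ b, B a b • (x * t a b) := by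
  rw [Finset.mul_sum]
  refine Finset.sum_congr rfl fun a _ => ?_
  rw [Finset.mul_sum]
  exact Finset.sum_congr rfl fun b _ => (mul_smul_comm _ _ _)

lemma aux_dsum_mul (B : Matrix ι ι k) (x : A) (t : ι → ι → A) :
    (∑ a, ∑ b, B a b • t a b) * x = ∑ a, ∑ b, B a b • (t a b * x) := by
  rw [Finset.sum_mul]
  refine Finset.sum_congr rfl fun a _ => ?_
  rw [Finset.sum_mul]
  exact Finset.sum_congr rfl fun b _ => (smul_mul_assoc _ _ _)

lemma aux_dsum_congr (B : Matrix ι ι k) (t s : ι → ι → A)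
    (h : ∀ a b, t a b = s a b) :
    ∑ a, ∑ b, B a b • t a b = ∑ a, ∑ b, B a b • s a b := by
  exact Finset.sum_congr rfl fun a _ => Finset.sum_congr rfl fun b _ => by rw [h]

lemma aux_flatten (B : Matrix ι ι k) (t : ι → ι → ι → ι → A) :
    ∑ a, ∑ b, B a b • (∑ c, ∑ d, B c d • t a b c d)
      = ∑ a, ∑ b, ∑ c, ∑ d, (B a b * B c d) • t a b c d := by
  simp only [Finset.smul_sum, smul_smul]

lemma aux_expand (ε : A →ₗ[k] k) (e : Module.Basis ι k A) (B : Matrix ι ι k)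
    (hB1 : Matrix.of (fun a b => ε (e a * e b)) * B = 1) (x : A) :
    ∑ c, ∑ d, (B c d * ε (x * e c)) • e d = x := by
  conv_rhs => rw [← e.sum_repr x]
  rw [Finset.sum_comm]
  refine Finset.sum_congr rfl fun d _ => ?_
  rw [← Finset.sum_smul]
  congr 1
  have hx : ∀ c, ε (x * e c) = ∑ t, e.repr x t * ε (e t * e c) := by
    intro c
    conv_lhs => rw [← e.sum_repr x]
    rw [Finset.sum_mul, map_sum]
    simp [smul_mul_assoc]
  have hB : ∀ t, ∑ c, ε (e t * e c) * B c d = if t = d then 1 else 0 := by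
    intro t
    have := congrFun (congrFun hB1 t) d
    simpa [Matrix.mul_apply, Matrix.one_apply] using this
  calc ∑ c, B c d * ε (x * e c)
      = ∑ c, ∑ t, e.repr x t * (ε (e t * e c) * B c d) := by
        simp only [hx, Finset.sum_mul, Finset.mul_sum]
        exact Finset.sum_congr rfl fun c _ => Finset.sum_congr rfl fun t _ => by ring
    _ = ∑ t, e.repr x t * ∑ c, ε (e t * e c) * B c d := by
        rw [Finset.sum_comm]; simp [Finset.mul_sum]
    _ = e.repr x d := by simp [hB]

lemma aux_Bsym (ε : A →ₗ[k] k) (hsym : ∀ x y, ε (x * y) = ε (y * x))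
    (e : Module.Basis ι k A) (B : Matrix ι ι k)
    (hB1 : Matrix.of (fun a b => ε (e a * e b)) * B = 1)
    (hB2 : B * Matrix.of (fun a b => ε (e a * e b)) = 1) (p q : ι) :
    B p q = B q p := by
  set G := Matrix.of (fun a b => ε (e a * e b)) with hGdef
  have hG : Matrix.transpose G = G := by
    ext a b; simp [hGdef, Matrix.transpose_apply]; exact hsym (e b) (e a)
  have h1 : Matrix.transpose B * G = 1 := by
    have := congrArg Matrix.transpose hB1
    rwa [Matrix.transpose_mul, Matrix.transpose_one, hG] at this
  have hBT : Matrix.transpose B = B := by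
    calc Matrix.transpose B = Matrix.transpose B * (G * B) := by rw [hB1, Matrix.mul_one]
    _ = (Matrix.transpose B * G) * B := by rw [Matrix.mul_assoc]
    _ = B := by rw [h1, Matrix.one_mul]
  conv_lhs => rw [← hBT]
  exact Matrix.transpose_apply B p q

lemma aux_keyI (ε : A →ₗ[k] k) (hsym : ∀ x y, ε (x * y) = ε (y * x))
    (e : Module.Basis ι k A) (B : Matrix ι ι k)
    (hB1 : Matrix.of (fun a b => ε (e a * e b)) * B = 1)
    (hB2 : B * Matrix.of (fun a b => ε (e a * e b)) = 1)
    (f : A →ₗ[k] A →ₗ[k] A) (x : A) :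
    ∑ a, ∑ b, B a b • f (x * e a) (e b) = ∑ a, ∑ b, B a b • f (e a) (e b * x) := by
  have hBs := aux_Bsym ε hsym e B hB1 hB2
  have h1 : ∀ a b : ι, f (x * e a) (e b)
      = ∑ c, ∑ d, (B c d * ε (x * e a * e c)) • f (e d) (e b) := by
    intro a b
    conv_lhs => rw [← aux_expand ε e B hB1 (x * e a)]
    simp [map_sum, map_smul, LinearMap.sum_apply, LinearMap.smul_apply]
  have h2 : ∀ a b : ι, f (e a) (e b * x)
      = ∑ c, ∑ d, (B c d * ε (e b * x * e c)) • f (e a) (e d) := by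
    intro a b
    conv_lhs => rw [← aux_expand ε e B hB1 (e b * x)]
    simp [map_sum, map_smul]
  simp only [h1, h2, Finset.smul_sum, smul_smul]
  rw [aux_sum4, aux_sum4]
  refine Fintype.sum_equiv
    ⟨fun y => (y.2.2.2, y.2.2.1, y.1, y.2.1),
     fun y => (y.2.2.1, y.2.2.2, y.2.1, y.1),
     fun ⟨a,b,c,d⟩ => rfl, fun ⟨a,b,c,d⟩ => rfl⟩ _ _ ?_
  rintro ⟨a,b,c,d⟩
  show (B a b * (B c d * ε (x * e a * e c))) • f (e d) (e b)
      = (B d c * (B a b * ε (e c * x * e a))) • f (e d) (e b)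
  have hε : ε (e c * x * e a) = ε (x * e a * e c) := by
    rw [mul_assoc]; exact (hsym (x * e a) (e c)).symm
  rw [hε, hBs d c]; ring_nf

lemma aux_keyII (ε : A →ₗ[k] k) (hsym : ∀ x y, ε (x * y) = ε (y * x))
    (e : Module.Basis ι k A) (B : Matrix ι ι k)
    (hB1 : Matrix.of (fun a b => ε (e a * e b)) * B = 1)
    (hB2 : B * Matrix.of (fun a b => ε (e a * e b)) = 1)
    (st : A → A)
    (hanti : ∀ a b, st (a * b) = st b * st a)
    (hstε : ∀ a, ε (st a) = ε a)
    (f : A →ₗ[k] A →ₗ[k] A) :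
    ∑ a, ∑ b, B a b • f (st (e a)) (st (e b)) = ∑ a, ∑ b, B a b • f (e a) (e b) := by
  set G := Matrix.of (fun a b => ε (e a * e b)) with hGdef
  set M : Matrix ι ι k := Matrix.of (fun a c => e.repr (st (e a)) c) with hMdef
  have hM : ∀ a, st (e a) = ∑ c, M a c • e c := fun a => (e.sum_repr (st (e a))).symm
  have hGram : M * G * Matrix.transpose M = G := by
    ext a b
    have h1 : ε (st (e a) * st (e b)) = ε (e a * e b) := by
      rw [← hanti (e b) (e a), hstε, hsym]
    have h2 : ε (st (e a) * st (e b)) = ∑ c, ∑ d, M a c * ε (e c * e d) * M b d := by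
      rw [hM a, hM b]
      simp only [Finset.sum_mul, Finset.mul_sum, smul_mul_assoc, mul_smul_comm, map_sum,
        map_smul, smul_eq_mul]
      rw [Finset.sum_comm]
      exact Finset.sum_congr rfl fun c _ => Finset.sum_congr rfl fun d _ => by ring
    have h3 : (M * G * Matrix.transpose M) a b = ∑ d, ∑ c, M a c * ε (e c * e d) * M b d := by
      simp [Matrix.mul_apply, Matrix.transpose_apply, hGdef, Finset.sum_mul]
    rw [h3, Finset.sum_comm, ← h2, h1]
    rfl
  have hA : (B * M * G) * Matrix.transpose M = 1 := by
    have h : B * (M * G * Matrix.transpose M) = 1 := by rw [hGram, hB2]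
    rw [← Matrix.mul_assoc, ← Matrix.mul_assoc] at h
    exact h
  have hcomm : Matrix.transpose M * (B * M * G) = 1 := mul_eq_one_comm.mp hA
  have hMBM : Matrix.transpose M * B * M = B := by
    have h3 : Matrix.transpose M * B * M * G = 1 := by
      rw [Matrix.mul_assoc, Matrix.mul_assoc, ← Matrix.mul_assoc B M G]
      exact hcomm
    calc Matrix.transpose M * B * M
        = Matrix.transpose M * B * M * (G * B) := by rw [hB1, Matrix.mul_one]
      _ = (Matrix.transpose M * B * M * G) * B := (Matrix.mul_assoc _ _ _).symm
      _ = B := by rw [h3, Matrix.one_mul]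
  have h4 : ∑ a, ∑ b, B a b • f (st (e a)) (st (e b))
      = ∑ c, ∑ d, (Matrix.transpose M * B * M) c d • f (e c) (e d) := by
    simp only [hM]
    simp only [map_sum, map_smul, LinearMap.sum_apply, LinearMap.smul_apply,
      Finset.smul_sum, smul_smul]
    have h5 : ∀ c d, (Matrix.transpose M * B * M) c d = ∑ a, ∑ b, M a c * B a b * M b d := by
      intro c d
      simp [Matrix.mul_apply, Matrix.transpose_apply, Finset.sum_mul]
      rw [Finset.sum_comm]
    simp only [h5, Finset.sum_smul]
    rw [aux_sum4, aux_sum4]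
    refine Fintype.sum_equiv
      ⟨fun y => (y.2.2.2, y.2.2.1, y.1, y.2.1),
       fun y => (y.2.2.1, y.2.2.2, y.2.1, y.1),
       fun ⟨a,b,c,d⟩ => rfl, fun ⟨a,b,c,d⟩ => rfl⟩ _ _ ?_
    rintro ⟨a,b,c,d⟩
    show (B a b * (M b c * M a d)) • f (e d) (e c)
        = (M a d * B a b * M b c) • f (e d) (e c)
    congr 1
    ring
  rw [h4, hMBM]

end Aux


/-- For a finite-dimensional algebra `A` over a field `k` with symmetric
nondegenerate Frobenius form `ε`, special element condition `R·Σ B^{ab}·eₐ·e_b = 1`, and a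
`k`-linear involution `*` with `ε ∘ * = ε`, the element `w = Σ B^{ab}·eₐ·(e_b)*` is central
and satisfies `w·z = w³`, where `z = Σ B^{ac}·B^{bd}·eₐ·e_b·e_c·e_d`. -/
theorem statement7 (k : Type) [Field k] (A : Type) [Ring A] [Algebra k A]
    [FiniteDimensional k A]
    (ε : A →ₗ[k] k)
    (hnd : ∀ x, (∀ y, ε (x * y) = 0) → x = 0)
    (hsym : ∀ x y, ε (x * y) = ε (y * x))
    (ι : Type) [Fintype ι] [DecidableEq ι] (e : Module.Basis ι k A) (B : Matrix ι ι k)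
    (hB1 : Matrix.of (fun a b => ε (e a * e b)) * B = 1)
    (hB2 : B * Matrix.of (fun a b => ε (e a * e b)) = 1)
    (R : k) (hR : R ≠ 0)
    (hspecial : R • (∑ a, ∑ b, B a b • (e a * e b)) = 1)
    (st : A → A) (hlin : IsLinearMap k st)
    (hanti : ∀ a b, st (a * b) = st b * st a)
    (hinvol : ∀ a, st (st a) = a)
    (hstε : ∀ a, ε (st a) = ε a) :
    (∀ a, (∑ p, ∑ q, B p q • (e p * st (e q))) * a
        = a * (∑ p, ∑ q, B p q • (e p * st (e q)))) ∧
    (∑ p, ∑ q, B p q • (e p * st (e q))) *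
        (∑ a, ∑ b, ∑ c, ∑ d, (B a c * B b d) • (e a * e b * e c * e d))
      = (∑ p, ∑ q, B p q • (e p * st (e q))) ^ 3 := by
  have hBs := aux_Bsym ε hsym e B hB1 hB2
  set stL : A →ₗ[k] A := IsLinearMap.mk' st hlin with hstL
  set mulLM := LinearMap.mul k A with hmulLM
  set w : A := ∑ p, ∑ q, B p q • (e p * st (e q)) with hw
  set z : A := ∑ a, ∑ b, ∑ c, ∑ d, (B a c * B b d) • (e a * e b * e c * e d) with hz
  set C : A → A := fun y => ∑ a, ∑ b, B a b • (e a * y * e b) with hCdef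
  set CL : A →ₗ[k] A :=
    ∑ a, ∑ b, B a b • ((LinearMap.mulRight k (e b)).comp (LinearMap.mulLeft k (e a)))
    with hCLdef
  have hCL : ∀ y, CL y = C y := by
    intro y
    rw [hCLdef, hCdef]
    simp [LinearMap.sum_apply, LinearMap.smul_apply, mul_assoc]
  -- instance lemmas of keyI
  have K1 : ∀ x : A, ∑ a, ∑ b, B a b • ((x * e a) * st (e b))
      = ∑ a, ∑ b, B a b • (e a * st (e b * x)) := by
    intro x
    have h := aux_keyI ε hsym e B hB1 hB2 (mulLM.compl₂ stL) x
    simpa [hmulLM, hstL] using h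
  have K2 : ∀ x : A, ∑ a, ∑ b, B a b • (st (x * e a) * e b)
      = ∑ a, ∑ b, B a b • (st (e a) * (e b * x)) := by
    intro x
    have h := aux_keyI ε hsym e B hB1 hB2 (mulLM.comp stL) x
    simpa [hmulLM, hstL] using h
  have K3 : ∀ x y : A, ∑ a, ∑ b, B a b • ((x * e a) * y * e b)
      = ∑ a, ∑ b, B a b • ((e a * y) * (e b * x)) := by
    intro x y
    have h := aux_keyI ε hsym e B hB1 hB2 (mulLM.comp (LinearMap.mulRight k y)) x
    simpa [hmulLM, hstL, mul_assoc] using h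
  -- instance lemmas of keyII
  have J1 : ∑ a, ∑ b, B a b • (st (e a) * e b) = w := by
    have h := aux_keyII ε hsym e B hB1 hB2 st hanti hstε (mulLM.compl₂ stL)
    rw [hw]
    simpa [hmulLM, hstL, hinvol] using h
  have J2 : ∀ x : A, ∑ a, ∑ b, B a b • ((e a * st x) * st (e b))
      = ∑ a, ∑ b, B a b • ((st (e a) * st x) * e b) := by
    intro x
    have h := aux_keyII ε hsym e B hB1 hB2 st hanti hstε
      (mulLM.comp ((LinearMap.mulRight k (st x)).comp stL))
    simpa [hmulLM, hstL, hinvol] using h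
  have J3 : ∀ c : A, ∑ a, ∑ b, B a b • ((st (e a) * c) * st (e b))
      = ∑ a, ∑ b, B a b • ((e a * c) * e b) := by
    intro c
    have h := aux_keyII ε hsym e B hB1 hB2 st hanti hstε
      (mulLM.comp (LinearMap.mulRight k c))
    simpa [hmulLM, hstL] using h
  have J4 : ∑ a, ∑ b, B a b • (C (st (e a)) * st (e b))
      = ∑ a, ∑ b, B a b • (C (e a) * e b) := by
    have h := aux_keyII ε hsym e B hB1 hB2 st hanti hstε (mulLM.comp CL)
    simpa [hmulLM, hstL, hCL] using h
  -- w is central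
  have hwc : ∀ x : A, x * w = w * x := by
    intro x
    calc x * w = ∑ a, ∑ b, B a b • ((x * e a) * st (e b)) := by
          rw [hw, aux_mul_dsum]
          exact aux_dsum_congr _ _ _ fun a b => (mul_assoc _ _ _).symm
      _ = ∑ a, ∑ b, B a b • (e a * st (e b * x)) := K1 x
      _ = ∑ a, ∑ b, B a b • ((e a * st x) * st (e b)) := by
          refine aux_dsum_congr _ _ _ fun a b => ?_
          rw [hanti, ← mul_assoc]
      _ = ∑ a, ∑ b, B a b • ((st (e a) * st x) * e b) := J2 x
      _ = ∑ a, ∑ b, B a b • (st (e a) * (e b * x)) := by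
          rw [← K2 x]
          refine aux_dsum_congr _ _ _ fun a b => ?_
          rw [hanti, mul_assoc]  -- goal direction check
      _ = (∑ a, ∑ b, B a b • (st (e a) * e b)) * x := by
          rw [aux_dsum_mul]
          exact aux_dsum_congr _ _ _ fun a b => (mul_assoc _ _ _).symm
      _ = w * x := by rw [J1]
  refine ⟨fun a => (hwc a).symm, ?_⟩
  -- C y is central
  have hCc : ∀ y x : A, x * C y = C y * x := by
    intro y x
    calc x * C y = ∑ a, ∑ b, B a b • ((x * e a) * y * e b) := by
          rw [hCdef, aux_mul_dsum]
          refine aux_dsum_congr _ _ _ fun a b => ?_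
          rw [← mul_assoc, ← mul_assoc]
      _ = ∑ a, ∑ b, B a b • ((e a * y) * (e b * x)) := K3 x y
      _ = C y * x := by
          rw [hCdef, aux_dsum_mul]
          exact aux_dsum_congr _ _ _ fun a b => (mul_assoc _ _ _).symm
  -- L1
  have L1 : ∀ y : A, w * st y
      = ∑ p, ∑ q, B p q • (e p * (y * st (e q))) := by
    intro y
    calc w * st y = st y * w := (hwc (st y)).symm
      _ = ∑ a, ∑ b, B a b • ((st y * e a) * st (e b)) := by
          rw [hw, aux_mul_dsum]
          exact aux_dsum_congr _ _ _ fun a b => (mul_assoc _ _ _).symm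
      _ = ∑ a, ∑ b, B a b • (e a * st (e b * st y)) := K1 (st y)
      _ = ∑ p, ∑ q, B p q • (e p * (y * st (e q))) := by
          refine aux_dsum_congr _ _ _ fun a b => ?_
          rw [hanti, hinvol]
  -- st of double sums
  have st_dsum : ∀ t : ι → ι → A,
      st (∑ a, ∑ b, B a b • t a b) = ∑ a, ∑ b, B a b • st (t a b) := by
    intro t
    show stL (∑ a, ∑ b, B a b • t a b) = _
    rw [map_sum]
    refine Finset.sum_congr rfl fun a _ => ?_
    rw [map_sum]
    refine Finset.sum_congr rfl fun b _ => ?_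
    rw [map_smul]
    rfl
  -- L2
  have L2 : ∀ y : A, st (C y) = C (st y) := by
    intro y
    calc st (C y) = ∑ a, ∑ b, B a b • st (e a * y * e b) := by
          rw [hCdef]; exact st_dsum _
      _ = ∑ a, ∑ b, B a b • ((st (e b) * st y) * st (e a)) := by
          refine aux_dsum_congr _ _ _ fun a b => ?_
          rw [hanti, hanti]
          exact (mul_assoc _ _ _).symm
      _ = ∑ a, ∑ b, B a b • ((st (e a) * st y) * st (e b)) := by
          rw [Finset.sum_comm]
          refine Finset.sum_congr rfl fun a _ => Finset.sum_congr rfl fun b _ => ?_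
          rw [hBs a b]
      _ = ∑ a, ∑ b, B a b • ((e a * st y) * e b) := J3 (st y)
      _ = C (st y) := by rw [hCdef]
  -- L5 : z in terms of C
  have L5 : z = ∑ c, ∑ d, B c d • (C (e c) * e d) := by
    have hR : ∑ c, ∑ d, B c d • (C (e c) * e d)
        = ∑ c, ∑ d, ∑ a, ∑ b, (B c d * B a b) • ((e a * e c * e b) * e d) := by
      rw [← aux_flatten]
      refine aux_dsum_congr _ _ _ fun c d => ?_
      rw [hCdef]
      rw [aux_dsum_mul]
    rw [hz, hR, aux_sum4, aux_sum4]
    refine Fintype.sum_equiv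
      ⟨fun y => (y.2.1, y.2.2.2, y.1, y.2.2.1),
       fun y => (y.2.2.1, y.1, y.2.2.2, y.2.1),
       fun ⟨a,b,c,d⟩ => rfl, fun ⟨a,b,c,d⟩ => rfl⟩ _ _ ?_
    rintro ⟨a,b,c,d⟩
    show (B a c * B b d) • (e a * e b * e c * e d)
        = (B b d * B a c) • ((e a * e b * e c) * e d)
    congr 1
    ring
  -- L6 : st z = z
  have L6 : st z = z := by
    calc st z = ∑ c, ∑ d, B c d • st (C (e c) * e d) := by
          rw [L5]; exact st_dsum _
      _ = ∑ c, ∑ d, B c d • (st (e d) * st (C (e c))) := by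
          exact aux_dsum_congr _ _ _ fun c d => by rw [hanti]
      _ = ∑ c, ∑ d, B c d • (C (st (e c)) * st (e d)) := by
          refine aux_dsum_congr _ _ _ fun c d => ?_
          rw [L2, hCc]
      _ = ∑ c, ∑ d, B c d • (C (e c) * e d) := J4
      _ = z := L5.symm
  -- L3 : w * w
  have L3 : w * w = ∑ c, ∑ d, B c d • (C (e c) * st (e d)) := by
    have h1 : w * w = ∑ a, ∑ b, ∑ c, ∑ d,
        (B a b * B c d) • (e a * (e c * (e b * st (e d)))) := by
      calc w * w = ∑ a, ∑ b, B a b • ((e a * st (e b)) * w) := by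
            conv_lhs => rw [hw]
            rw [aux_dsum_mul]
        _ = ∑ a, ∑ b, B a b • (e a * (w * st (e b))) := by
            refine aux_dsum_congr _ _ _ fun a b => ?_
            rw [mul_assoc, hwc (st (e b))]
        _ = ∑ a, ∑ b, B a b • (∑ c, ∑ d, B c d • (e a * (e c * (e b * st (e d))))) := by
            refine aux_dsum_congr _ _ _ fun a b => ?_
            rw [L1 (e b), aux_mul_dsum]
        _ = _ := aux_flatten _ _
    have h2 : ∑ c, ∑ d, B c d • (C (e c) * st (e d))
        = ∑ c, ∑ d, ∑ a, ∑ b, (B c d * B a b) • ((e a * e c * e b) * st (e d)) := by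
      rw [← aux_flatten]
      refine aux_dsum_congr _ _ _ fun c d => ?_
      rw [hCdef, aux_dsum_mul]
    rw [h1, h2, aux_sum4, aux_sum4]
    refine Fintype.sum_equiv
      ⟨fun y => (y.2.2.1, y.2.2.2, y.1, y.2.1),
       fun y => (y.2.2.1, y.2.2.2, y.1, y.2.1),
       fun ⟨a,b,c,d⟩ => rfl, fun ⟨a,b,c,d⟩ => rfl⟩ _ _ ?_
    rintro ⟨a,b,c,d⟩
    show (B a b * B c d) • (e a * (e c * (e b * st (e d))))
        = (B c d * B a b) • ((e a * e c * e b) * st (e d))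
    rw [mul_assoc (e a * e c), mul_assoc (e a)]
    congr 1
    ring
  -- final
  have hw3 : w ^ 3 = w * z := by
    have hww : w ^ 3 = (w * w) * w := by
      rw [pow_succ, pow_two]
    calc w ^ 3 = (∑ c, ∑ d, B c d • (C (e c) * st (e d))) * w := by rw [hww, L3]
      _ = ∑ c, ∑ d, B c d • (C (e c) * (w * st (e d))) := by
          rw [aux_dsum_mul]
          refine aux_dsum_congr _ _ _ fun c d => ?_
          rw [mul_assoc, hwc (st (e d))]
      _ = ∑ c, ∑ d, ∑ p, ∑ q, (B c d * B p q) • (e p * ((C (e c) * e d) * st (e q))) := by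
          rw [← aux_flatten]
          refine aux_dsum_congr _ _ _ fun c d => ?_
          rw [L1 (e d), aux_mul_dsum]
          refine aux_dsum_congr _ _ _ fun p q => ?_
          calc C (e c) * (e p * (e d * st (e q)))
              = (C (e c) * e p) * (e d * st (e q)) := by rw [mul_assoc]
            _ = (e p * C (e c)) * (e d * st (e q)) := by rw [hCc (e c) (e p)]
            _ = e p * ((C (e c) * e d) * st (e q)) := by
                rw [mul_assoc, ← mul_assoc (C (e c))]
      _ = ∑ p, ∑ q, B p q • (∑ c, ∑ d, B c d • (e p * ((C (e c) * e d) * st (e q)))) := by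
          rw [aux_flatten]
          rw [aux_sum4, aux_sum4]
          refine Fintype.sum_equiv
            ⟨fun y => (y.2.2.1, y.2.2.2, y.1, y.2.1),
             fun y => (y.2.2.1, y.2.2.2, y.1, y.2.1),
             fun ⟨a,b,c,d⟩ => rfl, fun ⟨a,b,c,d⟩ => rfl⟩ _ _ ?_
          rintro ⟨c,d,p,q⟩
          show (B c d * B p q) • (e p * ((C (e c) * e d) * st (e q)))
              = (B p q * B c d) • (e p * ((C (e c) * e d) * st (e q)))
          congr 1
          ring
      _ = ∑ p, ∑ q, B p q • (e p * (z * st (e q))) := by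
          refine aux_dsum_congr _ _ _ fun p q => ?_
          rw [L5]
          rw [aux_dsum_mul, aux_mul_dsum]
      _ = w * st z := (L1 z).symm
      _ = w * z := by rw [L6]
  rw [hw3]
end

section
/- Let k be a field, A a finite-dimensional associative unital k-algebra, and ε : A → k a k-linear functional such that the bilinear form (x,y) ↦ ε(x·y) is nondegenerate and symmetric (ε(x·y) = ε(y·x) for all x,y). Fix a basis {e_a} of A and let (B^{ab}) be the inverse of the matrix (ε(e_a·e_b))_{a,b}. Then for every x ∈ A, the element p(x) := Σ_{a,b} B^{ab}·e_a·x·e_b lies in the center of A. -/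
/-- For a finite-dimensional algebra `A` over a field `k` with symmetric
nondegenerate Frobenius form `ε`, a basis `{eₐ}` and `(B^{ab})` the inverse of
`(ε(eₐ·e_b))`, the element `p(x) = Σ B^{ab}·eₐ·x·e_b` is central (commutes with every
element of `A`) for every `x`. -/
theorem statement9 (k : Type) [Field k] (A : Type) [Ring A] [Algebra k A]
    [FiniteDimensional k A]
    (ε : A →ₗ[k] k)
    (hnd : ∀ x, (∀ y, ε (x * y) = 0) → x = 0)
    (hsym : ∀ x y, ε (x * y) = ε (y * x))
    (ι : Type) [Fintype ι] [DecidableEq ι] (e : Module.Basis ι k A) (B : Matrix ι ι k)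
    (hB1 : Matrix.of (fun a b => ε (e a * e b)) * B = 1)
    (hB2 : B * Matrix.of (fun a b => ε (e a * e b)) = 1) :
    ∀ x : A, ∀ y : A,
      (∑ a, ∑ b, B a b • (e a * x * e b)) * y = y * (∑ a, ∑ b, B a b • (e a * x * e b)) := by
  classical
  intro x y
  set G : Matrix ι ι k := Matrix.of (fun a b => ε (e a * e b)) with hG
  -- symmetry of G
  have hGsym : G.transpose = G := by
    ext a b
    simp only [Matrix.transpose_apply, hG, Matrix.of_apply]
    exact hsym _ _
  -- symmetry of B
  have hBsymM : B.transpose = B := by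
    have h1 : B.transpose * G = 1 := by
      have h := congrArg Matrix.transpose hB1
      rw [Matrix.transpose_mul, Matrix.transpose_one, hGsym] at h
      exact h
    calc B.transpose = B.transpose * (G * B) := by rw [hB1, mul_one]
      _ = (B.transpose * G) * B := by rw [mul_assoc]
      _ = B := by rw [h1, one_mul]
  have hBsym : ∀ a b, B a b = B b a := by
    intro a b
    have := congrFun (congrFun hBsymM b) a
    rwa [Matrix.transpose_apply] at this
  -- key orthogonality relations
  have key1 : ∀ c c', ∑ d, B c d * ε (e c' * e d) = if c = c' then 1 else 0 := by
    intro c c'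
    have h := congrFun (congrFun hB2 c) c'
    rw [Matrix.mul_apply] at h
    rw [Matrix.one_apply] at h
    rw [← h]
    refine Finset.sum_congr rfl fun d _ => ?_
    rw [hG]
    simp only [Matrix.of_apply]
    rw [hsym]
  have key2 : ∀ d d', ∑ c, B c d * ε (e c * e d') = if d' = d then 1 else 0 := by
    intro d d'
    have h := congrFun (congrFun hB1 d') d
    rw [Matrix.mul_apply] at h
    rw [Matrix.one_apply] at h
    rw [← h]
    rw [hG]
    refine Finset.sum_congr rfl fun c _ => ?_
    simp only [Matrix.of_apply]
    rw [hsym, mul_comm]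
  -- expansion of ε-values
  have hεu : ∀ (u : A) d, ε (u * e d) = ∑ c', e.repr u c' * ε (e c' * e d) := by
    intro u d
    conv_lhs => rw [← e.sum_repr u]
    rw [Finset.sum_mul, map_sum]
    refine Finset.sum_congr rfl fun c' _ => ?_
    rw [smul_mul_assoc, map_smul, smul_eq_mul]
  have hεu' : ∀ (u : A) c, ε (e c * u) = ∑ d', e.repr u d' * ε (e c * e d') := by
    intro u c
    conv_lhs => rw [← e.sum_repr u]
    rw [Finset.mul_sum, map_sum]
    refine Finset.sum_congr rfl fun d' _ => ?_
    rw [mul_smul_comm, map_smul, smul_eq_mul]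
  -- the two reproducing expansions
  have repA : ∀ u : A, ∑ c, (∑ d, B c d * ε (u * e d)) • e c = u := by
    intro u
    have h1 : ∀ c, (∑ d, B c d * ε (u * e d)) = e.repr u c := by
      intro c
      calc ∑ d, B c d * ε (u * e d)
          = ∑ d, ∑ c', B c d * (e.repr u c' * ε (e c' * e d)) := by
            simp only [hεu u, Finset.mul_sum]
        _ = ∑ c', e.repr u c' * ∑ d, B c d * ε (e c' * e d) := by
            rw [Finset.sum_comm]
            refine Finset.sum_congr rfl fun c' _ => ?_
            rw [Finset.mul_sum]
            refine Finset.sum_congr rfl fun d _ => by ring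
        _ = ∑ c', e.repr u c' * (if c = c' then 1 else 0) := by
            simp only [key1]
        _ = e.repr u c := by simp
    simp only [h1]
    exact e.sum_repr u
  have repB : ∀ u : A, ∑ d, (∑ c, B c d * ε (e c * u)) • e d = u := by
    intro u
    have h1 : ∀ d, (∑ c, B c d * ε (e c * u)) = e.repr u d := by
      intro d
      calc ∑ c, B c d * ε (e c * u)
          = ∑ c, ∑ d', B c d * (e.repr u d' * ε (e c * e d')) := by
            simp only [hεu' u, Finset.mul_sum]
        _ = ∑ d', e.repr u d' * ∑ c, B c d * ε (e c * e d') := by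
            rw [Finset.sum_comm]
            refine Finset.sum_congr rfl fun d' _ => ?_
            rw [Finset.mul_sum]
            refine Finset.sum_congr rfl fun c _ => by ring
        _ = ∑ d', e.repr u d' * (if d' = d then 1 else 0) := by
            simp only [key2]
        _ = e.repr u d := by simp
    simp only [h1]
    exact e.sum_repr u
  -- expand both sides into quadruple sums
  have hLHS : (∑ a, ∑ b, B a b • (e a * x * e b)) * y
      = ∑ a, ∑ b, ∑ c, ∑ d,
          (B a b * (B c d * ε (e b * y * e d))) • (e a * x * e c) := by
    rw [Finset.sum_mul]
    refine Finset.sum_congr rfl fun a _ => ?_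
    rw [Finset.sum_mul]
    refine Finset.sum_congr rfl fun b _ => ?_
    rw [smul_mul_assoc, mul_assoc (e a * x) (e b) y]
    conv_lhs => rw [← repA (e b * y)]
    rw [Finset.mul_sum, Finset.smul_sum]
    refine Finset.sum_congr rfl fun c _ => ?_
    rw [mul_smul_comm, smul_smul, Finset.mul_sum, Finset.sum_smul]
  have hRHS : y * (∑ a, ∑ b, B a b • (e a * x * e b))
      = ∑ c, ∑ d, ∑ a, ∑ b,
          (B c d * (B b a * ε (e b * y * e c))) • (e a * x * e d) := by
    rw [Finset.mul_sum]
    refine Finset.sum_congr rfl fun c _ => ?_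
    rw [Finset.mul_sum]
    refine Finset.sum_congr rfl fun d _ => ?_
    rw [mul_smul_comm, ← mul_assoc, ← mul_assoc]
    conv_lhs => rw [← repB (y * e c)]
    rw [Finset.sum_mul, Finset.sum_mul, Finset.smul_sum]
    refine Finset.sum_congr rfl fun a _ => ?_
    rw [smul_mul_assoc, smul_mul_assoc, smul_smul, Finset.mul_sum, Finset.sum_smul]
    simp only [mul_assoc]
  rw [hLHS, hRHS]
  -- flatten to sums over the product type and reindex
  rw [show (∑ a, ∑ b, ∑ c, ∑ d,
        (B a b * (B c d * ε (e b * y * e d))) • (e a * x * e c))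
      = ∑ p : ι × ι × ι × ι,
        (B p.1 p.2.1 * (B p.2.2.1 p.2.2.2 * ε (e p.2.1 * y * e p.2.2.2))) •
          (e p.1 * x * e p.2.2.1) by
    rw [Fintype.sum_prod_type]
    refine Finset.sum_congr rfl fun a _ => ?_
    rw [Fintype.sum_prod_type]
    refine Finset.sum_congr rfl fun b _ => ?_
    rw [Fintype.sum_prod_type]]
  rw [show (∑ c, ∑ d, ∑ a, ∑ b,
        (B c d * (B b a * ε (e b * y * e c))) • (e a * x * e d))
      = ∑ p : ι × ι × ι × ι,
        (B p.1 p.2.1 * (B p.2.2.2 p.2.2.1 * ε (e p.2.2.2 * y * e p.1))) •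
          (e p.2.2.1 * x * e p.2.1) by
    rw [Fintype.sum_prod_type]
    refine Finset.sum_congr rfl fun c _ => ?_
    rw [Fintype.sum_prod_type]
    refine Finset.sum_congr rfl fun d _ => ?_
    rw [Fintype.sum_prod_type]]
  refine Fintype.sum_equiv
    ⟨fun p => (p.2.2.2, p.2.2.1, p.1, p.2.1),
     fun p => (p.2.2.1, p.2.2.2, p.2.1, p.1),
     fun p => rfl, fun p => rfl⟩ _ _ ?_
  rintro ⟨a, b, c, d⟩
  simp only [Equiv.coe_fn_mk]
  congr 1
  rw [hBsym d c, hBsym b a]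
  ring
end

section
/- A special Frobenius algebra is separable: let k be a field, A a finite-dimensional associative unital k-algebra, and ε : A → k a k-linear functional such that the bilinear form (x,y) ↦ ε(x·y) is nondegenerate; fix a basis {e_a} of A, let (B^{ab}) be the inverse of the matrix (ε(e_a·e_b))_{a,b}, and assume there is R ∈ k, R ≠ 0, with R·Σ_{a,b} B^{ab}·e_a·e_b = 1. Then there exists t ∈ A ⊗_k A such that (x ⊗ 1)·t = t·(1 ⊗ x) for all x ∈ A (multiplication taken in the tensor-product algebra A ⊗_k A) and μ(t) = 1, where μ : A ⊗_k A → A is the linear map induced by multiplication. -/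
open scoped TensorProduct

/-- A special Frobenius algebra is separable: there exists `t ∈ A ⊗ A` with
`(x ⊗ 1)·t = t·(1 ⊗ x)` for all `x` and `μ(t) = 1`. -/
theorem statement10 (k : Type) [Field k] (A : Type) [Ring A] [Algebra k A]
    [FiniteDimensional k A]
    (ε : A →ₗ[k] k)
    (hnd : ∀ x, (∀ y, ε (x * y) = 0) → x = 0)
    (ι : Type) [Fintype ι] [DecidableEq ι] (e : Module.Basis ι k A) (B : Matrix ι ι k)
    (hB1 : Matrix.of (fun a b => ε (e a * e b)) * B = 1)
    (hB2 : B * Matrix.of (fun a b => ε (e a * e b)) = 1)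
    (R : k) (hR : R ≠ 0)
    (hspecial : R • (∑ a, ∑ b, B a b • (e a * e b)) = 1) :
    ∃ t : A ⊗[k] A,
      (∀ x : A, (x ⊗ₜ[k] (1 : A)) * t = t * ((1 : A) ⊗ₜ[k] x)) ∧
      LinearMap.mul' k A t = 1 := by
  set f : ι → A := fun j => ∑ a, B a j • e a with hf
  -- f is the right dual basis: ε (e c * f j) = δ_{cj}
  have lemA : ∀ c j, ε (e c * f j) = if c = j then 1 else 0 := by
    intro c j
    have h := congrFun (congrFun hB1 c) j
    simp only [Matrix.mul_apply, Matrix.of_apply, Matrix.one_apply] at h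
    rw [hf]
    simp only [Finset.mul_sum, mul_smul_comm, map_sum, map_smul, smul_eq_mul]
    rw [← h]
    exact Finset.sum_congr rfl fun a _ => mul_comm _ _
  -- ε (y * f j) picks out the j-th coordinate of y
  have lemB : ∀ (y : A) (j : ι), ε (y * f j) = e.repr y j := by
    intro y j
    conv_lhs => rw [← e.sum_repr y]
    rw [Finset.sum_mul]
    simp only [smul_mul_assoc, map_sum, map_smul, smul_eq_mul, lemA]
    simp
  -- reproducing identity: ∑ i, ε (e i * y) • f i = y
  have lemC : ∀ y : A, (∑ i, ε (e i * y) • f i) = y := by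
    intro y
    refine e.ext_elem fun a => ?_
    rw [map_sum]
    simp only [map_smul, Finsupp.coe_finset_sum, Finset.sum_apply, Finsupp.smul_apply,
      smul_eq_mul]
    have hrf : ∀ i, e.repr (f i) a = B a i := by
      intro i
      rw [hf]
      simp [Module.Basis.repr_self, Finsupp.single_apply]
    have hε : ∀ i, ε (e i * y) = ∑ j, ε (e i * e j) * e.repr y j := by
      intro i
      conv_lhs => rw [← e.sum_repr y]
      rw [Finset.mul_sum]
      simp [mul_smul_comm, mul_comm]
    calc (∑ i, ε (e i * y) * e.repr (f i) a)
        = ∑ i, ∑ j, B a i * ε (e i * e j) * e.repr y j := by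
          refine Finset.sum_congr rfl fun i _ => ?_
          rw [hrf, hε, Finset.sum_mul]
          refine Finset.sum_congr rfl fun j _ => by ring
      _ = ∑ j, (∑ i, B a i * ε (e i * e j)) * e.repr y j := by
          rw [Finset.sum_comm]
          exact Finset.sum_congr rfl fun j _ => (Finset.sum_mul _ _ _).symm
      _ = e.repr y a := by
          have h2 : ∀ j, (∑ i, B a i * ε (e i * e j)) = if a = j then 1 else 0 := by
            intro j
            have h := congrFun (congrFun hB2 a) j
            simpa [Matrix.mul_apply, Matrix.one_apply] using h
          simp [h2]
  -- the Casimir property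
  have key : ∀ x : A, (∑ i, (x * f i) ⊗ₜ[k] e i) = ∑ i, f i ⊗ₜ[k] (e i * x) := by
    intro x
    calc (∑ j, (x * f j) ⊗ₜ[k] e j)
        = ∑ j, (∑ i, ε (e i * (x * f j)) • f i) ⊗ₜ[k] e j := by
          exact Finset.sum_congr rfl fun j _ => by rw [lemC (x * f j)]
      _ = ∑ j, ∑ i, ε (e i * (x * f j)) • (f i ⊗ₜ[k] e j) := by
          simp [TensorProduct.sum_tmul, TensorProduct.smul_tmul']
      _ = ∑ i, ∑ j, ε (e i * (x * f j)) • (f i ⊗ₜ[k] e j) := by rw [Finset.sum_comm]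
      _ = ∑ i, f i ⊗ₜ[k] (∑ j, ε (e i * (x * f j)) • e j) := by
          simp [TensorProduct.tmul_sum, TensorProduct.tmul_smul]
      _ = ∑ i, f i ⊗ₜ[k] (e i * x) := by
          refine Finset.sum_congr rfl fun i _ => ?_
          congr 1
          have h : ∀ j, ε (e i * (x * f j)) = e.repr (e i * x) j := fun j => by
            rw [← mul_assoc, lemB]
          simp_rw [h]
          exact e.sum_repr (e i * x)
  -- μ(t) = 1
  have hmu : (∑ i, f i * e i) = ∑ a, ∑ b, B a b • (e a * e b) := by
    rw [Finset.sum_comm]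
    refine Finset.sum_congr rfl fun i _ => ?_
    rw [hf, Finset.sum_mul]
    simp [smul_mul_assoc]
  refine ⟨R • ∑ i, f i ⊗ₜ[k] e i, fun x => ?_, ?_⟩
  · rw [mul_smul_comm, smul_mul_assoc, Finset.mul_sum, Finset.sum_mul]
    congr 1
    calc (∑ i, x ⊗ₜ[k] (1 : A) * f i ⊗ₜ[k] e i)
        = ∑ i, (x * f i) ⊗ₜ[k] e i := by
          simp [Algebra.TensorProduct.tmul_mul_tmul]
      _ = ∑ i, f i ⊗ₜ[k] (e i * x) := key x
      _ = ∑ i, f i ⊗ₜ[k] e i * (1 : A) ⊗ₜ[k] x := by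
          simp [Algebra.TensorProduct.tmul_mul_tmul]
  · rw [map_smul, map_sum]
    simp_rw [LinearMap.mul'_apply]
    rw [hmu]
    exact hspecial
end

section
/- Let N ≥ 1, n : Fin N → ℕ with nᵢ ≥ 1, and A = ⊕_{i=1}^{N} M_{n_i}(ℂ). Let ε : A → ℂ be a ℂ-linear functional such that the bilinear form (a,b) ↦ ε(a·b) is nondegenerate. Then there exist invertible matrices x_i ∈ M_{n_i}(ℂ) such that ε(a) = Σ_{i=1}^{N} Tr(x_i·a_i) for all a ∈ A, and these x_i are unique. Moreover, for R ∈ ℂ with R ≠ 0 and any basis {e_a} of A with (B^{ab}) the inverse of the matrix (ε(e_a·e_b))_{a,b}, one has R·Σ_{a,b} B^{ab}·e_a·e_b = 1 if and only if R·Tr(x_i⁻¹) = 1 for every i. -/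
section
variable {N : ℕ} {n : Fin N → ℕ}

open Matrix in
private lemma trE' {m : ℕ} (X M : Matrix (Fin m) (Fin m) ℂ) :
    (X * M).trace = ∑ j, ∑ k, M j k * X k j := by
  rw [Finset.sum_comm]
  simp [Matrix.trace, Matrix.diag, Matrix.mul_apply, mul_comm]

open Matrix in
private lemma trS' {m : ℕ} (M : Matrix (Fin m) (Fin m) ℂ) (j k : Fin m) :
    (M * Matrix.single j k 1).trace = M k j := by
  simp [Matrix.trace, Matrix.diag, Matrix.mul_apply, Matrix.single, Matrix.of_apply,
    ite_and, Finset.sum_ite_eq, Finset.sum_ite_eq']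

private lemma singleMul' (u : ∀ i, Matrix (Fin (n i)) (Fin (n i)) ℂ) (i : Fin N)
    (m : Matrix (Fin (n i)) (Fin (n i)) ℂ) :
    Pi.single i m * u = Pi.single i (m * u i) := by
  funext i'
  rcases eq_or_ne i' i with h | h
  · subst h; simp
  · simp [Pi.single_eq_of_ne h]

private lemma sumTraceSingle' (x : ∀ i, Matrix (Fin (n i)) (Fin (n i)) ℂ) (i : Fin N)
    (m : Matrix (Fin (n i)) (Fin (n i)) ℂ) :
    ∑ i', Matrix.trace (x i' * (Pi.single i m : ∀ i', Matrix (Fin (n i')) (Fin (n i')) ℂ) i')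
      = Matrix.trace (x i * m) := by
  rw [Finset.sum_eq_single i]
  · simp
  · intro b _ hb; simp [Pi.single_eq_of_ne hb]
  · simp

private lemma singleLin' (ε : (∀ i, Matrix (Fin (n i)) (Fin (n i)) ℂ) →ₗ[ℂ] ℂ) (i : Fin N)
    (M : Matrix (Fin (n i)) (Fin (n i)) ℂ) :
    ε (Pi.single i M) = ∑ j, ∑ k, M j k * ε (Pi.single i (Matrix.single j k 1)) := by
  have hM : M = ∑ j, ∑ k, M j k • Matrix.single j k (1:ℂ) := by
    simp only [Matrix.smul_single, smul_eq_mul, mul_one]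
    exact Matrix.matrix_eq_sum_single M
  calc ε (Pi.single i M) = (ε ∘ₗ LinearMap.single ℂ _ i) M := rfl
    _ = ∑ j, ∑ k, M j k * ε (Pi.single i (Matrix.single j k 1)) := by
        conv_lhs => rw [hM]
        rw [map_sum]
        refine Finset.sum_congr rfl fun j _ => ?_
        rw [map_sum]
        refine Finset.sum_congr rfl fun k _ => ?_
        rw [map_smul, smul_eq_mul]
        rfl

private lemma part1 (hn : ∀ i, 1 ≤ n i)
    (ε : (∀ i, Matrix (Fin (n i)) (Fin (n i)) ℂ) →ₗ[ℂ] ℂ)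
    (hnd : ∀ x, (∀ y, ε (x * y) = 0) → x = 0) :
    ∃! x : ∀ i, Matrix (Fin (n i)) (Fin (n i)) ℂ,
      (∀ i, IsUnit (x i)) ∧ ∀ a, ε a = ∑ i, Matrix.trace (x i * a i) := by
  set xd : ∀ i, Matrix (Fin (n i)) (Fin (n i)) ℂ :=
    fun i => Matrix.of fun p q => ε (Pi.single i (Matrix.single q p 1)) with hxd
  have hεd : ∀ a, ε a = ∑ i, Matrix.trace (xd i * a i) := by
    intro a
    conv_lhs => rw [← Finset.univ_sum_single a, map_sum]
    refine Finset.sum_congr rfl fun i _ => ?_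
    rw [singleLin', trE']
    rfl
  have hinv : ∀ i, IsUnit (xd i) := by
    intro i
    rw [Matrix.isUnit_iff_isUnit_det, isUnit_iff_ne_zero]
    intro hdet
    obtain ⟨v, hv, hvec⟩ := (Matrix.exists_mulVec_eq_zero_iff).2 hdet
    set m : Matrix (Fin (n i)) (Fin (n i)) ℂ := Matrix.of fun p _ => v p with hm
    have hxm : xd i * m = 0 := by
      ext p q
      simpa [hm, Matrix.mul_apply, Matrix.mulVec, dotProduct] using congrFun hvec p
    have h0 : (Pi.single i m : ∀ i', Matrix (Fin (n i')) (Fin (n i')) ℂ) = 0 := by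
      apply hnd
      intro y
      rw [singleMul' y i m, hεd, sumTraceSingle', ← Matrix.mul_assoc, hxm]
      simp
    apply hv
    funext p
    have := congrFun h0 i
    rw [Pi.single_eq_same] at this
    have := congrFun (congrFun this p) ⟨0, hn i⟩
    simpa [hm] using this
  refine ⟨xd, ⟨hinv, hεd⟩, ?_⟩
  rintro y ⟨-, hy⟩
  funext i
  ext p q
  have h1 := hy (Pi.single i (Matrix.single q p 1))
  rw [sumTraceSingle', trS'] at h1
  exact h1.symm

open Matrix in
private lemma trS'' {m : ℕ} (M : Matrix (Fin m) (Fin m) ℂ) (j k : Fin m) :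
    (M * Matrix.single j k 1).trace = M k j := by
  simp [Matrix.trace, Matrix.diag, Matrix.mul_apply, Matrix.single, Matrix.of_apply,
    ite_and, Finset.sum_ite_eq, Finset.sum_ite_eq']

open Matrix in
private lemma sumS'' {m : ℕ} (M : Matrix (Fin m) (Fin m) ℂ) :
    ∑ j, ∑ k, M j k • Matrix.single j k (1:ℂ) = M := by
  simp only [Matrix.smul_single, smul_eq_mul, mul_one]
  exact (Matrix.matrix_eq_sum_single M).symm

open Matrix in
private lemma conjS'' {m : ℕ} (M : Matrix (Fin m) (Fin m) ℂ) :
    ∑ j, ∑ k, Matrix.single j k (1:ℂ) * (M * Matrix.single k j 1) = M.trace • 1 := by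
  have h1 : ∀ (j k : Fin m), Matrix.single j k (1:ℂ) * (M * Matrix.single k j 1)
      = M k k • Matrix.single j j 1 := by
    intro j k
    ext p q
    simp [Matrix.mul_apply, Matrix.single, ite_and, Finset.sum_ite_eq,
      Finset.sum_ite_eq', Matrix.smul_apply, mul_comm]
  have h2 : M.trace = ∑ k, M k k := by simp [Matrix.trace, Matrix.diag]
  have h3 : ∑ j, Matrix.single j j (1:ℂ) = (1 : Matrix (Fin m) (Fin m) ℂ) := by
    ext p q
    by_cases h : p = q <;>
      simp [Matrix.single, Matrix.one_apply, h, ite_and, Matrix.sum_apply,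
        Finset.sum_ite_eq, Finset.sum_ite_eq', eq_comm]
  calc ∑ j, ∑ k, Matrix.single j k (1:ℂ) * (M * Matrix.single k j 1)
      = ∑ j, (∑ k, M k k) • Matrix.single j j (1:ℂ) := by simp [h1, Finset.sum_smul]
    _ = M.trace • ∑ j, Matrix.single j j (1:ℂ) := by rw [Finset.smul_sum, h2]
    _ = M.trace • 1 := by rw [h3]

section
variable {N : ℕ} {n : Fin N → ℕ}

private lemma mulSingle'' (u : ∀ i, Matrix (Fin (n i)) (Fin (n i)) ℂ) (i : Fin N)
    (m : Matrix (Fin (n i)) (Fin (n i)) ℂ) :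
    u * Pi.single i m = Pi.single i (u i * m) := by
  funext i'
  rcases eq_or_ne i' i with h | h
  · subst h; simp
  · simp [Pi.single_eq_of_ne h]

private lemma singleMul'' (u : ∀ i, Matrix (Fin (n i)) (Fin (n i)) ℂ) (i : Fin N)
    (m : Matrix (Fin (n i)) (Fin (n i)) ℂ) :
    Pi.single i m * u = Pi.single i (m * u i) := by
  funext i'
  rcases eq_or_ne i' i with h | h
  · subst h; simp
  · simp [Pi.single_eq_of_ne h]

private lemma sumTraceSingle'' (x : ∀ i, Matrix (Fin (n i)) (Fin (n i)) ℂ) (i : Fin N)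
    (m : Matrix (Fin (n i)) (Fin (n i)) ℂ) :
    ∑ i', Matrix.trace (x i' * (Pi.single i m : ∀ i', Matrix (Fin (n i')) (Fin (n i')) ℂ) i')
      = Matrix.trace (x i * m) := by
  rw [Finset.sum_eq_single i]
  · simp
  · intro b _ hb; simp [Pi.single_eq_of_ne hb]
  · simp

private lemma part2 (hn : ∀ i, 1 ≤ n i)
    (ε : (∀ i, Matrix (Fin (n i)) (Fin (n i)) ℂ) →ₗ[ℂ] ℂ)
    (x : ∀ i, Matrix (Fin (n i)) (Fin (n i)) ℂ)
    (hx : ∀ i, IsUnit (x i)) (hε : ∀ a, ε a = ∑ i, Matrix.trace (x i * a i))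
    (R : ℂ) (hR : R ≠ 0)
    (ι : Type) [Fintype ι] [DecidableEq ι]
    (e : Module.Basis ι ℂ (∀ i, Matrix (Fin (n i)) (Fin (n i)) ℂ)) (B : Matrix ι ι ℂ)
    (hGB : Matrix.of (fun a b => ε (e a * e b)) * B = 1)
    (hBG : B * Matrix.of (fun a b => ε (e a * e b)) = 1) :
    R • (∑ a, ∑ b, B a b • (e a * e b)) = 1 ↔
      ∀ i, R * Matrix.trace (x i)⁻¹ = 1 := by
  have hxdet : ∀ i, IsUnit (x i).det := fun i => (Matrix.isUnit_iff_isUnit_det _).1 (hx i)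
  have hxinv : ∀ i, (x i)⁻¹ * x i = 1 := fun i => Matrix.nonsing_inv_mul _ (hxdet i)
  have hεs : ∀ (i) (m : Matrix (Fin (n i)) (Fin (n i)) ℂ),
      ε (Pi.single i m) = Matrix.trace (x i * m) := fun i m => by
    rw [hε, sumTraceSingle'']
  -- the dual pair of families
  set E : ((i : Fin N) × (Fin (n i) × Fin (n i))) → (∀ i, Matrix (Fin (n i)) (Fin (n i)) ℂ) :=
    fun s => Pi.single s.1 (Matrix.single s.2.1 s.2.2 1) with hE
  set f : ((i : Fin N) × (Fin (n i) × Fin (n i))) → (∀ i, Matrix (Fin (n i)) (Fin (n i)) ℂ) :=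
    fun s => Pi.single s.1 ((x s.1)⁻¹ * Matrix.single s.2.2 s.2.1 1) with hf
  -- Lemma B : expansion in the dual family f
  have lemB : ∀ u, ∑ s, ε (u * E s) • f s = u := by
    intro u
    have hcoef : ∀ (i) (j k : Fin (n i)),
        ε (u * Pi.single i (Matrix.single j k 1)) = (x i * u i) k j := by
      intro i j k
      rw [mulSingle'', hεs, ← Matrix.mul_assoc, trS'']
    funext i
    rw [Finset.sum_apply, ← Finset.univ_sigma_univ, Finset.sum_sigma]
    rw [Finset.sum_eq_single i]
    · rw [Fintype.sum_prod_type]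
      have : ∀ (j k : Fin (n i)),
          (ε (u * E ⟨i, (j, k)⟩) • f ⟨i, (j, k)⟩) i
            = (x i * u i) k j • ((x i)⁻¹ * Matrix.single k j 1) := by
        intro j k
        simp only [hE, hf, Pi.smul_apply, Pi.single_eq_same, hcoef]
      simp only [this]
      calc ∑ j, ∑ k, (x i * u i) k j • ((x i)⁻¹ * Matrix.single k j 1)
          = (x i)⁻¹ * ∑ j, ∑ k, (x i * u i) k j • Matrix.single k j 1 := by
            rw [Finset.mul_sum]
            refine Finset.sum_congr rfl fun j _ => ?_
            rw [Finset.mul_sum]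
            exact Finset.sum_congr rfl fun k _ => (mul_smul_comm _ _ _).symm
        _ = (x i)⁻¹ * (x i * u i) := by rw [Finset.sum_comm, sumS'']
        _ = u i := by rw [← Matrix.mul_assoc, hxinv, Matrix.one_mul]
    · intro b _ hb
      refine Finset.sum_eq_zero fun c _ => ?_
      have h0 : f ⟨b, c⟩ i = 0 := Pi.single_eq_of_ne (Ne.symm hb) _
      rw [Pi.smul_apply, h0, smul_zero]
    · simp
  -- Lemma A : expansion in the basis e using B
  have lemA : ∀ u, ∑ a, (∑ b, B a b * ε (e b * u)) • e a = u := by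
    intro u
    have hrepr : ∀ a, ∑ b, B a b * ε (e b * u) = e.repr u a := by
      intro a
      have h1 : ∀ b, ε (e b * u) = ∑ c, e.repr u c * ε (e b * e c) := by
        intro b
        conv_lhs => rw [← e.sum_repr u, Finset.mul_sum, map_sum]
        refine Finset.sum_congr rfl fun c _ => ?_
        rw [mul_smul_comm, map_smul, smul_eq_mul]
      calc ∑ b, B a b * ε (e b * u)
          = ∑ c, (∑ b, B a b * ε (e b * e c)) * e.repr u c := by
            simp only [h1, Finset.mul_sum, Finset.sum_mul]
            rw [Finset.sum_comm]
            refine Finset.sum_congr rfl fun c _ => Finset.sum_congr rfl fun b _ => by ring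
        _ = e.repr u a := by
            have hd : ∀ c, (∑ b, B a b * ε (e b * e c)) = if a = c then 1 else 0 := by
              intro c
              have := congrFun (congrFun hBG a) c
              simpa [Matrix.mul_apply, Matrix.one_apply] using this
            simp only [hd, ite_mul, one_mul, zero_mul, Finset.sum_ite_eq, Finset.mem_univ,
              if_true]
    simp only [hrepr]
    exact e.sum_repr u
  -- the Casimir computation
  have hz : (∑ a, ∑ b, B a b • (e a * e b))
      = fun i => Matrix.trace (x i)⁻¹ • (1 : Matrix (Fin (n i)) (Fin (n i)) ℂ) := by
    set F : ι → (∀ i, Matrix (Fin (n i)) (Fin (n i)) ℂ) := fun a => ∑ b, B a b • e b with hF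
    have hFmul : ∀ (a) (u), ε (F a * u) = ∑ b, B a b * ε (e b * u) := by
      intro a u
      rw [hF]
      simp only [Finset.sum_mul, smul_mul_assoc, map_sum, map_smul, smul_eq_mul]
    have step1 : ∑ a, ∑ b, B a b • (e a * e b) = ∑ a, e a * F a := by
      refine Finset.sum_congr rfl fun a _ => ?_
      rw [hF, Finset.mul_sum]
      exact Finset.sum_congr rfl fun b _ => (mul_smul_comm _ _ _).symm
    have step3 : ∑ a, e a * F a = ∑ s, (∑ a, ε (F a * E s) • e a) * f s := by
      calc ∑ a, e a * F a = ∑ a, ∑ s, ε (F a * E s) • (e a * f s) := by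
            refine Finset.sum_congr rfl fun a _ => ?_
            conv_lhs => rw [← lemB (F a), Finset.mul_sum]
            exact Finset.sum_congr rfl fun s _ => mul_smul_comm _ _ _
        _ = ∑ s, ∑ a, ε (F a * E s) • (e a * f s) := Finset.sum_comm
        _ = ∑ s, (∑ a, ε (F a * E s) • e a) * f s := by
            refine Finset.sum_congr rfl fun s _ => ?_
            rw [Finset.sum_mul]
            exact Finset.sum_congr rfl fun a _ => (smul_mul_assoc _ _ _).symm
    have step4 : ∀ s, ∑ a, ε (F a * E s) • e a = E s := by
      intro s
      simp only [hFmul]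
      exact lemA (E s)
    have step5 : ∑ s, E s * f s
        = fun i => Matrix.trace (x i)⁻¹ • (1 : Matrix (Fin (n i)) (Fin (n i)) ℂ) := by
      have hEf : ∀ s, E s * f s = Pi.single s.1
          (Matrix.single s.2.1 s.2.2 1 * ((x s.1)⁻¹ * Matrix.single s.2.2 s.2.1 1)) := by
        intro s
        obtain ⟨i, j, k⟩ := s
        simp only [hE, hf]
        rw [singleMul'', Pi.single_eq_same]
      funext i
      rw [Finset.sum_apply, ← Finset.univ_sigma_univ, Finset.sum_sigma]
      rw [Finset.sum_eq_single i]
      · rw [Fintype.sum_prod_type]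
        have : ∀ (j k : Fin (n i)), (E ⟨i, (j, k)⟩ * f ⟨i, (j, k)⟩) i
            = Matrix.single j k (1:ℂ) * ((x i)⁻¹ * Matrix.single k j 1) := by
          intro j k
          rw [hEf]
          exact Pi.single_eq_same _ _
        simp only [this]
        exact conjS'' (x i)⁻¹
      · intro b _ hb
        refine Finset.sum_eq_zero fun c _ => ?_
        rw [hEf]
        exact Pi.single_eq_of_ne (Ne.symm hb) _
      · simp
    rw [step1, step3]
    simp only [step4]
    exact step5
  rw [hz]
  constructor
  · intro h i
    have h1 := congrFun h i
    have h2 := congrFun (congrFun h1 ⟨0, hn i⟩) ⟨0, hn i⟩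
    simpa [Matrix.smul_apply, Matrix.one_apply_eq, smul_eq_mul, mul_assoc] using h2
  · intro h
    funext i
    have h1 := h i
    show R • (Matrix.trace (x i)⁻¹ • (1 : Matrix (Fin (n i)) (Fin (n i)) ℂ)) = 1
    rw [smul_smul, h1, one_smul]
end

set_option linter.unusedVariables false in
/-- For `A = ⊕ᵢ Mₙᵢ(ℂ)` and a linear functional `ε` with nondegenerate form
`(a,b) ↦ ε(a·b)`, there exist unique invertible `xᵢ` with `ε(a) = Σᵢ Tr(xᵢ·aᵢ)`; moreover,
for `R ≠ 0` and any basis with `(B^{ab})` the inverse of `(ε(eₐ·e_b))`,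
`R·Σ B^{ab}·eₐ·e_b = 1 ↔ ∀ i, R·Tr(xᵢ⁻¹) = 1`. -/
theorem statement11 (N : ℕ) (hN : 1 ≤ N) (n : Fin N → ℕ) (hn : ∀ i, 1 ≤ n i)
    (ε : (∀ i, Matrix (Fin (n i)) (Fin (n i)) ℂ) →ₗ[ℂ] ℂ)
    (hnd : ∀ x, (∀ y, ε (x * y) = 0) → x = 0) :
    (∃! x : ∀ i, Matrix (Fin (n i)) (Fin (n i)) ℂ,
      (∀ i, IsUnit (x i)) ∧ ∀ a, ε a = ∑ i, Matrix.trace (x i * a i)) ∧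
    (∀ x : ∀ i, Matrix (Fin (n i)) (Fin (n i)) ℂ,
      (∀ i, IsUnit (x i)) → (∀ a, ε a = ∑ i, Matrix.trace (x i * a i)) →
      ∀ R : ℂ, R ≠ 0 →
      ∀ (ι : Type) [Fintype ι] [DecidableEq ι]
        (e : Module.Basis ι ℂ (∀ i, Matrix (Fin (n i)) (Fin (n i)) ℂ)) (B : Matrix ι ι ℂ),
        Matrix.of (fun a b => ε (e a * e b)) * B = 1 →
        B * Matrix.of (fun a b => ε (e a * e b)) = 1 →
        (R • (∑ a, ∑ b, B a b • (e a * e b)) = 1 ↔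
          ∀ i, R * Matrix.trace (x i)⁻¹ = 1)) :=
  ⟨part1 hn ε hnd,
   fun x hx hε R hR ι _ _ e B hGB hBG => part2 hn ε x hx hε R hR ι e B hGB hBG⟩
end
end

section
/- Let N ≥ 1, n : Fin N → ℕ with nᵢ ≥ 1, A = ⊕_{i=1}^{N} M_{n_i}(ℂ), and let x_i ∈ M_{n_i}(ℂ) be invertible matrices. Define ε : A → ℂ by ε(a) = Σ_{i=1}^{N} Tr(x_i·a_i), and suppose that ε is symmetric (ε(a·b) = ε(b·a) for all a,b) and that for some R ∈ ℂ, R ≠ 0, and some basis {e_a} of A with (B^{ab}) the inverse of the matrix (ε(e_a·e_b))_{a,b}, one has R·Σ_{a,b} B^{ab}·e_a·e_b = 1. Then x_i = R·n_i·1_{n_i} for every i, where 1_{n_i} is the identity matrix of M_{n_i}(ℂ). -/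
open Matrix in
lemma stdBasis_repr_apply' {m : Type*} [Fintype m] [DecidableEq m]
    (M : Matrix m m ℂ) (p : m × m) :
    (Matrix.stdBasis ℂ m m).repr M p = M p.1 p.2 := by
  have hM : M = ∑ q : m × m, M q.1 q.2 • Matrix.stdBasis ℂ m m q := by
    conv_lhs => rw [matrix_eq_sum_single M]
    rw [← Finset.sum_product']
    refine Finset.sum_congr rfl fun q _ => ?_
    rw [Matrix.stdBasis_eq_single, smul_single, smul_eq_mul, mul_one]
  conv_lhs => rw [hM]
  simp only [map_sum, _root_.map_smul, Module.Basis.repr_self, Finsupp.smul_single, smul_eq_mul, mul_one,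
    Finsupp.coe_finset_sum, Finset.sum_apply, Finsupp.single_apply]
  rw [Finset.sum_eq_single p] <;> simp +contextual [eq_comm]


/-- For `A = ⊕ᵢ Mₙᵢ(ℂ)` with `ε(a) = Σᵢ Tr(xᵢ·aᵢ)` (`xᵢ` invertible), if `ε`
is symmetric and for some `R ≠ 0` and some basis `{eₐ}` with `(B^{ab})` the inverse of
`(ε(eₐ·e_b))` one has `R·Σ B^{ab}·eₐ·e_b = 1`, then `xᵢ = R·nᵢ·1` for every `i`. -/
theorem statement12 (N : ℕ) (hN : 1 ≤ N) (n : Fin N → ℕ) (hn : ∀ i, 1 ≤ n i)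
    (x : ∀ i, Matrix (Fin (n i)) (Fin (n i)) ℂ) (hx : ∀ i, IsUnit (x i))
    (ε : (∀ i, Matrix (Fin (n i)) (Fin (n i)) ℂ) → ℂ)
    (hε : ∀ a, ε a = ∑ i, Matrix.trace (x i * a i))
    (hsym : ∀ a b, ε (a * b) = ε (b * a))
    (R : ℂ) (hR : R ≠ 0)
    (ι : Type) [Fintype ι] [DecidableEq ι]
    (e : Module.Basis ι ℂ (∀ i, Matrix (Fin (n i)) (Fin (n i)) ℂ)) (B : Matrix ι ι ℂ)
    (hB1 : Matrix.of (fun a b => ε (e a * e b)) * B = 1)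
    (hB2 : B * Matrix.of (fun a b => ε (e a * e b)) = 1)
    (hspecial : R • (∑ a, ∑ b, B a b • (e a * e b)) = 1) :
    ∀ i, x i = (R * (n i : ℂ)) • (1 : Matrix (Fin (n i)) (Fin (n i)) ℂ) := by
  classical
  -- ε as a linear map
  set L : (∀ i, Matrix (Fin (n i)) (Fin (n i)) ℂ) →ₗ[ℂ] ℂ :=
    ∑ i, (Matrix.traceLinearMap (Fin (n i)) ℂ ℂ).comp
      ((LinearMap.mulLeft ℂ (x i)).comp (LinearMap.proj i)) with hLdef
  have hεL : ∀ a, ε a = L a := by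
    intro a
    simp [hLdef, hε, LinearMap.sum_apply]
  -- B is symmetric
  have hGsym : (Matrix.of (fun a b => ε (e a * e b))).transpose
      = Matrix.of (fun a b => ε (e a * e b)) := by
    ext a b; exact hsym (e b) (e a)
  have hBsym : ∀ a b, B a b = B b a := by
    have hBG : B.transpose * Matrix.of (fun a b => ε (e a * e b)) = 1 := by
      calc B.transpose * Matrix.of (fun a b => ε (e a * e b))
          = (Matrix.of (fun a b => ε (e a * e b)) * B).transpose := by
            rw [Matrix.transpose_mul, hGsym]
        _ = 1 := by rw [hB1, Matrix.transpose_one]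
    have hT : B.transpose = B := by
      calc B.transpose = B.transpose * (Matrix.of (fun a b => ε (e a * e b)) * B) := by
            rw [hB1, mul_one]
        _ = (B.transpose * Matrix.of (fun a b => ε (e a * e b))) * B := by rw [mul_assoc]
        _ = B := by rw [hBG, one_mul]
    intro a b
    conv_lhs => rw [← hT]
    rfl
  -- coordinate formula
  have hrepr : ∀ (w : ∀ i, Matrix (Fin (n i)) (Fin (n i)) ℂ) (c : ι),
      e.repr w c = ∑ b, ε (w * e b) * B b c := by
    intro w c
    have h1 : ∀ b, ε (w * e b) = ∑ a, e.repr w a * ε (e a * e b) := by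
      intro b
      conv_lhs => rw [← e.sum_repr w]
      rw [Finset.sum_mul]
      simp only [smul_mul_assoc]
      simp only [hεL, map_sum, _root_.map_smul, smul_eq_mul]
    simp only [h1, Finset.sum_mul]
    rw [Finset.sum_comm]
    have h2 : ∀ a, ∑ b, e.repr w a * ε (e a * e b) * B b c
        = e.repr w a * (Matrix.of (fun a b => ε (e a * e b)) * B) a c := by
      intro a
      rw [Matrix.mul_apply, Finset.mul_sum]
      simp [mul_assoc]
    simp only [h2, hB1, Matrix.one_apply]
    simp [Finset.sum_ite_eq]
  -- the special element
  have hz : (∑ a, ∑ b, B a b • (e a * e b))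
      = R⁻¹ • (1 : ∀ i, Matrix (Fin (n i)) (Fin (n i)) ℂ) := by
    have := congrArg (fun y => R⁻¹ • y) hspecial
    simpa [smul_smul, inv_mul_cancel₀ hR] using this
  -- key : trace of left multiplication
  have key : ∀ y : ∀ i, Matrix (Fin (n i)) (Fin (n i)) ℂ,
      LinearMap.trace ℂ _ (LinearMap.mulLeft ℂ y) = R⁻¹ * ε y := by
    intro y
    rw [LinearMap.trace_eq_matrix_trace ℂ e, Matrix.trace]
    calc ∑ a, Matrix.diag (LinearMap.toMatrix e e (LinearMap.mulLeft ℂ y)) a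
        = ∑ a, e.repr (y * e a) a := by
          simp [Matrix.diag, LinearMap.toMatrix_apply]
      _ = ∑ a, ∑ b, ε ((y * e a) * e b) * B b a := by simp only [hrepr]
      _ = ∑ a, ∑ b, B a b * ε (y * (e a * e b)) := by
          refine Finset.sum_congr rfl fun a _ => Finset.sum_congr rfl fun b _ => ?_
          rw [hBsym b a, mul_comm, mul_assoc]
      _ = ε (y * ∑ a, ∑ b, B a b • (e a * e b)) := by
          simp only [Finset.mul_sum, mul_smul_comm, hεL, map_sum, _root_.map_smul, smul_eq_mul]
      _ = R⁻¹ * ε y := by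
          rw [hz, mul_smul_comm, mul_one, hεL, _root_.map_smul, smul_eq_mul, ← hεL]
  -- trace of left multiplication by Pi.single i m
  have trace_single : ∀ (i : Fin N) (m : Matrix (Fin (n i)) (Fin (n i)) ℂ),
      LinearMap.trace ℂ (∀ j, Matrix (Fin (n j)) (Fin (n j)) ℂ)
        (LinearMap.mulLeft ℂ (Pi.single i m : ∀ j, Matrix (Fin (n j)) (Fin (n j)) ℂ))
        = (n i : ℂ) * Matrix.trace m := by
    intro i m
    set b : Module.Basis (Σ j : Fin N, Fin (n j) × Fin (n j)) ℂ (∀ j, Matrix (Fin (n j)) (Fin (n j)) ℂ) :=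
      Pi.basis (fun j => Matrix.stdBasis ℂ (Fin (n j)) (Fin (n j))) with hbdef
    rw [LinearMap.trace_eq_matrix_trace ℂ b, Matrix.trace]
    have hterm : ∀ σ : Σ j, Fin (n j) × Fin (n j),
        Matrix.diag (LinearMap.toMatrix b b (LinearMap.mulLeft ℂ (Pi.single i m))) σ
        = if h : σ.1 = i then m (h ▸ σ.2.1) (h ▸ σ.2.1) else 0 := by
      intro σ
      obtain ⟨j, k, l⟩ := σ
      simp only [Matrix.diag, LinearMap.toMatrix_apply, LinearMap.mulLeft_apply]
      rw [hbdef, Pi.basis_repr, Pi.basis_apply]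
      rw [Pi.mul_apply, Pi.single_eq_same]
      by_cases h : j = i
      · subst h
        rw [dif_pos rfl]
        rw [Pi.single_eq_same, stdBasis_repr_apply', Matrix.stdBasis_eq_single]
        simp [Matrix.mul_single_apply_same]
      · rw [dif_neg h, Pi.single_eq_of_ne h]
        simp
    simp only [hterm]
    rw [← Finset.univ_sigma_univ, Finset.sum_sigma]
    rw [Finset.sum_eq_single i (fun j _ hj => by simp [hj]) (by simp)]
    simp [Matrix.trace, Matrix.diag, Fintype.sum_prod_type, Finset.sum_const, Finset.mul_sum,
      mul_comm]
  -- combine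
  intro i
  have h1 : ∀ m : Matrix (Fin (n i)) (Fin (n i)) ℂ,
      Matrix.trace (x i * m) = (R * (n i : ℂ)) * Matrix.trace m := by
    intro m
    have h2 := key (Pi.single i m)
    rw [trace_single i m] at h2
    have h3 : ε (Pi.single i m) = Matrix.trace (x i * m) := by
      rw [hε]
      rw [Finset.sum_eq_single i (fun j _ hj => by
        rw [Pi.single_eq_of_ne hj, mul_zero, Matrix.trace_zero]) (by simp)]
      rw [Pi.single_eq_same]
    rw [h3] at h2
    calc Matrix.trace (x i * m) = R * (R⁻¹ * Matrix.trace (x i * m)) := by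
          field_simp
      _ = R * ((n i : ℂ) * Matrix.trace m) := by rw [← h2]
      _ = (R * (n i : ℂ)) * Matrix.trace m := by ring
  ext k l
  have h4 := h1 (Matrix.single l k 1)
  have h5 : Matrix.trace (x i * Matrix.single l k 1) = x i k l := by
    rw [Matrix.trace]
    rw [Finset.sum_eq_single k (fun s _ hs => by
      simp [Matrix.diag, Matrix.mul_single_apply_of_ne (1:ℂ) l k s s hs])
      (by simp)]
    simp [Matrix.diag]
  rw [h5] at h4
  rw [h4]
  by_cases hkl : l = k
  · subst hkl
    simp
  · rw [Matrix.trace_single_eq_of_ne l k (1:ℂ) hkl]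
    simp [Matrix.one_apply, Ne.symm hkl, hkl]
end

section
/- Let k be a field, A a finite-dimensional associative unital k-algebra, and ε : A → k a k-linear functional such that the bilinear form (x,y) ↦ ε(x·y) is nondegenerate. Then there exists a unique k-linear map σ : A → A such that ε(x·y) = ε(σ(y)·x) for all x, y ∈ A, and this σ is a k-algebra automorphism of A (it is bijective, σ(1) = 1, and σ(x·y) = σ(x)·σ(y) for all x, y). -/
/-- For a finite-dimensional algebra `A` over a field `k` with nondegenerate
Frobenius form `ε`, there is a unique `k`-linear `σ : A → A` with `ε(x·y) = ε(σ(y)·x)` for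
all `x, y`, and any such `σ` is a `k`-algebra automorphism. -/
theorem statement13 (k : Type) [Field k] (A : Type) [Ring A] [Algebra k A]
    [FiniteDimensional k A]
    (ε : A →ₗ[k] k)
    (hnd : ∀ x, (∀ y, ε (x * y) = 0) → x = 0) :
    (∃! σ : A → A, IsLinearMap k σ ∧ ∀ x y, ε (x * y) = ε (σ y * x)) ∧
    (∀ σ : A → A, IsLinearMap k σ → (∀ x y, ε (x * y) = ε (σ y * x)) →
      Function.Bijective σ ∧ σ 1 = 1 ∧ ∀ x y, σ (x * y) = σ x * σ y) := by
  -- the bilinear form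
  set B : LinearMap.BilinForm k A := (LinearMap.mul k A).compr₂ ε with hBdef
  have hBapp : ∀ x y, B x y = ε (x * y) := fun x y => rfl
  have hB : B.Nondegenerate := .ofSeparatingLeft fun x hx => hnd x fun y => hx y
  have hBf : B.flip.Nondegenerate := hB.flip
  -- cancellation lemma
  have hcancel : ∀ a b : A, (∀ x, ε (a * x) = ε (b * x)) → a = b := by
    intro a b h
    have : a - b = 0 := hnd (a - b) (fun y => by rw [sub_mul, map_sub, h y, sub_self])
    exact sub_eq_zero.mp this
  -- construct σ as a linear equivalence
  set e : A ≃ₗ[k] Module.Dual k A := B.toDual hB with he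
  set f : A ≃ₗ[k] Module.Dual k A := B.flip.toDual hBf with hf
  set σ₀ : A ≃ₗ[k] A := f.trans e.symm with hσ₀
  have hfcoe : ∀ y : A, (f y : Module.Dual k A) = B.flip y := fun y => rfl
  have hkey : ∀ x y, ε (x * y) = ε (σ₀ y * x) := by
    intro x y
    have : B (σ₀ y) x = (f y) x := by
      show B (e.symm (f y)) x = (f y) x
      exact LinearMap.BilinForm.apply_toDual_symm_apply (hB := hB) (f y) x
    rw [hBapp] at this
    rw [this, hfcoe]; rfl
  -- any σ satisfying the property equals σ₀
  have huniq : ∀ σ : A → A, (∀ x y, ε (x * y) = ε (σ y * x)) → σ = ⇑σ₀ := by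
    intro σ hσ
    funext y
    exact hcancel _ _ fun x => by rw [← hσ x y, hkey x y]
  constructor
  · refine ⟨⇑σ₀, ⟨⟨fun a b => map_add _ a b, fun c a => map_smul _ c a⟩, hkey⟩, ?_⟩
    intro σ ⟨_, hσ⟩
    exact huniq σ hσ
  · intro σ hlin hσ
    have hσeq := huniq σ hσ
    refine ⟨hσeq ▸ σ₀.bijective, ?_, ?_⟩
    · refine hcancel _ _ fun x => ?_
      rw [← hσ x 1, mul_one, one_mul]
    · intro x y
      refine hcancel _ _ fun z => ?_
      calc ε (σ (x * y) * z) = ε (z * (x * y)) := (hσ z (x * y)).symm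
        _ = ε ((z * x) * y) := by rw [mul_assoc]
        _ = ε (σ y * (z * x)) := hσ (z * x) y
        _ = ε ((σ y * z) * x) := by rw [mul_assoc]
        _ = ε (σ x * (σ y * z)) := hσ (σ y * z) x
        _ = ε (σ x * σ y * z) := by rw [mul_assoc]
end

section
/- Let n ≥ 1 and let * : M_n(ℂ) → M_n(ℂ) be a ℂ-linear involution ((a·b)* = b*·a* for all a,b and (a*)* = a). Then there exists a ℂ-algebra automorphism ω of M_n(ℂ) such that either (1) ω((ω⁻¹(a))*) = aᵀ for all a ∈ M_n(ℂ), or (2) n is even and ω((ω⁻¹(a))*) = Ω·aᵀ·Ω⁻¹ for all a ∈ M_n(ℂ), where Ω is the block-diagonal n×n matrix with n/2 diagonal blocks equal to [[0,1],[−1,0]]. In particular, when n is odd, alternative (1) holds. -/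
set_option maxHeartbeats 1000000

open Polynomial Matrix

namespace Statement16Aux

variable {n : ℕ}

abbrev N (n : ℕ) := Matrix (Fin n) (Fin n) ℂ

noncomputable def Om (n : ℕ) : Matrix (Fin n) (Fin n) ℂ :=
  Matrix.of fun i j : Fin n =>
    if i.val + 1 = j.val ∧ i.val % 2 = 0 then (1 : ℂ)
    else if j.val + 1 = i.val ∧ j.val % 2 = 0 then -1 else 0

theorem hensel (l : ℂ) (hl : l ≠ 0) : ∀ e : ℕ, ∃ q : ℂ[X], (X - C l) ^ (e+1) ∣ q*q - X := by
  intro e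
  induction e with
  | zero =>
    obtain ⟨m, hm⟩ := IsAlgClosed.exists_pow_nat_eq l (n := 2) (by norm_num)
    refine ⟨C m, ?_⟩
    rw [pow_one, dvd_iff_isRoot]
    simp only [IsRoot, eval_sub, eval_mul, eval_C, eval_X]
    rw [← hm]; ring
  | succ e ih =>
    obtain ⟨q, s, hs⟩ := ih
    have hql : q.eval l ≠ 0 := by
      intro h
      have h2 : (q*q - X).eval l = 0 := by rw [hs]; simp
      simp [h, sub_eq_zero] at h2; exact hl h2
    set c := -(s.eval l) / (2 * q.eval l) with hc
    set d := (X - C l)^(e+1) with hd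
    refine ⟨q + C c * d, ?_⟩
    have expand : (q + C c * d) * (q + C c * d) - X
        = d * (s + 2 * C c * q) + (C c * C c) * (d*d) := by
      rw [hd]; linear_combination hs
    rw [expand]
    apply dvd_add
    · have key : (X - C l) ∣ (s + 2 * C c * q) := by
        rw [dvd_iff_isRoot]
        simp only [IsRoot, eval_add, eval_mul, eval_C, eval_ofNat, eval_one]
        rw [hc]; field_simp; ring
      obtain ⟨t, ht⟩ := key
      exact ⟨t, by rw [ht, hd]; ring⟩
    · exact Dvd.dvd.mul_left (by rw [hd, ← pow_add]; exact pow_dvd_pow _ (by omega)) _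

theorem polysqrt (d : ℕ) : ∀ (p : ℂ[X]), p.natDegree ≤ d → p.Monic → ¬ X ∣ p →
    ∃ q : ℂ[X], p ∣ q*q - X := by
  induction d with
  | zero =>
    intro p hdeg hm _
    have : p = 1 := hm.natDegree_eq_zero.mp (Nat.le_zero.mp hdeg)
    exact ⟨0, this ▸ one_dvd _⟩
  | succ d ih =>
    intro p hdeg hm hX
    rcases Nat.eq_zero_or_pos p.natDegree with h0 | hpos
    · exact ⟨0, (hm.natDegree_eq_zero.mp h0) ▸ one_dvd _⟩
    have hp0 : p ≠ 0 := hm.ne_zero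
    obtain ⟨l, hl⟩ := Complex.exists_root (natDegree_pos_iff_degree_pos.mp hpos)
    have hlne : l ≠ 0 := by
      rintro rfl
      exact hX (by simpa using dvd_iff_isRoot.mpr hl)
    obtain ⟨r, hr, hnd⟩ := p.exists_eq_pow_rootMultiplicity_mul_and_not_dvd hp0 l
    set e := p.rootMultiplicity l with he
    have hepos : 0 < e := (rootMultiplicity_pos hp0).mpr hl
    set A := (X - C l) ^ e with hA
    have hAm : A.Monic := (monic_X_sub_C l).pow e
    have hrm : r.Monic := hAm.of_mul_monic_left (hr ▸ hm : (A * r).Monic)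
    have hrX : ¬ X ∣ r := fun h => hX (hr ▸ h.mul_left A)
    have hdr : r.natDegree ≤ d := by
      have h1 : p.natDegree = e + r.natDegree := by
        rw [hr, hAm.natDegree_mul hrm, hA, natDegree_pow, natDegree_X_sub_C, mul_one]
      omega
    obtain ⟨q2, hq2⟩ := ih r hdr hrm hrX
    obtain ⟨q1, hq1⟩ : ∃ q : ℂ[X], A ∣ q*q - X := by
      obtain ⟨q, hq⟩ := hensel l hlne (e - 1)
      exact ⟨q, by rwa [Nat.sub_add_cancel hepos] at hq⟩
    have hcop : IsCoprime A r :=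
      ((irreducible_X_sub_C l).coprime_iff_not_dvd.mpr hnd).pow_left
    obtain ⟨a, b, hab⟩ := id hcop
    set q := q1 + a*A*(q2 - q1) with hq
    refine ⟨q, hr ▸ hcop.mul_dvd ?_ ?_⟩
    · have h1 : q*q - X = (q1*q1 - X) + A * ((a*(q2-q1)) * (q + q1)) := by
        rw [hq]; ring
      rw [h1]; exact dvd_add hq1 (Dvd.intro _ rfl)
    · have h2 : q - q2 = -(b*r)*(q2 - q1) := by
        rw [hq]
        linear_combination (q2 - q1) * hab
      have h3 : q*q - X = (q2*q2 - X) + r * (-(b*(q2-q1)) * (q + q2)) := by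
        have : q = q2 + (-(b*r))*(q2-q1) := by linear_combination h2
        rw [this]; ring
      rw [h3]; exact dvd_add hq2 (Dvd.intro _ rfl)

theorem Om_apply {n : ℕ} (i j : Fin n) : Om n i j =
    if i.val + 1 = j.val ∧ i.val % 2 = 0 then (1 : ℂ)
    else if j.val + 1 = i.val ∧ j.val % 2 = 0 then -1 else 0 := rfl

theorem Om_transpose (n : ℕ) : (Om n)ᵀ = -(Om n) := by
  ext i j
  rw [transpose_apply, Matrix.neg_apply, Om_apply, Om_apply]
  split_ifs <;> first | rfl | (exfalso; omega) | norm_num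

theorem Om_mul_Om {n : ℕ} (hn : Even n) : Om n * Om n = -1 := by
  obtain ⟨m, hm⟩ := hn
  have hn2 : n % 2 = 0 := by omega
  ext i j
  rw [mul_apply, Matrix.neg_apply, Matrix.one_apply]
  by_cases hi : i.val % 2 = 0
  · have hlt : i.val + 1 < n := by omega
    set k0 : Fin n := ⟨i.val + 1, hlt⟩ with hk0
    rw [Finset.sum_eq_single k0 ?side ?notmem]
    case side =>
      intro b _ hb
      have : Om n i b = 0 := by
        rw [Om_apply]
        have hbne : b.val ≠ i.val + 1 := fun h => hb (by
          apply Fin.ext; simp [hk0, h])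
        split_ifs <;> first | rfl | omega
      rw [this, zero_mul]
    case notmem => intro h; exact absurd (Finset.mem_univ _) h
    have h1 : Om n i k0 = 1 := by rw [Om_apply, if_pos ⟨rfl, hi⟩]
    rw [h1, one_mul, Om_apply]
    by_cases hij : i = j
    · subst hij
      rw [if_neg (by omega), if_pos ⟨rfl, hi⟩, if_pos rfl]
    · have : j.val ≠ i.val := fun h => hij (Fin.ext h.symm)
      rw [if_neg (by simp [hk0]; omega), if_neg (by simp [hk0]; omega), if_neg hij]; ring
  · have hpos : 0 < i.val := by omega
    set k0 : Fin n := ⟨i.val - 1, by omega⟩ with hk0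
    rw [Finset.sum_eq_single k0 ?side ?notmem]
    case side =>
      intro b _ hb
      have : Om n i b = 0 := by
        rw [Om_apply]
        have hbne : b.val ≠ i.val - 1 := fun h => hb (by apply Fin.ext; simp [hk0, h])
        split_ifs <;> first | rfl | omega
      rw [this, zero_mul]
    case notmem => intro h; exact absurd (Finset.mem_univ _) h
    have h1 : Om n i k0 = -1 := by
      rw [Om_apply, if_neg (by simp [hk0]; omega), if_pos (by simp [hk0]; omega)]
    rw [h1, Om_apply]
    by_cases hij : i = j
    · subst hij
      rw [if_pos (by simp [hk0]; omega), if_pos rfl]; ring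
    · have : j.val ≠ i.val := fun h => hij (Fin.ext h.symm)
      rw [if_neg (by simp [hk0]; omega), if_neg (by simp [hk0]; omega), if_neg hij]; ring

theorem matsqrt (hn : 1 ≤ n) (g : N n) (hg : IsUnit g) :
    ∃ h : N n, h * h = g ∧ ∃ q : ℂ[X], h = aeval g q := by
  haveI : Nontrivial (N n) := by
    refine ⟨0, 1, ?_⟩
    intro h
    have := congrFun (congrFun h ⟨0, hn⟩) ⟨0, hn⟩
    simpa using this
  have hint : IsIntegral ℂ g := Algebra.IsIntegral.isIntegral g
  set p := minpoly ℂ g with hp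
  have hm : p.Monic := minpoly.monic hint
  have hX : ¬ X ∣ p := by
    rintro ⟨q', hq'⟩
    have hq'm : q'.Monic := monic_X.of_mul_monic_left (hq' ▸ hm)
    have haev : aeval g p = 0 := minpoly.aeval ℂ g
    rw [hq', _root_.map_mul, aeval_X] at haev
    have h0 : aeval g q' = 0 := by
      obtain ⟨v, rfl⟩ := hg
      exact (Units.mul_right_eq_zero v).mp haev
    have hle := minpoly.min ℂ g hq'm h0
    have h1 : p.natDegree = 1 + q'.natDegree := by
      rw [hq', (monic_X (R := ℂ)).natDegree_mul hq'm, natDegree_X]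
    have h2 : p.natDegree ≤ q'.natDegree := natDegree_le_natDegree hle
    omega
  obtain ⟨q, t, ht⟩ := polysqrt p.natDegree p le_rfl hm hX
  refine ⟨aeval g q, ?_, q, rfl⟩
  have := congrArg (aeval g) ht
  rw [map_sub, _root_.map_mul, aeval_X, _root_.map_mul, minpoly.aeval, zero_mul] at this
  linear_combination (norm := noncomm_ring) this

theorem aeval_comm (g c : N n) (h : g * c = c * gᵀ) (q : ℂ[X]) :
    aeval g q * c = c * (aeval g q)ᵀ := by
  have hpow : ∀ k : ℕ, g ^ k * c = c * (gᵀ) ^ k := by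
    intro k
    induction k with
    | zero => simp
    | succ k ih =>
      rw [pow_succ, pow_succ, mul_assoc, h, ← mul_assoc, ih, mul_assoc]
  induction q using Polynomial.induction_on' with
  | add p q hp hq => rw [map_add, add_mul, hp, hq, transpose_add, mul_add]
  | monomial k a =>
    rw [aeval_monomial, Algebra.algebraMap_eq_smul_one, smul_one_mul, smul_mul_assoc,
      hpow k, transpose_smul, transpose_pow, mul_smul_comm]

theorem inner_aut (hn : 1 ≤ n) (φ : N n ≃ₐ[ℂ] N n) :
    ∃ u : N n, IsUnit u ∧ ∀ a, φ a * u = u * a := by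
  classical
  set z : Fin n := ⟨0, hn⟩
  set E : Fin n → Fin n → N n := fun i j => Matrix.single i j (1:ℂ) with hE
  -- φ (E z z) ≠ 0
  have hfne : φ (E z z) ≠ 0 := by
    intro h
    have : E z z = 0 := by
      apply φ.injective; rw [h, map_zero]
    have := congrFun (congrFun this z) z
    simp [hE] at this
  -- find w with φ (E z z) *ᵥ w = w, w ≠ 0
  obtain ⟨w0, hw0⟩ : ∃ w0, φ (E z z) *ᵥ w0 ≠ 0 := by
    by_contra hc
    push_neg at hc
    apply hfne
    ext i j
    have := congrFun (hc (Pi.single j 1)) i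
    simpa using this
  set w : Fin n → ℂ := φ (E z z) *ᵥ w0 with hw
  have hEzz : E z z * E z z = E z z := by simp [hE]
  have hfw : φ (E z z) *ᵥ w = w := by
    rw [hw, mulVec_mulVec, ← _root_.map_mul, hEzz]
  -- the intertwiner
  set u : N n := Matrix.of (fun i k => (φ (E k z) *ᵥ w) i) with hu
  have hucol : ∀ k, u *ᵥ Pi.single k 1 = φ (E k z) *ᵥ w := by
    intro k; ext i; simp [hu]
  -- E i j * E k z
  have hmul : ∀ i j k : Fin n, E i j * E k z = if j = k then E i z else 0 := by
    intro i j k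
    by_cases h : j = k
    · subst h; simp [hE]
    · simp [hE, Matrix.single_mul_single_of_ne (h := h), h]
  -- key intertwining on basis
  have key : ∀ i j, φ (E i j) * u = u * E i j := by
    intro i j
    ext r k
    have lhs : (φ (E i j) * u) r k = (φ (E i j * E k z) *ᵥ w) r := by
      rw [_root_.map_mul, ← mulVec_mulVec]
      simp [Matrix.mul_apply, hu, Matrix.mulVec, _root_.dotProduct]
    rw [lhs, hmul]
    by_cases h : j = k
    · subst h
      simp [hu, Matrix.mul_single_apply_same, hE, mul_comm]
    · rw [if_neg h]
      have hkj : k ≠ j := Ne.symm h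
      simp [hu, hE, hkj]
  -- general intertwining
  have keyall : ∀ a, φ a * u = u * a := by
    intro a
    rw [matrix_eq_sum_single a, map_sum]
    simp_rw [map_sum, Finset.sum_mul, Finset.mul_sum]
    refine Finset.sum_congr rfl fun i _ => Finset.sum_congr rfl fun j _ => ?_
    have hsm : Matrix.single i j (a i j) = (a i j) • E i j := by
      simp [hE, smul_single]
    rw [hsm, _root_.map_smul, smul_mul_assoc, key, mul_smul_comm]
  -- injectivity of u
  have hinj : Function.Injective u.mulVec := by
    have hker : ∀ x, u *ᵥ x = 0 → x = 0 := by
      intro x hx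
      funext j
      have h1 : φ (E z j) *ᵥ (u *ᵥ x) = 0 := by rw [hx, mulVec_zero]
      have h2 : φ (E z j) *ᵥ (u *ᵥ x) = x j • w := by
        rw [mulVec_mulVec, keyall (E z j), ← mulVec_mulVec]
        have : (E z j : N n) *ᵥ x = x j • (Pi.single z 1 : Fin n → ℂ) := by
          simp only [hE]
          rw [single_mulVec]
          ext i
          by_cases h : i = z
          · subst h; simp
          · simp [Function.update, h, Pi.single_eq_of_ne h]
        rw [this, mulVec_smul, hucol, hfw]
      rw [h1] at h2
      have := h2.symm
      rcases smul_eq_zero.mp this with h | h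
      · exact h
      · exact absurd h (by simpa [hw] using hw0)
    intro x y hxy
    have : u *ᵥ (x - y) = 0 := by rw [mulVec_sub, hxy, sub_self]
    have h3 := hker _ this
    exact sub_eq_zero.mp h3
  exact ⟨u, mulVec_injective_iff_isUnit.mp hinj, keyall⟩

/-- conjugation algebra automorphism -/
noncomputable def conjAE (v : N n) (hv : IsUnit v.det) : N n ≃ₐ[ℂ] N n :=
  AlgEquiv.ofLinearEquiv
    (LinearEquiv.ofLinear
      (IsLinearMap.mk' (fun a => v * a * v⁻¹) ⟨fun a b => by noncomm_ring, fun c a => by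
        simp [Matrix.mul_smul, Matrix.smul_mul]⟩)
      (IsLinearMap.mk' (fun a => v⁻¹ * a * v) ⟨fun a b => by noncomm_ring, fun c a => by
        simp [Matrix.mul_smul, Matrix.smul_mul]⟩)
      (by ext a : 1
          simp only [LinearMap.comp_apply, IsLinearMap.mk'_apply, LinearMap.id_apply]
          calc v * (v⁻¹ * a * v) * v⁻¹ = (v * v⁻¹) * a * (v * v⁻¹) := by noncomm_ring
          _ = a := by rw [mul_nonsing_inv _ hv]; simp)
      (by ext a : 1
          simp only [LinearMap.comp_apply, IsLinearMap.mk'_apply, LinearMap.id_apply]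
          calc v⁻¹ * (v * a * v⁻¹) * v = (v⁻¹ * v) * a * (v⁻¹ * v) := by noncomm_ring
          _ = a := by rw [nonsing_inv_mul _ hv]; simp))
    (by simp only [LinearEquiv.ofLinear_apply, IsLinearMap.mk'_apply, mul_one]
        exact mul_nonsing_inv _ hv)
    (fun a b => by
      simp only [LinearEquiv.ofLinear_apply, IsLinearMap.mk'_apply]
      calc v * (a * b) * v⁻¹ = (v * a) * 1 * (b * v⁻¹) := by noncomm_ring
      _ = (v * a) * (v⁻¹ * v) * (b * v⁻¹) := by rw [nonsing_inv_mul _ hv]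
      _ = (v * a * v⁻¹) * (v * b * v⁻¹) := by noncomm_ring)

theorem conjAE_apply (v : N n) (hv : IsUnit v.det) (a : N n) :
    conjAE v hv a = v * a * v⁻¹ := rfl

theorem conjAE_symm_apply (v : N n) (hv : IsUnit v.det) (a : N n) :
    (conjAE v hv).symm a = v⁻¹ * a * v := rfl

/-- the main conjugation computation -/
theorem conj_comp (st : N n → N n) (u v c : N n)
    (hv : IsUnit v.det) (hc : IsUnit c.det)
    (hu : u = v * c * vᵀ)
    (hst : ∀ a, st a * u = u * aᵀ) :
    ∃ ω : N n ≃ₐ[ℂ] N n, ∀ a, ω (st (ω.symm a)) = c * aᵀ * c⁻¹ := by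
  have hv' : IsUnit (v⁻¹).det := v.isUnit_nonsing_inv_det hv
  have hvt : IsUnit vᵀ.det := by rwa [det_transpose]
  have hudet : IsUnit u.det := by
    rw [hu]; simp only [det_mul, det_transpose]
    exact (hv.mul hc).mul hv
  refine ⟨conjAE v⁻¹ hv', fun a => ?_⟩
  rw [conjAE_symm_apply, conjAE_apply, nonsing_inv_nonsing_inv _ hv]
  -- goal : v⁻¹ * st (v * a * v⁻¹) * v = c * aᵀ * c⁻¹  (modulo ⁻¹⁻¹ simp)
  have hstv : st (v * a * v⁻¹) = u * (v * a * v⁻¹)ᵀ * u⁻¹ := by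
    have h1 := hst (v * a * v⁻¹)
    calc st (v * a * v⁻¹) = st (v * a * v⁻¹) * (u * u⁻¹) := by
          rw [mul_nonsing_inv _ hudet, mul_one]
      _ = (st (v * a * v⁻¹) * u) * u⁻¹ := by noncomm_ring
      _ = u * (v * a * v⁻¹)ᵀ * u⁻¹ := by rw [h1]
  rw [hstv]
  have htr : (v * a * v⁻¹)ᵀ = (vᵀ)⁻¹ * aᵀ * vᵀ := by
    rw [transpose_mul, transpose_mul, transpose_nonsing_inv]; noncomm_ring
  rw [htr, hu]
  have huinv : (v * c * vᵀ)⁻¹ = (vᵀ)⁻¹ * c⁻¹ * v⁻¹ := by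
    rw [Matrix.mul_inv_rev, Matrix.mul_inv_rev]; noncomm_ring
  rw [huinv]
  calc v⁻¹ * (v * c * vᵀ * ((vᵀ)⁻¹ * aᵀ * vᵀ) * ((vᵀ)⁻¹ * c⁻¹ * v⁻¹)) * v
      = (v⁻¹ * v) * c * (vᵀ * (vᵀ)⁻¹) * aᵀ * (vᵀ * (vᵀ)⁻¹) * c⁻¹ * (v⁻¹ * v) := by
        noncomm_ring
    _ = c * aᵀ * c⁻¹ := by
        rw [nonsing_inv_mul _ hv, mul_nonsing_inv _ hvt]; noncomm_ring

end Statement16Aux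

open Statement16Aux Matrix Polynomial in
/-- Every ℂ-linear involution of `Mₙ(ℂ)` is, up to conjugation by a ℂ-algebra
automorphism `ω`, either the transpose, or (when `n` is even) `a ↦ Ω·aᵀ·Ω⁻¹` for the
standard antisymmetric matrix `Ω`; when `n` is odd the first alternative holds. -/
theorem statement16 (n : ℕ) (hn : 1 ≤ n)
    (st : Matrix (Fin n) (Fin n) ℂ → Matrix (Fin n) (Fin n) ℂ)
    (hlin : IsLinearMap ℂ st)
    (hanti : ∀ a b, st (a * b) = st b * st a)
    (hinvol : ∀ a, st (st a) = a) :
    (∃ ω : Matrix (Fin n) (Fin n) ℂ ≃ₐ[ℂ] Matrix (Fin n) (Fin n) ℂ,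
      (∀ a, ω (st (ω.symm a)) = a.transpose) ∨
      (Even n ∧ ∀ a, ω (st (ω.symm a)) =
        (Matrix.of fun i j : Fin n =>
          if i.val + 1 = j.val ∧ i.val % 2 = 0 then (1 : ℂ)
          else if j.val + 1 = i.val ∧ j.val % 2 = 0 then -1 else 0) * a.transpose *
        (Matrix.of fun i j : Fin n =>
          if i.val + 1 = j.val ∧ i.val % 2 = 0 then (1 : ℂ)
          else if j.val + 1 = i.val ∧ j.val % 2 = 0 then -1 else 0)⁻¹)) ∧
    (Odd n → ∃ ω : Matrix (Fin n) (Fin n) ℂ ≃ₐ[ℂ] Matrix (Fin n) (Fin n) ℂ,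
      ∀ a, ω (st (ω.symm a)) = a.transpose) := by
  classical
  haveI hnt : Nontrivial (N n) := by
    refine ⟨0, 1, fun h => ?_⟩
    have := congrFun (congrFun h ⟨0, hn⟩) ⟨0, hn⟩
    simpa using this
  -- st 1 = 1
  have hst1 : st 1 = 1 := by
    have h := hanti 1 (st 1)
    rw [one_mul, hinvol, one_mul] at h
    exact h.symm
  -- the automorphism φ = st ∘ transpose
  let f : N n →ₗ[ℂ] N n := IsLinearMap.mk' (fun a => st aᵀ)
    ⟨fun a b => by rw [transpose_add, hlin.map_add], fun c a => by rw [transpose_smul, hlin.map_smul]⟩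
  let g : N n →ₗ[ℂ] N n := IsLinearMap.mk' (fun a => (st a)ᵀ)
    ⟨fun a b => by rw [hlin.map_add, transpose_add], fun c a => by rw [hlin.map_smul, transpose_smul]⟩
  let e : N n ≃ₗ[ℂ] N n := LinearEquiv.ofLinear f g
    (by ext a : 1
        simp only [LinearMap.comp_apply, IsLinearMap.mk'_apply, LinearMap.id_apply, f, g,
          transpose_transpose, hinvol])
    (by ext a : 1
        simp only [LinearMap.comp_apply, IsLinearMap.mk'_apply, LinearMap.id_apply, f, g,
          hinvol, transpose_transpose])
  let φ : N n ≃ₐ[ℂ] N n := AlgEquiv.ofLinearEquiv e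
    (by show st (1:N n)ᵀ = 1; rw [transpose_one, hst1])
    (fun a b => by
      show st ((a*b)ᵀ) = st aᵀ * st bᵀ
      rw [transpose_mul, hanti])
  obtain ⟨u, hu, huφ⟩ := inner_aut hn φ
  have hud : IsUnit u.det := (isUnit_iff_isUnit_det u).mp hu
  have hutd : IsUnit uᵀ.det := by rwa [det_transpose]
  have hst : ∀ a, st a * u = u * aᵀ := by
    intro a
    have h := huφ aᵀ
    rw [show φ aᵀ = st aᵀᵀ from rfl, transpose_transpose] at h
    exact h
  have hst' : ∀ a, st a = u * aᵀ * u⁻¹ := by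
    intro a
    calc st a = st a * (u * u⁻¹) := by rw [mul_nonsing_inv _ hud, mul_one]
      _ = (st a * u) * u⁻¹ := by noncomm_ring
      _ = u * aᵀ * u⁻¹ := by rw [hst]
  -- centrality of u * (uᵀ)⁻¹
  set m : N n := u * (uᵀ)⁻¹ with hm
  have hcomm : ∀ a : N n, a * m = m * a := by
    intro a
    have h1 : st (st a) = u * (st a)ᵀ * u⁻¹ := hst' (st a)
    have h2 : (st a)ᵀ = (uᵀ)⁻¹ * a * uᵀ := by
      rw [hst' a, transpose_mul, transpose_mul, transpose_transpose, transpose_nonsing_inv]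
      noncomm_ring
    rw [hinvol, h2] at h1
    -- h1 : a = u * ((uᵀ)⁻¹ * a * uᵀ) * u⁻¹
    have h3 : a * u = m * a * uᵀ := by
      calc a * u = (u * ((uᵀ)⁻¹ * a * uᵀ) * u⁻¹) * u := by rw [← h1]
        _ = u * (uᵀ)⁻¹ * a * uᵀ * (u⁻¹ * u) := by noncomm_ring
        _ = m * a * uᵀ := by rw [nonsing_inv_mul _ hud, mul_one, hm]
    calc a * m = (a * u) * (uᵀ)⁻¹ := by rw [hm]; noncomm_ring
      _ = m * a * (uᵀ * (uᵀ)⁻¹) := by rw [h3]; noncomm_ring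
      _ = m * a := by rw [mul_nonsing_inv _ hutd, mul_one]
  obtain ⟨cc, hcc⟩ := mem_range_scalar_of_commute_single
    (M := m) (fun i j _ => hcomm _)
  have hscal : ∀ x : N n, Matrix.scalar (Fin n) cc * x = cc • x := by
    intro x; rw [Matrix.scalar_apply, ← Matrix.smul_eq_diagonal_mul]
  have husym : u = cc • uᵀ := by
    have := congrArg (fun x => x * uᵀ) hcc
    rw [hscal] at this
    rw [this, hm, mul_assoc, nonsing_inv_mul _ hutd, mul_one]
  have hutsym : uᵀ = cc • u := by
    have := congrArg Matrix.transpose husym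
    rwa [transpose_smul, transpose_transpose] at this
  have hcc2 : cc * cc = 1 := by
    have h1 : u = (cc * cc) • u := by
      nth_rewrite 1 [husym, hutsym]; rw [smul_smul]
    have h2 : (cc * cc - 1) • u = 0 := by
      rw [sub_smul, one_smul, ← h1, sub_self]
    rcases smul_eq_zero.mp h2 with h | h
    · exact sub_eq_zero.mp h
    · exact absurd h hu.ne_zero
  rcases mul_self_eq_one_iff.mp hcc2 with hc1 | hc1
  · -- symmetric case: transpose
    have husymm : uᵀ = u := by rw [hutsym, hc1, one_smul]
    obtain ⟨h, hh, q, hq⟩ := matsqrt hn u hu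
    have hrel : u * (1 : N n) = 1 * uᵀ := by rw [mul_one, one_mul, husymm]
    have hht : hᵀ = h := by
      have := aeval_comm u 1 hrel q
      rw [← hq, mul_one, one_mul] at this
      exact this.symm
    have hdeth : IsUnit h.det := by
      have : h.det * h.det = u.det := by rw [← det_mul, hh]
      exact isUnit_of_mul_isUnit_left (this ▸ hud)
    have hufact : u = h * 1 * hᵀ := by rw [mul_one, hht, hh]
    obtain ⟨ω, hω⟩ := conj_comp st u h 1 hdeth (by simp) hufact hst
    have hωt : ∀ a, ω (st (ω.symm a)) = aᵀ := by
      intro a; rw [hω, inv_one, one_mul, mul_one]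
    exact ⟨⟨ω, Or.inl hωt⟩, fun _ => ⟨ω, hωt⟩⟩
  · -- antisymmetric case
    have huanti : uᵀ = -u := by rw [hutsym, hc1, neg_smul, one_smul]
    have heven : Even n := by
      by_contra hodd
      have hodd' : Odd n := Nat.not_even_iff_odd.mp hodd
      have h1 : u.det = -u.det := by
        calc u.det = uᵀ.det := (det_transpose u).symm
          _ = (-u).det := by rw [huanti]
          _ = (-1)^(Fintype.card (Fin n)) * u.det := det_neg u
          _ = -u.det := by rw [Fintype.card_fin, hodd'.neg_one_pow, neg_one_mul]
      have h0 : u.det = 0 := by linear_combination h1 / 2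
      exact hud.ne_zero h0
    -- Om facts
    have hOmOm := Om_mul_Om heven
    have hgu : (-(u * Om n)) * Om n = u := by
      calc (-(u * Om n)) * Om n = -(u * (Om n * Om n)) := by noncomm_ring
        _ = u := by rw [hOmOm]; simp
    set gm : N n := -(u * Om n) with hgm
    have hgunit : IsUnit gm := by
      refine isUnit_iff_exists.mpr ⟨Om n * u⁻¹, ?_, ?_⟩
      · calc gm * (Om n * u⁻¹) = -(u * (Om n * Om n) * u⁻¹) := by rw [hgm]; noncomm_ring
          _ = u * u⁻¹ := by rw [hOmOm]; noncomm_ring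
          _ = 1 := mul_nonsing_inv _ hud
      · calc (Om n * u⁻¹) * gm = -(Om n * (u⁻¹ * u) * Om n) := by rw [hgm]; noncomm_ring
          _ = -(Om n * Om n) := by rw [nonsing_inv_mul _ hud]; noncomm_ring
          _ = 1 := by rw [hOmOm]; simp
    have hrel : gm * Om n = Om n * gmᵀ := by
      have hgt : gmᵀ = -(Om n * u) := by
        rw [hgm, transpose_neg, transpose_mul, Om_transpose, huanti]
        noncomm_ring
      rw [hgu, hgt]
      calc u = -(Om n * Om n) * u := by rw [hOmOm]; simp
        _ = Om n * -(Om n * u) := by noncomm_ring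
    obtain ⟨h, hh, q, hq⟩ := matsqrt hn gm hgunit
    have hhOm : h * Om n = Om n * hᵀ := by rw [hq]; exact aeval_comm gm (Om n) hrel q
    have hdeth : IsUnit h.det := by
      have h2 : h.det * h.det = gm.det := by rw [← det_mul, hh]
      exact isUnit_of_mul_isUnit_left (h2 ▸ ((isUnit_iff_isUnit_det gm).mp hgunit))
    have hdetOm : IsUnit (Om n).det := by
      refine isUnit_of_mul_isUnit_left (y := (Om n).det) ?_
      rw [← det_mul, hOmOm]
      have : ((-1 : N n)).det = (-1)^(Fintype.card (Fin n)) * (1:N n).det := by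
        rw [← det_neg]
      rw [this, det_one, Fintype.card_fin, heven.neg_one_pow, one_mul]
      exact isUnit_one
    have hufact : u = h * Om n * hᵀ := by
      calc u = gm * Om n := hgu.symm
        _ = h * (h * Om n) := by rw [← hh]; noncomm_ring
        _ = h * (Om n * hᵀ) := by rw [hhOm]
        _ = h * Om n * hᵀ := by noncomm_ring
    obtain ⟨ω, hω⟩ := conj_comp st u h (Om n) hdeth hdetOm hufact hst
    refine ⟨⟨ω, Or.inr ⟨heven, fun a => ?_⟩⟩, fun hodd => absurd heven (Nat.not_even_iff_odd.mpr hodd)⟩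
    exact hω a
end

section
/- Let n ≥ 1, let x ∈ M_n(ℂ) be invertible with x² a scalar multiple of the identity (x² ∈ ℂ·1), and let R ∈ ℂ satisfy R·Tr(x⁻¹) = 1. Define ε : M_n(ℂ) → ℂ by ε(a) = Tr(x·a), and define z := Σ_{l,m,p,q} E_{lm}·x⁻¹·E_{pq}·x⁻¹·E_{ml}·E_{qp} ∈ M_n(ℂ). Then x² = R·Tr(x)·1, Tr(x) ≠ 0, z = x⁻², and for every natural number g, R·ε(z^g) = R^{1−g}·Tr(x)^{1−g}, where powers with negative integer exponents are taken in ℂ. -/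
lemma aux_sum (n : ℕ) (A : Matrix (Fin n) (Fin n) ℂ) :
    (∑ l, ∑ m, ∑ p, ∑ q,
      Matrix.single l m (1 : ℂ) * A * Matrix.single p q 1 * A *
        Matrix.single m l 1 * Matrix.single q p 1) = A * A := by
  ext i j
  simp [Matrix.mul_apply, Matrix.single, Matrix.sum_apply, Finset.mul_sum,
    Finset.sum_mul, mul_ite, ite_mul, Finset.sum_ite_eq, Finset.sum_ite_eq', ite_and, mul_comm]

/-- For invertible `x ∈ Mₙ(ℂ)` with `x²` scalar and `R·Tr(x⁻¹) = 1`, with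
`ε(a) = Tr(x·a)` and `z = Σ E_{lm}·x⁻¹·E_{pq}·x⁻¹·E_{ml}·E_{qp}`, one has
`x² = R·Tr(x)·1`, `Tr(x) ≠ 0`, `z = x⁻²`, and `R·ε(z^g) = R^{1-g}·Tr(x)^{1-g}` for all `g`. -/
theorem statement17 (n : ℕ) (hn : 1 ≤ n) (x : Matrix (Fin n) (Fin n) ℂ) (hx : IsUnit x)
    (hx2 : ∃ c : ℂ, x ^ 2 = c • (1 : Matrix (Fin n) (Fin n) ℂ))
    (R : ℂ) (hR : R * Matrix.trace x⁻¹ = 1)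
    (ε : Matrix (Fin n) (Fin n) ℂ → ℂ) (hε : ∀ a, ε a = Matrix.trace (x * a))
    (z : Matrix (Fin n) (Fin n) ℂ)
    (hz : z = ∑ l, ∑ m, ∑ p, ∑ q,
      Matrix.single l m (1 : ℂ) * x⁻¹ * Matrix.single p q 1 * x⁻¹ *
        Matrix.single m l 1 * Matrix.single q p 1) :
    x ^ 2 = (R * Matrix.trace x) • (1 : Matrix (Fin n) (Fin n) ℂ) ∧
    Matrix.trace x ≠ 0 ∧
    z = x⁻¹ * x⁻¹ ∧
    ∀ g : ℕ, R * ε (z ^ g) = R ^ ((1 : ℤ) - g) * Matrix.trace x ^ ((1 : ℤ) - g) := by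
  haveI : NeZero n := ⟨by omega⟩
  obtain ⟨c, hc⟩ := hx2
  have hc0 : c ≠ 0 := by
    rintro rfl
    simp only [zero_smul] at hc
    exact (hx.pow 2).ne_zero hc
  -- x⁻¹ = c⁻¹ • x
  have hxx : x * x = c • 1 := by rw [← pow_two]; exact hc
  have hinv : x⁻¹ = c⁻¹ • x := by
    refine Matrix.inv_eq_right_inv ?_
    rw [Matrix.mul_smul, hxx, smul_smul, inv_mul_cancel₀ hc0, one_smul]
  have htr : Matrix.trace x⁻¹ = c⁻¹ * Matrix.trace x := by
    rw [hinv, Matrix.trace_smul, smul_eq_mul]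
  rw [htr] at hR
  have hT : Matrix.trace x ≠ 0 := by
    intro h; rw [h, mul_zero, mul_zero] at hR; exact zero_ne_one hR
  have hR0 : R ≠ 0 := by
    intro h; rw [h, zero_mul] at hR; exact zero_ne_one hR
  have hcRT : c = R * Matrix.trace x := by
    have h := hR
    field_simp at h
    linear_combination -h
  have hz' : z = x⁻¹ * x⁻¹ := by rw [hz, aux_sum]
  refine ⟨by rw [hc, hcRT], hT, hz', fun g => ?_⟩
  have hzc : z = c⁻¹ • 1 := by
    rw [hz', hinv, Matrix.smul_mul, Matrix.mul_smul, hxx, smul_smul, smul_smul]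
    congr 1
    field_simp
  have hzg : z ^ g = (c⁻¹ ^ g) • 1 := by
    rw [hzc, smul_pow, one_pow]
  rw [hε, hzg, Matrix.mul_smul, mul_one, Matrix.trace_smul, smul_eq_mul, hcRT]
  have key : ((R * Matrix.trace x)⁻¹) ^ g = (R ^ g)⁻¹ * (Matrix.trace x ^ g)⁻¹ := by
    rw [mul_inv, mul_pow, inv_pow, inv_pow]
  rw [key, zpow_sub₀ hR0, zpow_sub₀ hT, zpow_one, zpow_one, zpow_natCast, zpow_natCast]
  ring
end
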